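/- arXiv:2505.08551 — 8 statements merged into one kernel-verified Lean document; each statement's English description precedes it below -/
import Mathlib

section
/- In PG(2,q) with q even, for k ∈ GF(q) with k ≠ 0, 1, the conic C_k = V(kxy + z² + yz + xz) is nondegenerate, and its nucleus is the point (1 : 1 : k). -/
/-- The point type of `PG(2,q)` over the field `F`: the projectivization of `F³`.
We also use this type for lines, via line coordinates. -/
abbrev PG2 (F : Type) [Field F] : Type := Projectivization F (Fin 3 → F)

/-- A point of `PG(2,q)` with homogeneous coordinates `(x : y : z)`. -/
noncomputable def pt {F : Type} [Field F] (x y z : F) (h : ![x, y, z] ≠ 0) : PG2 F :=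
  Projectivization.mk F ![x, y, z] h

lemma vec_ne_zero {F : Type} [Field F] {x y z : F} (i : Fin 3) (h : ![x, y, z] i ≠ 0) :
    ![x, y, z] ≠ 0 := fun hz => h (by simp [hz])

/-- Incidence between a line `l` (in line coordinates) and a point `P`. This is well defined:
the pairing is bilinear, so its vanishing is independent of the choice of representatives. -/
def inc {F : Type} [Field F] (l P : PG2 F) : Prop :=
  l.rep 0 * P.rep 0 + l.rep 1 * P.rep 1 + l.rep 2 * P.rep 2 = 0

/-- A set of points is untouchable if no line meets it in exactly one point. -/
def Untouchable {F : Type} [Field F] (S : Set (PG2 F)) : Prop :=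
  ∀ l : PG2 F, {P ∈ S | inc l P}.ncard ≠ 1

/-- A line `l` is tangent to a point set `S` if it meets `S` in exactly one point. -/
def IsTangent {F : Type} [Field F] (l : PG2 F) (S : Set (PG2 F)) : Prop :=
  {P ∈ S | inc l P}.ncard = 1

/-- A nondegenerate conic in `PG(2,q)` is, combinatorially, an oval: a set of `q + 1` points
met by every line in at most `2` points. -/
def IsOval {F : Type} [Field F] (q : ℕ) (S : Set (PG2 F)) : Prop :=
  S.ncard = q + 1 ∧ ∀ l : PG2 F, {P ∈ S | inc l P}.ncard ≤ 2

/-- The conic `C_k = V(kxy + z² + yz + xz)` (membership tested on the canonical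
representative; this is representative-independent since the form is homogeneous). -/
def Cq {F : Type} [Field F] (k : F) : Set (PG2 F) :=
  {P | k * P.rep 0 * P.rep 1 + P.rep 2 ^ 2 + P.rep 1 * P.rep 2 + P.rep 0 * P.rep 2 = 0}

namespace CqAux
open Projectivization

variable {F : Type} [Field F]

lemma funext3 {v w : Fin 3 → F} (e0 : v 0 = w 0) (e1 : v 1 = w 1) (e2 : v 2 = w 2) :
    v = w := by
  funext i; fin_cases i <;> assumption

def Qf (k : F) (v : Fin 3 → F) : F := k * v 0 * v 1 + v 2 ^ 2 + v 1 * v 2 + v 0 * v 2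
def Bf (v w : Fin 3 → F) : F := v 0 * w 0 + v 1 * w 1 + v 2 * w 2

lemma rep_smul (v : Fin 3 → F) (hv : v ≠ 0) :
    ∃ a : Fˣ, (Projectivization.mk F v hv).rep = (a : F) • v := by
  obtain ⟨a, ha⟩ := exists_smul_eq_mk_rep F v hv
  exact ⟨a, by rw [← ha]; rfl⟩

lemma mem_Cq_iff (k : F) (v : Fin 3 → F) (hv : v ≠ 0) :
    Projectivization.mk F v hv ∈ Cq k ↔ Qf k v = 0 := by
  obtain ⟨a, ha⟩ := rep_smul v hv
  have hm : (Projectivization.mk F v hv ∈ Cq k) ↔ Qf k ((Projectivization.mk F v hv).rep) = 0 :=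
    Iff.rfl
  have hs : Qf k ((a : F) • v) = (a : F) ^ 2 * Qf k v := by
    simp [Qf, Pi.smul_apply, smul_eq_mul]; ring
  rw [hm, ha, hs, mul_eq_zero]
  have h2 : ((a : F)) ^ 2 ≠ 0 := pow_ne_zero 2 a.ne_zero
  tauto

lemma inc_iff (l : PG2 F) (v : Fin 3 → F) (hv : v ≠ 0) :
    inc l (Projectivization.mk F v hv) ↔ Bf l.rep v = 0 := by
  obtain ⟨a, ha⟩ := rep_smul v hv
  have hm : (inc l (Projectivization.mk F v hv)) ↔
      Bf l.rep ((Projectivization.mk F v hv).rep) = 0 := Iff.rfl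
  have hs : Bf l.rep ((a : F) • v) = (a : F) * Bf l.rep v := by
    simp [Bf, Pi.smul_apply, smul_eq_mul]; ring
  rw [hm, ha, hs, mul_eq_zero]
  have := a.ne_zero
  tauto

/-- `a + b = 0` implies `a = b` in characteristic two. -/
lemma hne (h2 : (2:F) = 0) {a b : F} (h : a + b = 0) : a = b := by
  linear_combination h - b * h2

def Phi (k r : F) : Fin 3 → F := ![r * (r + 1), k + r, r * (k + r)]

lemma Phi_ne_zero {k : F} (hk0 : k ≠ 0) (hk1 : k ≠ 1) (h2 : (2:F) = 0) (r : F) :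
    Phi k r ≠ 0 := by
  intro h
  have h1 : k + r = 0 := by simpa [Phi] using congr_fun h 1
  have hr : k = r := hne h2 h1
  have h0 : r * (r + 1) = 0 := by simpa [Phi] using congr_fun h 0
  rcases mul_eq_zero.mp h0 with h | h
  · exact hk0 (hr.trans h)
  · exact hk1 (hr.trans (hne h2 h))

noncomputable def mkPhi (k : F) (hk0 : k ≠ 0) (hk1 : k ≠ 1) (h2 : (2:F) = 0) (r : F) : PG2 F :=
  Projectivization.mk F (Phi k r) (Phi_ne_zero hk0 hk1 h2 r)

noncomputable def p101 {F : Type} [Field F] : PG2 F :=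
  Projectivization.mk F ![1, 0, 1] (vec_ne_zero 0 (by simp))

lemma mkPhi_mem {k : F} (hk0 : k ≠ 0) (hk1 : k ≠ 1) (h2 : (2:F) = 0) (r : F) :
    mkPhi k hk0 hk1 h2 r ∈ Cq k := by
  rw [mkPhi, mem_Cq_iff]
  simp only [Qf, Phi, Matrix.cons_val_zero, Matrix.cons_val_one, Matrix.head_cons,
    Matrix.cons_val_two, Matrix.tail_cons]
  linear_combination (k^2*r^2 + 2*k*r^3 + k^2*r + 2*k*r^2 + r^4 + r^3) * h2

lemma p101_mem {k : F} (h2 : (2:F) = 0) : (p101 : PG2 F) ∈ Cq k := by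
  rw [p101, mem_Cq_iff]
  simp only [Qf, Matrix.cons_val_zero, Matrix.cons_val_one, Matrix.head_cons,
    Matrix.cons_val_two, Matrix.tail_cons]
  linear_combination h2

lemma mkPhi_inj {k : F} (hk0 : k ≠ 0) (hk1 : k ≠ 1) (h2 : (2:F) = 0) {r r' : F}
    (h : mkPhi k hk0 hk1 h2 r = mkPhi k hk0 hk1 h2 r') : r = r' := by
  rw [mkPhi, mkPhi, mk_eq_mk_iff] at h
  obtain ⟨a, ha⟩ := h
  have e1 : (a : F) * (k + r') = k + r := by
    have := congr_fun ha 1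
    simp only [Units.smul_def, Pi.smul_apply, smul_eq_mul, Phi, Matrix.cons_val_one,
      Matrix.head_cons, Matrix.cons_val_zero] at this
    linear_combination this
  have e2 : (a : F) * (r' * (k + r')) = r * (k + r) := by
    have := congr_fun ha 2
    simp only [Units.smul_def, Pi.smul_apply, smul_eq_mul, Phi, Matrix.cons_val_two,
      Matrix.tail_cons, Matrix.head_cons] at this
    linear_combination this
  by_cases h' : k + r' = 0
  · have hr' : k = r' := hne h2 h'
    have h'' : k + r = 0 := by rw [← e1, h', mul_zero]
    have hr : k = r := hne h2 h''
    rw [← hr, ← hr']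
  · have hkr : k + r ≠ 0 := by
      rw [← e1]; exact mul_ne_zero a.ne_zero h'
    have : r * (k + r) = r' * (k + r) := by
      rw [← e2, ← e1]; ring
    exact mul_right_cancel₀ hkr this

lemma mkPhi_ne_p101 {k : F} (hk0 : k ≠ 0) (hk1 : k ≠ 1) (h2 : (2:F) = 0) (r : F) :
    mkPhi k hk0 hk1 h2 r ≠ p101 := by
  intro h
  rw [mkPhi, p101, mk_eq_mk_iff] at h
  obtain ⟨a, ha⟩ := h
  have e1 : (0 : F) = k + r := by
    have := congr_fun ha 1
    simpa [Units.smul_def, Pi.smul_apply, smul_eq_mul, Phi] using this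
  have e2 : (a : F) = r * (k + r) := by
    have := congr_fun ha 2
    simp only [Units.smul_def, Pi.smul_apply, smul_eq_mul, Phi, Matrix.cons_val_two,
      Matrix.tail_cons, Matrix.head_cons, mul_one] at this
    linear_combination this
  exact a.ne_zero (by rw [e2, ← e1, mul_zero])

lemma Cq_eq {k : F} (hk0 : k ≠ 0) (hk1 : k ≠ 1) (h2 : (2:F) = 0) :
    Cq k = insert (p101 : PG2 F) (Set.range (mkPhi k hk0 hk1 h2)) := by
  ext P
  constructor
  · intro hP
    have hv := P.rep_nonzero
    have hrep : P = Projectivization.mk F P.rep hv := (mk_rep P).symm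
    have hQ : k * P.rep 0 * P.rep 1 + P.rep 2 ^ 2 + P.rep 1 * P.rep 2 + P.rep 0 * P.rep 2 = 0 :=
      hP
    by_cases hy0 : P.rep 1 = 0
    · have hzz : P.rep 2 * (P.rep 2 + P.rep 0) = 0 := by linear_combination hQ - (k * P.rep 0 + P.rep 2) * hy0
      rcases mul_eq_zero.mp hzz with hz0 | hzx
      · -- P = mkPhi k
        right
        refine ⟨k, ?_⟩
        have hx0 : P.rep 0 ≠ 0 := by
          intro hx0
          exact hv (funext3 hx0 hy0 hz0)
        rw [hrep, mkPhi, eq_comm, mk_eq_mk_iff]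
        have hk1' : k + 1 ≠ 0 := fun h => hk1 (hne h2 h)
        have hkk10 : k * (k + 1) ≠ 0 := mul_ne_zero hk0 hk1'
        have hkk : k + k = 0 := by linear_combination k * h2
        refine ⟨Units.mk0 (P.rep 0 * (k * (k + 1))⁻¹) (mul_ne_zero hx0 (inv_ne_zero hkk10)),
          funext3 ?_ ?_ ?_⟩ <;>
          simp only [Units.smul_def, Pi.smul_apply, smul_eq_mul, Units.val_mk0, Phi,
            Matrix.cons_val_zero, Matrix.cons_val_one, Matrix.head_cons,
            Matrix.cons_val_two, Matrix.tail_cons]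
        · rw [mul_assoc, inv_mul_cancel₀ hkk10, mul_one]
        · rw [hkk, mul_zero, hy0]
        · rw [hkk, mul_zero, mul_zero, hz0]
      · -- P = p101
        left
        have hzx' : P.rep 2 = P.rep 0 := hne h2 hzx
        have hz0 : P.rep 2 ≠ 0 := by
          intro h0
          exact hv (funext3 (hzx'.symm.trans h0) hy0 h0)
        rw [hrep, p101, mk_eq_mk_iff]
        refine ⟨Units.mk0 (P.rep 2) hz0, funext3 ?_ ?_ ?_⟩ <;>
          simp only [Units.smul_def, Pi.smul_apply, smul_eq_mul, Units.val_mk0,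
            Matrix.cons_val_zero, Matrix.cons_val_one, Matrix.head_cons,
            Matrix.cons_val_two, Matrix.tail_cons]
        · rw [mul_one]; exact hzx'
        · rw [mul_zero, hy0]
        · rw [mul_one]
    · right
      set x := P.rep 0 with hx
      set y := P.rep 1 with hy
      set z := P.rep 2 with hz
      set r := z / y with hr
      have hzy : z = r * y := by rw [hr, div_mul_cancel₀ z hy0]
      have hkr : k + r ≠ 0 := by
        intro h
        have hrk : k = r := hne h2 h
        have hQ' : k * x * y + (r*y) ^ 2 + y * (r*y) + x * (r*y) = 0 := by rw [← hzy]; exact hQ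
        rw [← hrk] at hQ'
        have hkk1 : k * (k + 1) * y ^ 2 = 0 := by
          linear_combination hQ' - k*x*y*h2
        rcases mul_eq_zero.mp hkk1 with h' | h'
        · rcases mul_eq_zero.mp h' with h'' | h''
          · exact hk0 h''
          · exact hk1 (hne h2 h'')
        · exact hy0 (pow_eq_zero_iff two_ne_zero |>.mp h')
      refine ⟨r, ?_⟩
      rw [hrep, mkPhi, eq_comm, mk_eq_mk_iff]
      have hQ' : k * x * y + (r*y) ^ 2 + y * (r*y) + x * (r*y) = 0 := by rw [← hzy]; exact hQ
      refine ⟨Units.mk0 (y / (k + r)) (div_ne_zero hy0 hkr), funext3 ?_ ?_ ?_⟩ <;>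
        simp only [Units.smul_def, Pi.smul_apply, smul_eq_mul, Units.val_mk0, Phi,
          Matrix.cons_val_zero, Matrix.cons_val_one, Matrix.head_cons,
          Matrix.cons_val_two, Matrix.tail_cons]
      · rw [div_mul_eq_mul_div, eq_comm, ← hx, eq_div_iff hkr]
        apply mul_left_cancel₀ hy0
        linear_combination hQ' - (y^2*r^2 + y^2*r)*h2
      · rw [← hy]; field_simp
      · rw [div_mul_eq_mul_div, ← hz, div_eq_iff hkr, hzy]
        ring
  · intro hP
    rcases hP with h | ⟨r, hr⟩
    · rw [h]; exact p101_mem h2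
    · rw [← hr]; exact mkPhi_mem hk0 hk1 h2 r

end CqAux

namespace CqAux
open Projectivization

variable {F : Type} [Field F]

lemma Bf_Phi (l : PG2 F) (k r : F) :
    Bf l.rep (Phi k r) = (l.rep 0 + l.rep 2) * r^2 +
      (l.rep 0 + l.rep 1 + l.rep 2 * k) * r + l.rep 1 * k := by
  simp only [Bf, Phi, Matrix.cons_val_zero, Matrix.cons_val_one, Matrix.head_cons,
    Matrix.cons_val_two, Matrix.tail_cons]
  ring

lemma sec_mem {k : F} (hk0 : k ≠ 0) (hk1 : k ≠ 1) (h2 : (2:F) = 0) (l P : PG2 F) :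
    (P ∈ Cq k ∧ inc l P) ↔
      (P = p101 ∧ l.rep 0 + l.rep 2 = 0) ∨
      ∃ r, P = mkPhi k hk0 hk1 h2 r ∧
        (l.rep 0 + l.rep 2) * r^2 + (l.rep 0 + l.rep 1 + l.rep 2 * k) * r + l.rep 1 * k = 0 := by
  constructor
  · rintro ⟨hc, hi⟩
    rw [Cq_eq hk0 hk1 h2] at hc
    rcases hc with h | ⟨r, hr⟩
    · left
      refine ⟨h, ?_⟩
      rw [h, p101, inc_iff] at hi
      simp only [Bf, Matrix.cons_val_zero, Matrix.cons_val_one, Matrix.head_cons,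
        Matrix.cons_val_two, Matrix.tail_cons, mul_one, mul_zero, add_zero] at hi
      exact hi
    · right
      refine ⟨r, hr.symm, ?_⟩
      rw [← hr, mkPhi, inc_iff, Bf_Phi] at hi
      exact hi
  · rintro (⟨h, hA⟩ | ⟨r, hr, hroot⟩)
    · refine ⟨h ▸ p101_mem h2, ?_⟩
      rw [h, p101, inc_iff]
      simp only [Bf, Matrix.cons_val_zero, Matrix.cons_val_one, Matrix.head_cons,
        Matrix.cons_val_two, Matrix.tail_cons, mul_one, mul_zero, add_zero]
      exact hA
    · refine ⟨hr ▸ mkPhi_mem hk0 hk1 h2 r, ?_⟩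
      rw [hr, mkPhi, inc_iff, Bf_Phi]
      exact hroot

lemma root_pair {A B C r r1 : F} (h2 : (2:F) = 0) (hA : A ≠ 0)
    (hr : A*r^2 + B*r + C = 0) (hr1 : A*r1^2 + B*r1 + C = 0) (hner : r ≠ r1) :
    r = A⁻¹ * B + r1 := by
  have key : (r - r1) * (A*(r+r1) + B) = 0 := by linear_combination hr - hr1
  rcases mul_eq_zero.mp key with h | h
  · exact absurd (sub_eq_zero.mp h) hner
  · have h3 : A * r = B + A * r1 := by linear_combination h - (A*r1 + B)*h2
    field_simp
    linear_combination h3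

lemma root_other {A B C r1 : F} (h2 : (2:F) = 0) (hA : A ≠ 0)
    (hr1 : A*r1^2 + B*r1 + C = 0) :
    A*(A⁻¹*B + r1)^2 + B*(A⁻¹*B + r1) + C = 0 := by
  have hu : A * (A⁻¹*B + r1) = B + A*r1 := by field_simp
  have hmul : A * (A*(A⁻¹*B + r1)^2 + B*(A⁻¹*B + r1) + C) = 0 := by
    linear_combination (A*(A⁻¹*B + r1) + 2*B + A*r1) * hu + A * hr1 + (B^2 + A*B*r1) * h2
  exact (mul_eq_zero.mp hmul).resolve_left hA

lemma root_other_ne {A B r1 : F} (hA : A ≠ 0) (hB : B ≠ 0) : A⁻¹*B + r1 ≠ r1 := by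
  intro h
  have : A⁻¹ * B = 0 := by linear_combination h
  rcases mul_eq_zero.mp this with h' | h'
  · exact inv_ne_zero hA h'
  · exact hB h'

end CqAux


theorem Cq_main {F : Type} [Field F] [Fintype F] {q : ℕ}
    (hq : Fintype.card F = q) (heven : Even q) (k : F) (hk0 : k ≠ 0) (hk1 : k ≠ 1) :
    (Cq k).ncard = q + 1 ∧
      (∀ l : PG2 F, {P ∈ Cq k | inc l P}.ncard ≤ 2) ∧
      pt (1 : F) 1 k (vec_ne_zero 0 (by simp)) ∉ Cq k ∧
      ∀ l : PG2 F, {P ∈ Cq k | inc l P}.ncard = 1 →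
        inc l (pt (1 : F) 1 k (vec_ne_zero 0 (by simp))) := by
  classical
  have h2 : (2:F) = 0 := by
    have h : ringChar F = 2 := FiniteField.even_card_iff_char_two.mpr
      (by rw [hq]; exact Nat.even_iff.mp heven)
    haveI : CharP F 2 := h ▸ ringChar.charP F
    exact CharP.cast_eq_zero F 2
  have hk1' : (1 : F) + k ≠ 0 := fun h => hk1 (CqAux.hne h2 h).symm
  have hnuc : ∀ l : PG2 F, inc l (pt (1:F) 1 k (vec_ne_zero 0 (by simp))) ↔
      l.rep 0 + l.rep 1 + l.rep 2 * k = 0 := by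
    intro l
    rw [pt, CqAux.inc_iff]
    simp only [CqAux.Bf, Matrix.cons_val_zero, Matrix.cons_val_one, Matrix.head_cons,
      Matrix.cons_val_two, Matrix.tail_cons, mul_one]
  -- the key dichotomy for lines
  have hline : ∀ l : PG2 F, ¬(l.rep 0 + l.rep 2 = 0 ∧ l.rep 0 + l.rep 1 + l.rep 2 * k = 0 ∧
      l.rep 1 * k = 0) := by
    rintro l ⟨hA, hB, hC⟩
    have hb : l.rep 1 = 0 := (mul_eq_zero.mp hC).resolve_right hk0
    have hac : l.rep 0 = l.rep 2 := CqAux.hne h2 hA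
    have hc : l.rep 2 = 0 := by
      have : l.rep 2 * (1 + k) = 0 := by
        rw [hb] at hB; rw [hac] at hB; linear_combination hB
      exact (mul_eq_zero.mp this).resolve_right hk1'
    exact l.rep_nonzero (CqAux.funext3 (by simp [hac, hc]) (by simp [hb]) (by simp [hc]))
  have hsec : ∀ (l P : PG2 F), P ∈ {P ∈ Cq k | inc l P} ↔
      (P = CqAux.p101 ∧ l.rep 0 + l.rep 2 = 0) ∨
      ∃ r, P = CqAux.mkPhi k hk0 hk1 h2 r ∧
        (l.rep 0 + l.rep 2) * r^2 + (l.rep 0 + l.rep 1 + l.rep 2 * k) * r + l.rep 1 * k = 0 :=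
    fun l P => CqAux.sec_mem hk0 hk1 h2 l P
  refine ⟨?_, ?_, ?_, ?_⟩
  · -- cardinality
    rw [CqAux.Cq_eq hk0 hk1 h2,
      Set.ncard_insert_of_notMem
        (fun h => by
          obtain ⟨r, hr⟩ := h
          exact CqAux.mkPhi_ne_p101 hk0 hk1 h2 r hr) (Set.toFinite _),
      ← Set.image_univ,
      Set.ncard_image_of_injective _ (fun r r' h => CqAux.mkPhi_inj hk0 hk1 h2 h),
      Set.ncard_univ, Nat.card_eq_fintype_card, hq]
  · -- at most two points on every line
    intro l
    set A := l.rep 0 + l.rep 2 with hA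
    set B := l.rep 0 + l.rep 1 + l.rep 2 * k with hB
    set C := l.rep 1 * k with hC
    by_cases hA0 : A = 0
    · by_cases hB0 : B = 0
      · -- C ≠ 0, no points at all except possibly p101
        have hsub : {P ∈ Cq k | inc l P} ⊆ {CqAux.p101} := by
          intro P hP
          rcases (hsec l P).mp hP with ⟨h, _⟩ | ⟨r, hr, hroot⟩
          · exact h
          · exfalso
            exact hline l ⟨hA0, hB0, by
              rw [← hA, ← hB, ← hC] at hroot
              rw [hA0, hB0] at hroot
              linear_combination hroot⟩
        exact le_trans (Set.ncard_le_ncard hsub (Set.toFinite _)) (by simp)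
      · have hsub : {P ∈ Cq k | inc l P} ⊆
            {CqAux.p101, CqAux.mkPhi k hk0 hk1 h2 (B⁻¹ * C)} := by
          intro P hP
          rcases (hsec l P).mp hP with ⟨h, _⟩ | ⟨r, hr, hroot⟩
          · exact Or.inl h
          · right
            have hroot' : B * r + C = 0 := by
              rw [← hA, ← hB, ← hC] at hroot
              rw [hA0] at hroot
              linear_combination hroot
            have hr' : r = B⁻¹ * C := by
              have := CqAux.hne h2 hroot'
              field_simp
              linear_combination this
            rw [hr, hr']
            rfl
        refine le_trans (Set.ncard_le_ncard hsub (Set.toFinite _)) ?_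
        exact le_trans (Set.ncard_insert_le _ _) (by simp)
    · by_cases hex : ∃ r, A * r^2 + B * r + C = 0
      · obtain ⟨r1, hr1⟩ := hex
        have hsub : {P ∈ Cq k | inc l P} ⊆
            {CqAux.mkPhi k hk0 hk1 h2 r1, CqAux.mkPhi k hk0 hk1 h2 (A⁻¹ * B + r1)} := by
          intro P hP
          rcases (hsec l P).mp hP with ⟨h, hA'⟩ | ⟨r, hr, hroot⟩
          · exact absurd hA' hA0
          · by_cases hrr : r = r1
            · exact Or.inl (by rw [hr, hrr])
            · rw [← hA, ← hB, ← hC] at hroot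
              exact Or.inr (by rw [hr, CqAux.root_pair h2 hA0 hroot hr1 hrr]; exact rfl)
        refine le_trans (Set.ncard_le_ncard hsub (Set.toFinite _)) ?_
        exact le_trans (Set.ncard_insert_le _ _) (by simp)
      · have hsub : {P ∈ Cq k | inc l P} ⊆ (∅ : Set (PG2 F)) := by
          intro P hP
          rcases (hsec l P).mp hP with ⟨h, hA'⟩ | ⟨r, hr, hroot⟩
          · exact absurd hA' hA0
          · rw [← hA, ← hB, ← hC] at hroot
            exact absurd ⟨r, hroot⟩ hex
        exact le_trans (Set.ncard_le_ncard hsub (Set.toFinite _)) (by simp)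
  · -- nucleus not on the conic
    rw [pt, CqAux.mem_Cq_iff]
    intro h
    simp only [CqAux.Qf, Matrix.cons_val_zero, Matrix.cons_val_one, Matrix.head_cons,
      Matrix.cons_val_two, Matrix.tail_cons, mul_one, one_mul] at h
    have hkk : k * (k + 1) = 0 := by linear_combination h - k * h2
    rcases mul_eq_zero.mp hkk with h' | h'
    · exact hk0 h'
    · exact hk1 (CqAux.hne h2 h')
  · -- tangent lines pass through the nucleus
    intro l hl
    rw [hnuc l]
    by_contra hB0
    set A := l.rep 0 + l.rep 2 with hA
    set B := l.rep 0 + l.rep 1 + l.rep 2 * k with hB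
    set C := l.rep 1 * k with hC
    obtain ⟨x, hx⟩ := Set.ncard_eq_one.mp hl
    by_cases hA0 : A = 0
    · have hmem1 : CqAux.p101 ∈ {P ∈ Cq k | inc l P} := (hsec l _).mpr (Or.inl ⟨rfl, hA0⟩)
      have hroot2 : A * (B⁻¹ * C)^2 + B * (B⁻¹ * C) + C = 0 := by
        have hBC : B * (B⁻¹ * C) = C := by field_simp
        rw [hA0]
        linear_combination hBC + C * h2
      have hmem2 : CqAux.mkPhi k hk0 hk1 h2 (B⁻¹ * C) ∈ {P ∈ Cq k | inc l P} :=
        (hsec l _).mpr (Or.inr ⟨B⁻¹ * C, rfl, hroot2⟩)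
      rw [hx] at hmem1 hmem2
      exact CqAux.mkPhi_ne_p101 hk0 hk1 h2 (B⁻¹ * C)
        ((Set.mem_singleton_iff.mp hmem2).trans (Set.mem_singleton_iff.mp hmem1).symm)
    · have hxS : x ∈ {P ∈ Cq k | inc l P} := by rw [hx]; exact rfl
      rcases (hsec l x).mp hxS with ⟨h, hA'⟩ | ⟨r1, hr1, hroot1⟩
      · exact hA0 hA'
      · have hroot2 := CqAux.root_other h2 hA0 hroot1
        have hmem2 : CqAux.mkPhi k hk0 hk1 h2 (A⁻¹ * B + r1) ∈ {P ∈ Cq k | inc l P} :=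
          (hsec l _).mpr (Or.inr ⟨A⁻¹ * B + r1, rfl, hroot2⟩)
        rw [hx] at hmem2 hxS
        have : CqAux.mkPhi k hk0 hk1 h2 (A⁻¹ * B + r1) = CqAux.mkPhi k hk0 hk1 h2 r1 :=
          (Set.mem_singleton_iff.mp hmem2).trans hr1
        exact CqAux.root_other_ne hA0 hB0 (CqAux.mkPhi_inj hk0 hk1 h2 this)

/-- In `PG(2,q)` with `q` even and `k ≠ 0, 1`, the conic `C_k = V(kxy + z² + yz + xz)` is
nondegenerate, and its nucleus is the point `(1 : 1 : k)`: the point `(1 : 1 : k)` is off the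
conic and lies on every tangent line. -/
theorem Cq_nondegenerate_nucleus {F : Type} [Field F] [Fintype F] {q : ℕ}
    (hq : Fintype.card F = q) (heven : Even q) (k : F) (hk0 : k ≠ 0) (hk1 : k ≠ 1) :
    IsOval q (Cq k) ∧
      pt (1 : F) 1 k (vec_ne_zero 0 (by simp)) ∉ Cq k ∧
      ∀ l : PG2 F, IsTangent l (Cq k) →
        inc l (pt (1 : F) 1 k (vec_ne_zero 0 (by simp))) := by
  obtain ⟨h1, h2', h3, h4⟩ := Cq_main hq heven k hk0 hk1
  exact ⟨⟨h1, h2'⟩, h3, fun l hl => h4 l hl⟩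
end

section
/- In PG(2,q) with q ≥ 8 even, if a ∈ GF(q) with a ≠ 0, 1 and a³ ≠ 1, then the set S = C_a ∪ C_{a²} ∪ {(1:1:a²)} is an untouchable set of size 2q − 1, where C_k = V(kxy + z² + yz + xz). -/
namespace UT
variable {F : Type} [Field F]

lemma rep_mk {v : Fin 3 → F} (hv : v ≠ 0) :
    ∃ c : F, c ≠ 0 ∧ ∀ i, (Projectivization.mk F v hv).rep i = c * v i := by
  have h := Projectivization.mk_rep (Projectivization.mk F v hv)
  rw [Projectivization.mk_eq_mk_iff] at h
  obtain ⟨c, hc⟩ := h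
  exact ⟨(c : F), c.ne_zero, fun i => by rw [← hc]; simp [Units.smul_def]⟩

lemma mem_Cq_mk {k : F} {v : Fin 3 → F} (hv : v ≠ 0) :
    Projectivization.mk F v hv ∈ Cq k ↔
      k * v 0 * v 1 + v 2 ^ 2 + v 1 * v 2 + v 0 * v 2 = 0 := by
  obtain ⟨c, hc, hrep⟩ := rep_mk hv
  show k * _ * _ + _ + _ + _ = 0 ↔ _
  rw [hrep 0, hrep 1, hrep 2]
  constructor
  · intro h
    have := mul_left_cancel₀ (pow_ne_zero 2 hc) (by linear_combination h : c^2 * (k * v 0 * v 1 + v 2 ^ 2 + v 1 * v 2 + v 0 * v 2) = c^2 * 0)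
    exact this
  · intro h; linear_combination c^2 * h

lemma inc_mk (l : PG2 F) {v : Fin 3 → F} (hv : v ≠ 0) :
    inc l (Projectivization.mk F v hv) ↔
      l.rep 0 * v 0 + l.rep 1 * v 1 + l.rep 2 * v 2 = 0 := by
  obtain ⟨c, hc, hrep⟩ := rep_mk hv
  show _ = 0 ↔ _
  rw [hrep 0, hrep 1, hrep 2]
  constructor
  · intro h
    have := mul_left_cancel₀ hc (by linear_combination h : c * (l.rep 0 * v 0 + l.rep 1 * v 1 + l.rep 2 * v 2) = c * 0)
    exact this
  · intro h; linear_combination c * h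

end UT

namespace UT
variable {F : Type} [Field F]

lemma mem_Cq_pt {k x y z : F} (h : ![x,y,z] ≠ 0) :
    pt x y z h ∈ Cq k ↔ k * x * y + z ^ 2 + y * z + x * z = 0 := by
  rw [pt, mem_Cq_mk]; simp

lemma inc_pt (l : PG2 F) {x y z : F} (h : ![x,y,z] ≠ 0) :
    inc l (pt x y z h) ↔ l.rep 0 * x + l.rep 1 * y + l.rep 2 * z = 0 := by
  rw [pt, inc_mk]; simp

lemma eq_pt_of {P : PG2 F} {x y z : F} (h : ![x,y,z] ≠ 0) (c : F) (hc : c ≠ 0)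
    (h0 : P.rep 0 = c * x) (h1 : P.rep 1 = c * y) (h2 : P.rep 2 = c * z) :
    P = pt x y z h := by
  conv_lhs => rw [← Projectivization.mk_rep P]
  rw [pt, Projectivization.mk_eq_mk_iff]
  refine ⟨Units.mk0 c hc, ?_⟩
  funext i
  fin_cases i <;> simp [Units.smul_def, h0, h1, h2]

lemma pt_eq_pt {x y z x' y' z' : F} (h : ![x,y,z] ≠ 0) (h' : ![x',y',z'] ≠ 0) :
    pt x y z h = pt x' y' z' h' ↔ ∃ c : F, c ≠ 0 ∧ x = c * x' ∧ y = c * y' ∧ z = c * z' := by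
  rw [pt, pt, Projectivization.mk_eq_mk_iff]
  constructor
  · rintro ⟨c, hc⟩
    refine ⟨(c : F), c.ne_zero, ?_, ?_, ?_⟩ <;>
      [ have := congrFun hc 0; have := congrFun hc 1; have := congrFun hc 2] <;>
      · simpa [Units.smul_def, eq_comm] using this
  · rintro ⟨c, hc, h0, h1, h2⟩
    refine ⟨Units.mk0 c hc, ?_⟩
    funext i
    fin_cases i <;> simp [Units.smul_def, h0.symm, h1.symm, h2.symm]

end UT

namespace UT
variable {F : Type} [Field F]

noncomputable def p010 : PG2 F := pt 0 1 0 (vec_ne_zero 1 (by simp))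
noncomputable def p011 : PG2 F := pt 0 1 1 (vec_ne_zero 1 (by simp))
noncomputable def p100 : PG2 F := pt 1 0 0 (vec_ne_zero 0 (by simp))
noncomputable def p101 : PG2 F := pt 1 0 1 (vec_ne_zero 0 (by simp))

open Classical in
/-- Parametrization of the conic `C_k` minus the point `(0:1:1)`. -/
noncomputable def psi (k z : F) : PG2 F :=
  if z = k then p010 else pt 1 ((z^2+z)/(z+k)) z (vec_ne_zero 0 (by simp))

variable (h2 : (2 : F) = 0)
include h2

lemma add_eq_zero_iff {x y : F} : x + y = 0 ↔ x = y := by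
  constructor
  · intro h; linear_combination h - y * h2
  · intro h; linear_combination h + y * h2

omit h2 in
lemma psi_injective {k : F} : Function.Injective (psi (F := F) k) := by
  intro z z' h
  unfold psi at h
  split_ifs at h with h1 h1'
  · exact h1.trans h1'.symm
  · exfalso; rw [p010, pt_eq_pt] at h
    obtain ⟨c, hc, e0, e1, e2⟩ := h
    rw [mul_one] at e0; rw [← e0, zero_mul] at e1; exact one_ne_zero e1
  · exfalso; rw [p010, pt_eq_pt] at h
    obtain ⟨c, hc, e1, e0, e2⟩ := h
    rw [mul_zero] at e1; exact one_ne_zero e1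
  · rw [pt_eq_pt] at h
    obtain ⟨c, hc, e0, e1, e2⟩ := h
    rw [mul_one] at e0; rw [← e0, one_mul] at e2; exact e2

omit h2 in
lemma psi_ne_p011 {k z : F} : psi k z ≠ (p011 : PG2 F) := by
  unfold psi
  split_ifs with h1
  · rw [p010, p011]
    intro h
    rw [pt_eq_pt] at h
    obtain ⟨c, hc, e0, e1, e2⟩ := h
    rw [mul_one] at e1 e2; rw [← e1] at e2; simp at e2
  · intro h
    rw [p011, pt_eq_pt] at h
    obtain ⟨c, hc, e0, e1, e2⟩ := h
    rw [mul_zero] at e0; exact one_ne_zero e0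

end UT

namespace UT
variable {F : Type} [Field F] (h2 : (2 : F) = 0)
include h2

lemma ne_iff_add_ne {x y : F} (h : x ≠ y) : x + y ≠ 0 :=
  fun hc => h ((add_eq_zero_iff h2).mp hc)

lemma p011_mem {k : F} : (p011 : PG2 F) ∈ Cq k := by
  rw [p011, mem_Cq_pt]; linear_combination h2

lemma psi_mem {k : F} (z : F) : psi k z ∈ Cq k := by
  unfold psi
  split_ifs with h1
  · rw [p010, mem_Cq_pt]; ring
  · rw [mem_Cq_pt]
    have hzk : z + k ≠ 0 := ne_iff_add_ne h2 h1
    have hy : (z^2+z)/(z+k) * (z+k) = z^2+z := div_mul_cancel₀ _ hzk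
    linear_combination hy + (z^2+z) * h2

lemma Cq_eq {k : F} (hk0 : k ≠ 0) (hk1 : k ≠ 1) :
    Cq k = insert (p011 : PG2 F) (Set.range (psi k)) := by
  have hkk : k^2 + k ≠ 0 := by
    intro h
    have h1 : k * (k + 1) = 0 := by linear_combination h
    rcases mul_eq_zero.mp h1 with h | h
    · exact hk0 h
    · exact hk1 ((add_eq_zero_iff h2).mp h)
  ext P
  constructor
  · intro hP
    have hv : P.rep ≠ 0 := P.rep_nonzero
    have hq : k * P.rep 0 * P.rep 1 + P.rep 2 ^ 2 + P.rep 1 * P.rep 2 + P.rep 0 * P.rep 2 = 0 := hP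
    by_cases h0 : P.rep 0 = 0
    · have hz : P.rep 2 * (P.rep 2 + P.rep 1) = 0 := by
        linear_combination hq - (k * P.rep 1 + P.rep 2) * h0
      rcases mul_eq_zero.mp hz with hz2 | hz2
      · -- P = p010 = psi k k
        have hv1 : P.rep 1 ≠ 0 := by
          intro h1
          apply hv; funext i; fin_cases i <;> simp [h0, h1, hz2]
        right
        refine ⟨k, ?_⟩
        rw [psi, if_pos rfl, p010]
        exact (eq_pt_of _ (P.rep 1) hv1 (by rw [h0, mul_zero]) (by rw [mul_one])
          (by rw [hz2, mul_zero])).symm ▸ rfl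
      · have h21 : P.rep 2 = P.rep 1 := (add_eq_zero_iff h2).mp hz2
        have hv2 : P.rep 2 ≠ 0 := by
          intro hc
          apply hv; funext i; fin_cases i <;> simp [h0, hc, h21 ▸ hc, ← h21, hc]
        left
        rw [p011]
        exact eq_pt_of _ (P.rep 2) hv2 (by rw [h0, mul_zero]) (by rw [mul_one, h21])
          (by rw [mul_one])
    · right
      set z : F := P.rep 2 / P.rep 0 with hzdef
      have hz2 : P.rep 2 = P.rep 0 * z := by rw [hzdef, mul_div_assoc', eq_div_iff h0, mul_comm]
      have key : P.rep 0 * (P.rep 1 * (z + k)) = P.rep 0 * (P.rep 0 * (z^2 + z)) := by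
        linear_combination hq - (P.rep 2^2 + P.rep 0 * P.rep 2) * h2 +
          (P.rep 0 * z + P.rep 2 + P.rep 0 - P.rep 1) * hz2
      have hrel : P.rep 1 * (z + k) = P.rep 0 * (z^2 + z) := mul_left_cancel₀ h0 key
      have hzk : z ≠ k := by
        intro h
        rw [h] at hrel
        have : P.rep 0 * (k^2 + k) = 0 := by linear_combination (P.rep 1 * k) * h2 - hrel
        exact (mul_ne_zero h0 hkk) this
      have hzk0 : z + k ≠ 0 := ne_iff_add_ne h2 hzk
      refine ⟨z, ?_⟩
      rw [psi, if_neg hzk]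
      refine (eq_pt_of _ (P.rep 0) h0 (by rw [mul_one]) ?_ hz2).symm
      rw [eq_comm, mul_comm, div_mul_eq_mul_div, div_eq_iff hzk0]
      linear_combination -hrel
  · rintro (h | ⟨z, rfl⟩)
    · rw [h]; exact p011_mem h2
    · exact psi_mem h2 z

end UT

namespace UT
variable {F : Type} [Field F] (h2 : (2 : F) = 0)
include h2

omit h2 in
lemma inc_p011 (l : PG2 F) : inc l (p011 : PG2 F) ↔ l.rep 1 + l.rep 2 = 0 := by
  rw [p011, inc_pt]
  constructor <;> intro h <;> linear_combination h

lemma inc_psi {k : F} (hk0 : k ≠ 0) (hk1 : k ≠ 1) (l : PG2 F) (z : F) :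
    inc l (psi k z) ↔
      (l.rep 1 + l.rep 2) * z^2 + (l.rep 0 + l.rep 1 + l.rep 2 * k) * z + l.rep 0 * k = 0 := by
  have hkk : k^2 + k ≠ 0 := by
    intro h
    have h1 : k * (k + 1) = 0 := by linear_combination h
    rcases mul_eq_zero.mp h1 with h | h
    · exact hk0 h
    · exact hk1 ((add_eq_zero_iff h2).mp h)
  unfold psi
  split_ifs with h1
  · rw [p010, inc_pt, h1]
    constructor
    · intro h
      have hv : l.rep 1 = 0 := by linear_combination h
      rw [hv]
      linear_combination (l.rep 2 * k^2 + l.rep 0 * k) * h2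
    · intro h
      have hv : l.rep 1 * (k^2 + k) = 0 := by
        linear_combination h - (l.rep 2 * k^2 + l.rep 0 * k) * h2
      have := (mul_eq_zero.mp hv).resolve_right hkk
      rw [this]; ring
  · rw [inc_pt]
    have hzk0 : z + k ≠ 0 := ne_iff_add_ne h2 h1
    have hy : (z^2+z)/(z+k) * (z+k) = z^2+z := div_mul_cancel₀ _ hzk0
    constructor
    · intro h
      linear_combination (z + k) * h - l.rep 1 * hy
    · intro h
      have hE : (z + k) * (l.rep 0 * 1 + l.rep 1 * ((z^2+z)/(z+k)) + l.rep 2 * z) = 0 := by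
        linear_combination h + l.rep 1 * hy
      exact (mul_eq_zero.mp hE).resolve_left hzk0

lemma exists_sq [Fintype F] (c : F) : ∃ x : F, x^2 = c := by
  have hinj : Function.Injective (fun x : F => x^2) := by
    intro x y h
    simp only at h
    have hs : (x - y)^2 = 0 := by linear_combination h + (y^2 - x*y) * h2
    have := pow_eq_zero_iff (n := 2) (by norm_num) |>.mp hs
    exact sub_eq_zero.mp this
  exact Finite.surjective_of_injective hinj c

/-- Every line through the nucleus meets the conic. -/
lemma exists_point_of_nucleus [Fintype F] {k : F} (hk0 : k ≠ 0) (hk1 : k ≠ 1) {l : PG2 F}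
    (hB : l.rep 0 + l.rep 1 + l.rep 2 * k = 0) : ∃ P ∈ Cq k, inc l P := by
  by_cases hA : l.rep 1 + l.rep 2 = 0
  · exact ⟨p011, p011_mem h2, (inc_p011 l).mpr hA⟩
  · obtain ⟨z, hz⟩ := exists_sq h2 (l.rep 0 * k / (l.rep 1 + l.rep 2))
    refine ⟨psi k z, psi_mem h2 z, (inc_psi h2 hk0 hk1 l z).mpr ?_⟩
    rw [hB]
    have : (l.rep 1 + l.rep 2) * z^2 = l.rep 0 * k := by
      rw [hz]; field_simp
    linear_combination this + l.rep 0 * k * h2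

/-- A line meeting the conic away from the nucleus meets it in a second point. -/
lemma exists_second_point {k : F} (hk0 : k ≠ 0) (hk1 : k ≠ 1) {l : PG2 F}
    (hB : l.rep 0 + l.rep 1 + l.rep 2 * k ≠ 0) {P : PG2 F} (hP : P ∈ Cq k)
    (hiP : inc l P) : ∃ Q ∈ Cq k, inc l Q ∧ Q ≠ P := by
  set A := l.rep 1 + l.rep 2 with hA
  set B := l.rep 0 + l.rep 1 + l.rep 2 * k with hBdef
  set C := l.rep 0 * k with hC
  rw [Cq_eq h2 hk0 hk1] at hP
  rcases hP with rfl | ⟨z, rfl⟩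
  · -- P = p011, so A = 0; second point is psi k (C/B)
    have hA0 : A = 0 := (inc_p011 l).mp hiP
    refine ⟨psi k (C/B), psi_mem h2 _, (inc_psi h2 hk0 hk1 l _).mpr ?_, psi_ne_p011⟩
    show A * (C/B)^2 + B * (C/B) + C = 0
    rw [hA0]
    have hd : B * (C/B) = C := by field_simp
    linear_combination hd + C * h2
  · have hf : A * z^2 + B * z + C = 0 := (inc_psi h2 hk0 hk1 l z).mp hiP
    by_cases hA0 : A = 0
    · -- second point is p011
      refine ⟨p011, p011_mem h2, (inc_p011 l).mpr hA0, (psi_ne_p011 (k := k) (z := z)).symm ⟩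
    · -- second point is psi k (z + B/A)
      refine ⟨psi k (z + B/A), psi_mem h2 _, (inc_psi h2 hk0 hk1 l _).mpr ?_, ?_⟩
      · show A * (z + B/A)^2 + B * (z + B/A) + C = 0
        have hd : A * (B/A) = B := by field_simp
        linear_combination hf + (B/A) * hd + (A * z * (B/A) + B * (B/A)) * h2
      · intro hc
        have heq := psi_injective (k := k) hc
        exact div_ne_zero hB hA0 (add_eq_left.mp heq)

end UT

namespace UT
variable {F : Type} [Field F]

lemma p100_ne_p101 : (p100 : PG2 F) ≠ p101 := by
  intro h; rw [p100, p101, pt_eq_pt] at h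
  obtain ⟨c, hc, e0, e1, e2⟩ := h
  rw [mul_one] at e0 e2; rw [← e2] at e0; exact one_ne_zero e0
lemma p100_ne_p010 : (p100 : PG2 F) ≠ p010 := by
  intro h; rw [p100, p010, pt_eq_pt] at h
  obtain ⟨c, hc, e0, e1, e2⟩ := h
  rw [mul_zero] at e0; exact one_ne_zero e0
lemma p100_ne_p011 : (p100 : PG2 F) ≠ p011 := by
  intro h; rw [p100, p011, pt_eq_pt] at h
  obtain ⟨c, hc, e0, e1, e2⟩ := h
  rw [mul_zero] at e0; exact one_ne_zero e0
lemma p101_ne_p010 : (p101 : PG2 F) ≠ p010 := by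
  intro h; rw [p101, p010, pt_eq_pt] at h
  obtain ⟨c, hc, e0, e1, e2⟩ := h
  rw [mul_zero] at e0; exact one_ne_zero e0
lemma p101_ne_p011 : (p101 : PG2 F) ≠ p011 := by
  intro h; rw [p101, p011, pt_eq_pt] at h
  obtain ⟨c, hc, e0, e1, e2⟩ := h
  rw [mul_zero] at e0; exact one_ne_zero e0
lemma p010_ne_p011 : (p010 : PG2 F) ≠ p011 := by
  intro h; rw [p010, p011, pt_eq_pt] at h
  obtain ⟨c, hc, e0, e1, e2⟩ := h
  rw [mul_one] at e1 e2; rw [← e1] at e2; exact one_ne_zero e2.symm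

lemma ncard_four : ({p100, p101, p010, p011} : Set (PG2 F)).ncard = 4 := by
  rw [Set.ncard_insert_of_notMem (by
    simp only [Set.mem_insert_iff, Set.mem_singleton_iff]
    push_neg
    exact ⟨p100_ne_p101, p100_ne_p010, p100_ne_p011⟩) (Set.toFinite _)]
  rw [Set.ncard_insert_of_notMem (by
    simp only [Set.mem_insert_iff, Set.mem_singleton_iff]
    push_neg
    exact ⟨p101_ne_p010, p101_ne_p011⟩) (Set.toFinite _)]
  rw [Set.ncard_insert_of_notMem (by
    simp only [Set.mem_singleton_iff]
    exact p010_ne_p011) (Set.toFinite _)]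
  rw [Set.ncard_singleton]

lemma ncard_Cq [Fintype F] (h2 : (2 : F) = 0) {k : F} (hk0 : k ≠ 0) (hk1 : k ≠ 1) :
    (Cq k).ncard = Fintype.card F + 1 := by
  rw [Cq_eq h2 hk0 hk1]
  rw [Set.ncard_insert_of_notMem (by rintro ⟨z, hz⟩; exact psi_ne_p011 hz) (Set.toFinite _)]
  rw [← Set.image_univ, Set.ncard_image_of_injective _ psi_injective, Set.ncard_univ,
    Nat.card_eq_fintype_card]

lemma Cq_inter (h2 : (2 : F) = 0) {a : F} (ha0 : a ≠ 0) (ha1 : a ≠ 1) :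
    Cq a ∩ Cq (a^2) = ({p100, p101, p010, p011} : Set (PG2 F)) := by
  ext P
  constructor
  · rintro ⟨hqa, hqb⟩
    have hv : P.rep ≠ 0 := P.rep_nonzero
    have hqa' : a * P.rep 0 * P.rep 1 + P.rep 2 ^ 2 + P.rep 1 * P.rep 2 + P.rep 0 * P.rep 2 = 0 := hqa
    have hqb' : a^2 * P.rep 0 * P.rep 1 + P.rep 2 ^ 2 + P.rep 1 * P.rep 2 + P.rep 0 * P.rep 2 = 0 := hqb
    have hmul : (a^2 - a) * (P.rep 0 * P.rep 1) = 0 := by linear_combination hqb' - hqa'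
    have haa : a^2 - a ≠ 0 := by
      intro h
      have h1 : a * (a - 1) = 0 := by linear_combination h
      rcases mul_eq_zero.mp h1 with h | h
      · exact ha0 h
      · exact ha1 (sub_eq_zero.mp h)
    have h01 : P.rep 0 * P.rep 1 = 0 := (mul_eq_zero.mp hmul).resolve_left haa
    rcases mul_eq_zero.mp h01 with h0 | h1
    · have hz : P.rep 2 * (P.rep 2 + P.rep 1) = 0 := by
        linear_combination hqa' - (a * P.rep 1 + P.rep 2) * h0
      rcases mul_eq_zero.mp hz with hz2 | hz2
      · have hv1 : P.rep 1 ≠ 0 := by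
          intro h1
          apply hv; funext i; fin_cases i <;> simp [h0, h1, hz2]
        right; right; left
        rw [p010]
        exact eq_pt_of _ (P.rep 1) hv1 (by rw [h0, mul_zero]) (by rw [mul_one])
          (by rw [hz2, mul_zero])
      · have h21 : P.rep 2 = P.rep 1 := (add_eq_zero_iff h2).mp hz2
        have hv2 : P.rep 2 ≠ 0 := by
          intro hc
          apply hv; funext i; fin_cases i <;> simp [h0, hc, ← h21, hc]
        right; right; right
        rw [Set.mem_singleton_iff, p011]
        exact eq_pt_of _ (P.rep 2) hv2 (by rw [h0, mul_zero]) (by rw [mul_one, h21])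
          (by rw [mul_one])
    · have hz : P.rep 2 * (P.rep 2 + P.rep 0) = 0 := by
        linear_combination hqa' - (a * P.rep 0 + P.rep 2) * h1
      rcases mul_eq_zero.mp hz with hz2 | hz2
      · have hv0 : P.rep 0 ≠ 0 := by
          intro h0
          apply hv; funext i; fin_cases i <;> simp [h0, h1, hz2]
        left
        rw [p100]
        exact eq_pt_of _ (P.rep 0) hv0 (by rw [mul_one]) (by rw [h1, mul_zero])
          (by rw [hz2, mul_zero])
      · have h20 : P.rep 2 = P.rep 0 := (add_eq_zero_iff h2).mp hz2
        have hv0 : P.rep 0 ≠ 0 := by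
          intro hc
          apply hv; funext i; fin_cases i <;> simp [h1, h20, hc]
        right; left
        rw [p101]
        exact eq_pt_of _ (P.rep 0) hv0 (by rw [mul_one]) (by rw [h1, mul_zero])
          (by rw [mul_one, h20])
  · intro h
    rcases h with h | h | h | h <;> rw [h] <;> constructor
    · rw [p100, mem_Cq_pt]; ring
    · rw [p100, mem_Cq_pt]; ring
    · rw [p101, mem_Cq_pt]; linear_combination h2
    · rw [p101, mem_Cq_pt]; linear_combination h2
    · rw [p010, mem_Cq_pt]; ring
    · rw [p010, mem_Cq_pt]; ring
    · exact p011_mem h2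
    · exact p011_mem h2

end UT


/-- In `PG(2,q)` with `q ≥ 8` even, if `a ≠ 0, 1` and `a³ ≠ 1`, then
`S = C_a ∪ C_(a²) ∪ {(1:1:a²)}` is an untouchable set of size `2q − 1`. -/
theorem untouchable_two_q_minus_one {F : Type} [Field F] [Fintype F] {q : ℕ}
    (hq : Fintype.card F = q) (heven : Even q) (hq8 : 8 ≤ q)
    (a : F) (ha0 : a ≠ 0) (ha1 : a ≠ 1) (ha3 : a ^ 3 ≠ 1) :
    Untouchable (Cq a ∪ Cq (a ^ 2) ∪ {pt (1 : F) 1 (a ^ 2) (vec_ne_zero 0 (by simp))}) ∧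
      (Cq a ∪ Cq (a ^ 2) ∪
        {pt (1 : F) 1 (a ^ 2) (vec_ne_zero 0 (by simp))}).ncard = 2 * q - 1 := by
  have hchar : ringChar F = 2 := FiniteField.even_card_iff_char_two.mpr (hq ▸ Nat.even_iff.mp heven)
  have h2 : (2 : F) = 0 := by
    have h := ringChar.Nat.cast_ringChar (R := F)
    rw [hchar] at h
    exact_mod_cast h
  haveI : Finite (PG2 F) := Quotient.finite _
  set N : PG2 F := pt (1 : F) 1 (a ^ 2) (vec_ne_zero 0 (by simp)) with hN
  have hb0 : a ^ 2 ≠ 0 := pow_ne_zero 2 ha0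
  have hb1 : a ^ 2 ≠ 1 := by
    intro h
    have hs : (a - 1) ^ 2 = 0 := by linear_combination h + (1 - a) * h2
    exact ha1 (sub_eq_zero.mp (pow_eq_zero_iff (n := 2) (by norm_num) |>.mp hs))
  have hNa : N ∉ Cq a := by
    rw [hN, UT.mem_Cq_pt]
    intro h
    have h3 : a * (a ^ 3 + 1) = 0 := by linear_combination h - a ^ 2 * h2
    have := (mul_eq_zero.mp h3).resolve_left ha0
    exact ha3 ((UT.add_eq_zero_iff h2).mp this)
  have hNb : N ∉ Cq (a ^ 2) := by
    rw [hN, UT.mem_Cq_pt]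
    intro h
    have h3 : a ^ 2 * (a + 1) ^ 2 = 0 := by linear_combination h + (a ^ 3 - a ^ 2) * h2
    rcases mul_eq_zero.mp h3 with h | h
    · exact hb0 h
    · exact ha1 (((UT.add_eq_zero_iff h2).mp (pow_eq_zero_iff (n := 2) (by norm_num) |>.mp h)))
  have hNaCb : (pt (1 : F) 1 a (vec_ne_zero 0 (by simp))) ∈ Cq (a ^ 2) := by
    rw [UT.mem_Cq_pt]; linear_combination (a ^ 2 + a) * h2
  have hincN : ∀ l : PG2 F, inc l N ↔ l.rep 0 + l.rep 1 + l.rep 2 * a ^ 2 = 0 := fun l => by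
    rw [hN, UT.inc_pt]
    constructor <;> intro h <;> linear_combination h
  constructor
  · intro l hl
    obtain ⟨P0, hset⟩ := Set.ncard_eq_one.mp hl
    have h0 : P0 ∈ ({P0} : Set (PG2 F)) := rfl
    rw [← hset] at h0
    obtain ⟨hP0S, hP0i⟩ := h0
    have uniq : ∀ Q, Q ∈ Cq a ∪ Cq (a ^ 2) ∪ {N} → inc l Q → Q = P0 := fun Q hQ hQi => by
      have hmem : Q ∈ {P ∈ Cq a ∪ Cq (a ^ 2) ∪ {N} | inc l P} := ⟨hQ, hQi⟩
      rw [hset] at hmem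
      exact hmem
    by_cases hNl : inc l N
    · obtain ⟨Q, hQ, hQi⟩ := UT.exists_point_of_nucleus h2 hb0 hb1 ((hincN l).mp hNl)
      have e1 := uniq N (Or.inr rfl) hNl
      have e2 := uniq Q (Or.inl (Or.inr hQ)) hQi
      rw [← e1] at e2
      exact hNb (e2 ▸ hQ)
    · have hB2 : l.rep 0 + l.rep 1 + l.rep 2 * a ^ 2 ≠ 0 := fun h => hNl ((hincN l).mpr h)
      have hP0ne : P0 ≠ N := fun h => hNl (h ▸ hP0i)
      have hP0U : P0 ∈ Cq a ∪ Cq (a ^ 2) := by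
        rcases hP0S with h | h
        · exact h
        · exact absurd (Set.mem_singleton_iff.mp h) hP0ne
      by_cases hPb : P0 ∈ Cq (a ^ 2)
      · obtain ⟨Q, hQ, hQi, hQne⟩ := UT.exists_second_point h2 hb0 hb1 hB2 hPb hP0i
        exact hQne (uniq Q (Or.inl (Or.inr hQ)) hQi)
      · have hPa : P0 ∈ Cq a := hP0U.resolve_right hPb
        by_cases hNal : inc l (pt (1 : F) 1 a (vec_ne_zero 0 (by simp)))
        · have e := uniq _ (Or.inl (Or.inr hNaCb)) hNal
          exact hPb (e ▸ hNaCb)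
        · have hB1 : l.rep 0 + l.rep 1 + l.rep 2 * a ≠ 0 := fun h =>
            hNal ((UT.inc_pt l _).mpr (by linear_combination h))
          obtain ⟨Q, hQ, hQi, hQne⟩ := UT.exists_second_point h2 ha0 ha1 hB1 hPa hP0i
          exact hQne (uniq Q (Or.inl (Or.inl hQ)) hQi)
  · have hca : (Cq a).ncard = q + 1 := by rw [UT.ncard_Cq h2 ha0 ha1, hq]
    have hcb : (Cq (a ^ 2)).ncard = q + 1 := by rw [UT.ncard_Cq h2 hb0 hb1, hq]
    have hu := Set.ncard_union_add_ncard_inter (Cq a) (Cq (a ^ 2)) (Set.toFinite _) (Set.toFinite _)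
    rw [UT.Cq_inter h2 ha0 ha1, UT.ncard_four, hca, hcb] at hu
    have hNnot : N ∉ Cq a ∪ Cq (a ^ 2) := fun h => h.elim hNa hNb
    rw [Set.union_singleton, Set.ncard_insert_of_notMem hNnot (Set.toFinite _)]
    omega
end

section
/- In PG(2,q) with q an even power of 2, if a ∈ GF(q) is a primitive cube root of unity (a ≠ 1, a³ = 1), then C_a ∪ C_{a²} is an untouchable set of size 2q − 2, where C_k = V(kxy + z² + yz + xz). -/
namespace Untch
variable {F : Type} [Field F]

lemma rep_smul (v : Fin 3 → F) (hv : v ≠ 0) :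
    ∃ c : F, c ≠ 0 ∧ ∀ i, (Projectivization.mk F v hv).rep i = c * v i := by
  obtain ⟨c, hc⟩ := Projectivization.exists_smul_eq_mk_rep F v hv
  exact ⟨c, c.ne_zero, fun i => by rw [← hc]; simp [Units.smul_def]⟩

lemma mem_Cq {k x y z : F} (h : ![x, y, z] ≠ 0) :
    pt x y z h ∈ Cq k ↔ k * x * y + z ^ 2 + y * z + x * z = 0 := by
  obtain ⟨c, hc, hr⟩ := rep_smul ![x, y, z] h
  have h0 := hr 0; have h1 := hr 1; have h2 := hr 2
  simp only [Matrix.cons_val_zero, Matrix.cons_val_one, Matrix.head_cons,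
    Matrix.cons_val_two, Matrix.tail_cons] at h0 h1 h2
  unfold Cq pt
  simp only [Set.mem_setOf_eq, h0, h1, h2]
  constructor
  · intro hE
    have : c ^ 2 * (k * x * y + z ^ 2 + y * z + x * z) = 0 := by linear_combination hE
    rcases mul_eq_zero.1 this with h' | h'
    · exact absurd h' (pow_ne_zero 2 hc)
    · exact h'
  · intro hE; linear_combination c ^ 2 * hE

lemma inc_pt {x y z : F} (l : PG2 F) (h : ![x, y, z] ≠ 0) :
    inc l (pt x y z h) ↔ l.rep 0 * x + l.rep 1 * y + l.rep 2 * z = 0 := by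
  obtain ⟨c, hc, hr⟩ := rep_smul ![x, y, z] h
  have h0 := hr 0; have h1 := hr 1; have h2 := hr 2
  simp only [Matrix.cons_val_zero, Matrix.cons_val_one, Matrix.head_cons,
    Matrix.cons_val_two, Matrix.tail_cons] at h0 h1 h2
  unfold inc pt
  rw [h0, h1, h2]
  constructor
  · intro hE
    have : c * (l.rep 0 * x + l.rep 1 * y + l.rep 2 * z) = 0 := by linear_combination hE
    rcases mul_eq_zero.1 this with h' | h'
    · exact absurd h' hc
    · exact h'
  · intro hE; linear_combination c * hE

lemma pt_eq_elim {x y z x' y' z' : F} {h : ![x, y, z] ≠ 0} {h' : ![x', y', z'] ≠ 0}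
    (e : pt x y z h = pt x' y' z' h') :
    ∃ c : F, c ≠ 0 ∧ c * x' = x ∧ c * y' = y ∧ c * z' = z := by
  rw [pt, pt, Projectivization.mk_eq_mk_iff] at e
  obtain ⟨c, hc⟩ := e
  refine ⟨c, c.ne_zero, ?_, ?_, ?_⟩
  · have := congrFun hc 0; simpa [Units.smul_def] using this
  · have := congrFun hc 1; simpa [Units.smul_def] using this
  · have := congrFun hc 2; simpa [Units.smul_def] using this

lemma pt_smul {c x y z : F} (hc : c ≠ 0) (h : ![c * x, c * y, c * z] ≠ 0)
    (h' : ![x, y, z] ≠ 0) : pt (c * x) (c * y) (c * z) h = pt x y z h' := by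
  rw [pt, pt, Projectivization.mk_eq_mk_iff]
  refine ⟨Units.mk0 c hc, ?_⟩
  funext i
  fin_cases i <;> simp

lemma pt_rep (P : PG2 F) (h : ![P.rep 0, P.rep 1, P.rep 2] ≠ 0) :
    pt (P.rep 0) (P.rep 1) (P.rep 2) h = P := by
  have : ![P.rep 0, P.rep 1, P.rep 2] = P.rep := by
    funext i; fin_cases i <;> simp
  rw [pt]
  conv_rhs => rw [← Projectivization.mk_rep P]
  rw [Projectivization.mk_eq_mk_iff]
  exact ⟨1, by simp [this]⟩

lemma rep_vec_ne (P : PG2 F) : ![P.rep 0, P.rep 1, P.rep 2] ≠ 0 := by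
  intro hz
  apply P.rep_nonzero
  funext i
  have := congrFun hz
  fin_cases i
  · simpa using this 0
  · simpa using this 1
  · simpa using this 2

end Untch

namespace Untch
variable {F : Type} [Field F]

lemma pt_eq_of_coords {x y z x' y' z' : F} (c : F) (hc : c ≠ 0)
    (h : ![x, y, z] ≠ 0) (h' : ![x', y', z'] ≠ 0)
    (e1 : x = c * x') (e2 : y = c * y') (e3 : z = c * z') :
    pt x y z h = pt x' y' z' h' := by
  rw [pt, pt, Projectivization.mk_eq_mk_iff]
  refine ⟨Units.mk0 c hc, ?_⟩
  funext i
  fin_cases i <;> simp [e1, e2, e3]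

open Classical in
/-- Parametrization of the conic. -/
noncomputable def fpar (k z : F) : PG2 F :=
  if z = k then pt 1 0 1 (vec_ne_zero 0 (by norm_num))
  else pt ((z ^ 2 + z) / (z + k)) 1 z (vec_ne_zero 1 (by norm_num))

lemma add_ne_zero_of_ne (hch : (2:F) = 0) {z k : F} (h : z ≠ k) : z + k ≠ 0 := by
  intro h0; exact h (by linear_combination h0 - k * hch)

lemma fpar_mem (hch : (2:F) = 0) {k : F} (z : F) :
    fpar k z ∈ Cq k := by
  rw [fpar]
  split_ifs with h1
  · rw [mem_Cq]; linear_combination hch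
  · rw [mem_Cq]
    have hzk := add_ne_zero_of_ne hch h1
    have hX : (z ^ 2 + z) / (z + k) * (z + k) = z ^ 2 + z := div_mul_cancel₀ _ hzk
    linear_combination hX + (z ^ 2 + z) * hch

lemma fpar_injective {k : F} : Function.Injective (fpar (F := F) k) := by
  intro z z' h
  rw [fpar, fpar] at h
  split_ifs at h with h1 h2 h2
  · rw [h1, h2]
  · obtain ⟨c, hc, e1, e2, e3⟩ := pt_eq_elim h
    simp at e2; exact absurd e2 hc
  · obtain ⟨c, hc, e1, e2, e3⟩ := pt_eq_elim h
    simp at e2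
  · obtain ⟨c, hc, e1, e2, e3⟩ := pt_eq_elim h
    rw [mul_one] at e2
    rw [e2, one_mul] at e3
    exact e3.symm

lemma pt100_notmem_range (k : F) :
    pt 1 0 0 (vec_ne_zero 0 (by norm_num)) ∉ Set.range (fpar (F := F) k) := by
  rintro ⟨z, hz⟩
  rw [fpar] at hz
  split_ifs at hz with h1
  · obtain ⟨c, hc, e1, e2, e3⟩ := pt_eq_elim hz
    simp at e3
  · obtain ⟨c, hc, e1, e2, e3⟩ := pt_eq_elim hz
    simp at e2

lemma Cq_eq (hch : (2:F) = 0) {k : F} (hk0 : k ≠ 0) (hk1 : k ≠ 1) :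
    Cq k = insert (pt 1 0 0 (vec_ne_zero 0 (by norm_num))) (Set.range (fpar (F := F) k)) := by
  ext P
  constructor
  · intro hP
    have hE : k * P.rep 0 * P.rep 1 + P.rep 2 ^ 2 + P.rep 1 * P.rep 2 + P.rep 0 * P.rep 2 = 0 := hP
    set x := P.rep 0 with hx
    set y := P.rep 1 with hy
    set z := P.rep 2 with hz
    have hPr : pt x y z (rep_vec_ne P) = P := pt_rep P _
    by_cases hy0 : y = 0
    · by_cases hz0 : z = 0
      · have hx0 : x ≠ 0 := by
          intro hx0
          exact rep_vec_ne P (by rw [← hx, ← hy, ← hz, hx0, hy0, hz0]; funext i; fin_cases i <;> simp)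
        left
        rw [← hPr]
        exact pt_eq_of_coords x hx0 _ _ (by ring) (by rw [hy0]; ring) (by rw [hz0]; ring)
      · have hxz : x = z := by
          have h2 : z * (z + x) = 0 := by
            rw [hy0] at hE; linear_combination hE
          rcases mul_eq_zero.1 h2 with h' | h'
          · exact absurd h' hz0
          · linear_combination h' - z * hch
        right
        refine ⟨k, ?_⟩
        rw [fpar, if_pos rfl, ← hPr]
        exact (pt_eq_of_coords z hz0 _ _ (by rw [hxz]; ring) (by rw [hy0]; ring) (by ring)).symm
    · -- y ≠ 0
      right
      set Z := z / y with hZ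
      have hZk : Z ≠ k := by
        intro hzk
        have hzyk : z = y * k := by
          rw [← hzk, hZ]; field_simp
        have : y ^ 2 * (k ^ 2 + k) = 0 := by
          rw [hzyk] at hE
          linear_combination hE - (k * x * y) * hch
        have hkk : k ^ 2 + k ≠ 0 := by
          intro h'
          rcases mul_eq_zero.1 (show k * (k + 1) = 0 by linear_combination h') with h'' | h''
          · exact hk0 h''
          · exact hk1 (by linear_combination h'' - hch)
        rcases mul_eq_zero.1 this with h' | h'
        · exact hy0 (by rcases mul_eq_zero.1 (show y * y = 0 by linear_combination h') with h | h <;> exact h)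
        · exact hkk h'
      refine ⟨Z, ?_⟩
      rw [fpar, if_neg hZk, ← hPr]
      have hZky := add_ne_zero_of_ne hch hZk
      have hden : z + k * y ≠ 0 := by
        have h' := mul_ne_zero hy0 hZky
        intro h0
        apply h'
        rw [hZ]
        field_simp
        linear_combination h0
      refine (pt_eq_of_coords y hy0 _ _ ?_ (by ring) (by rw [hZ]; field_simp)).symm
      set X := (Z ^ 2 + Z) / (Z + k) with hXdef
      have hX : X * (Z + k) = Z ^ 2 + Z := div_mul_cancel₀ _ hZky
      have hX2 : X * ((z + k * y) * y) = z ^ 2 + z * y := by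
        have h1 : (z + k * y) * y = (Z + k) * y ^ 2 := by rw [hZ]; field_simp
        have h2 : (Z ^ 2 + Z) * y ^ 2 = z ^ 2 + z * y := by rw [hZ]; field_simp
        calc X * ((z + k * y) * y) = X * (Z + k) * y ^ 2 := by rw [h1]; ring
        _ = (Z ^ 2 + Z) * y ^ 2 := by rw [hX]
        _ = z ^ 2 + z * y := h2
      have goal' : (z + k * y) * x = (z + k * y) * (y * X) := by
        linear_combination hE + hX2 - ((z + k * y) * y * X) * hch
      exact mul_left_cancel₀ hden goal'
  · intro h
    rcases h with h | ⟨z, rfl⟩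
    · rw [h, mem_Cq]; ring
    · exact fpar_mem hch z

end Untch

namespace Untch
variable {F : Type} [Field F]


lemma finite_PG2 [Fintype F] : Finite (PG2 F) := by
  unfold PG2 Projectivization
  infer_instance

lemma card_Cq [Fintype F] (hch : (2:F) = 0) {k : F} (hk0 : k ≠ 0) (hk1 : k ≠ 1) :
    (Cq k).ncard = Fintype.card F + 1 := by
  haveI := finite_PG2 (F := F)
  rw [Cq_eq hch hk0 hk1]
  rw [Set.ncard_insert_of_notMem (pt100_notmem_range k) (Set.toFinite _)]
  have : (Set.range (fpar (F := F) k)).ncard = Fintype.card F := by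
    rw [← Nat.card_coe_set_eq, Nat.card_range_of_injective fpar_injective,
      Nat.card_eq_fintype_card]
  rw [this]

lemma inter_eq (hch : (2:F) = 0) {a : F} (ha0 : a ≠ 0) (ha1 : a ≠ 1) :
    Cq a ∩ Cq (a ^ 2) =
      {pt 1 0 0 (vec_ne_zero 0 (by norm_num)), pt 1 0 1 (vec_ne_zero 0 (by norm_num)),
       pt 0 1 0 (vec_ne_zero 1 (by norm_num)), pt 0 1 1 (vec_ne_zero 1 (by norm_num))} := by
  ext P
  constructor
  · rintro ⟨h1, h2⟩
    have hE1 : a * P.rep 0 * P.rep 1 + P.rep 2 ^ 2 + P.rep 1 * P.rep 2 + P.rep 0 * P.rep 2 = 0 := h1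
    have hE2 : a ^ 2 * P.rep 0 * P.rep 1 + P.rep 2 ^ 2 + P.rep 1 * P.rep 2 + P.rep 0 * P.rep 2 = 0 := h2
    set x := P.rep 0 with hxd
    set y := P.rep 1 with hyd
    set z := P.rep 2 with hzd
    have hPr : pt x y z (rep_vec_ne P) = P := pt_rep P _
    have hane : a - a ^ 2 ≠ 0 := by
      intro h
      rcases mul_eq_zero.1 (show a * (1 - a) = 0 by linear_combination h) with h' | h'
      · exact ha0 h'
      · exact ha1 (by linear_combination -h')
    have hxy : x * y = 0 := by
      have : (a - a ^ 2) * (x * y) = 0 := by linear_combination hE1 - hE2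
      rcases mul_eq_zero.1 this with h' | h'
      · exact absurd h' hane
      · exact h'
    simp only [Set.mem_insert_iff, Set.mem_singleton_iff]
    rcases mul_eq_zero.1 hxy with hx0 | hy0
    · -- x = 0 : z(z+y) = 0
      have hzz : z * (z + y) = 0 := by rw [hx0] at hE1; linear_combination hE1
      rcases mul_eq_zero.1 hzz with hz0 | hzy
      · -- P = (0:y:0)
        have hy0 : y ≠ 0 := by
          intro hy0
          exact rep_vec_ne P (by rw [← hxd, ← hyd, ← hzd, hx0, hy0, hz0]; funext i; fin_cases i <;> simp)
        right; right; left
        rw [← hPr]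
        exact pt_eq_of_coords y hy0 _ _ (by rw [hx0]; ring) (by ring) (by rw [hz0]; ring)
      · -- z = y ≠ 0 (z + y = 0)
        have hzy' : y = z := by linear_combination hzy - z * hch
        by_cases hz0 : z = 0
        · -- then y = 0 and x = 0 : impossible
          exfalso
          exact rep_vec_ne P (by rw [← hxd, ← hyd, ← hzd, hx0, hzy', hz0]; funext i; fin_cases i <;> simp)
        · right; right; right
          rw [← hPr]
          exact pt_eq_of_coords z hz0 _ _ (by rw [hx0]; ring) (by rw [hzy']; ring) (by ring)
    · -- y = 0 : z(z+x) = 0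
      have hzz : z * (z + x) = 0 := by rw [hy0] at hE1; linear_combination hE1
      rcases mul_eq_zero.1 hzz with hz0 | hzx
      · have hx0 : x ≠ 0 := by
          intro hx0
          exact rep_vec_ne P (by rw [← hxd, ← hyd, ← hzd, hx0, hy0, hz0]; funext i; fin_cases i <;> simp)
        left
        rw [← hPr]
        exact pt_eq_of_coords x hx0 _ _ (by ring) (by rw [hy0]; ring) (by rw [hz0]; ring)
      · have hzx' : x = z := by linear_combination hzx - z * hch
        by_cases hz0 : z = 0
        · exfalso
          exact rep_vec_ne P (by rw [← hxd, ← hyd, ← hzd, hzx', hy0, hz0]; funext i; fin_cases i <;> simp)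
        · right; left
          rw [← hPr]
          exact pt_eq_of_coords z hz0 _ _ (by rw [hzx']; ring) (by rw [hy0]; ring) (by ring)
  · intro h
    simp only [Set.mem_insert_iff, Set.mem_singleton_iff] at h
    rcases h with h | h | h | h <;> rw [h] <;>
      refine ⟨?_, ?_⟩ <;> rw [mem_Cq] <;> first
        | ring1
        | linear_combination hch

lemma pt100_ne_pt101 : (pt 1 0 0 (vec_ne_zero 0 (by norm_num)) : PG2 F) ≠
    pt 1 0 1 (vec_ne_zero 0 (by norm_num)) := by
  intro e
  obtain ⟨c, hc, e1, e2, e3⟩ := pt_eq_elim e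
  simp at e1 e3
  rw [e3] at e1; simp at e1

lemma ptx_ne_pty {x z x' z' : F} {h h'} :
    (pt x 0 z h : PG2 F) ≠ pt x' 1 z' h' := by
  intro e
  obtain ⟨c, hc, e1, e2, e3⟩ := pt_eq_elim e
  simp at e2; exact absurd e2 hc

lemma pt010_ne_pt011 : (pt 0 1 0 (vec_ne_zero 1 (by norm_num)) : PG2 F) ≠
    pt 0 1 1 (vec_ne_zero 1 (by norm_num)) := by
  intro e
  obtain ⟨c, hc, e1, e2, e3⟩ := pt_eq_elim e
  simp at e2 e3
  rw [e2] at e3; simp at e3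

lemma inter_ncard [Fintype F] (hch : (2:F) = 0) {a : F} (ha0 : a ≠ 0) (ha1 : a ≠ 1) :
    (Cq a ∩ Cq (a ^ 2)).ncard = 4 := by
  haveI := finite_PG2 (F := F)
  rw [inter_eq hch ha0 ha1]
  rw [Set.ncard_insert_of_notMem (by
      simp only [Set.mem_insert_iff, Set.mem_singleton_iff]
      push_neg
      exact ⟨pt100_ne_pt101, ptx_ne_pty, ptx_ne_pty⟩) (Set.toFinite _),
    Set.ncard_insert_of_notMem (by
      simp only [Set.mem_insert_iff, Set.mem_singleton_iff]
      push_neg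
      exact ⟨ptx_ne_pty, ptx_ne_pty⟩) (Set.toFinite _),
    Set.ncard_insert_of_notMem (by
      simp only [Set.mem_singleton_iff]
      exact pt010_ne_pt011) (Set.toFinite _),
    Set.ncard_singleton]

end Untch

namespace Untch
variable {F : Type} [Field F]

lemma second_point (hch : (2:F) = 0) {k : F} (hk0 : k ≠ 0) (hk1 : k ≠ 1)
    (l P₀ : PG2 F) (hP₀ : P₀ ∈ Cq k) (hinc : inc l P₀) :
    inc l (pt 1 1 k (vec_ne_zero 0 (by norm_num))) ∨ ∃ P₁ ∈ Cq k, inc l P₁ ∧ P₁ ≠ P₀ := by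
  set u0 := l.rep 0 with hu0d
  set u1 := l.rep 1 with hu1d
  set u2 := l.rep 2 with hu2d
  by_cases hB : u0 + u1 + u2 * k = 0
  · left
    rw [inc_pt]
    linear_combination hB
  right
  rw [Cq_eq hch hk0 hk1] at hP₀
  rcases Set.mem_insert_iff.1 hP₀ with h0 | ⟨z₀, hz₀⟩
  · -- P₀ = (1:0:0)
    rw [h0] at hinc ⊢
    rw [inc_pt] at hinc
    have hu0 : u0 = 0 := by linear_combination hinc
    by_cases hu2 : u2 = 0
    · refine ⟨pt 1 0 1 (vec_ne_zero 0 (by norm_num)), ?_, ?_, pt100_ne_pt101.symm⟩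
      · rw [mem_Cq]; linear_combination hch
      · rw [inc_pt]; linear_combination hu0 + hu2
    · set z₁ := u1 / u2 with hz₁d
      have hz₁k : z₁ ≠ k := by
        intro h
        rw [hz₁d, div_eq_iff hu2] at h
        exact hB (by linear_combination hu0 + h + k * u2 * hch)
      have hD := add_ne_zero_of_ne hch hz₁k
      refine ⟨pt ((z₁ ^ 2 + z₁) / (z₁ + k)) 1 z₁ (vec_ne_zero 1 (by norm_num)), ?_, ?_, ptx_ne_pty.symm⟩
      · rw [mem_Cq]
        have hX : (z₁ ^ 2 + z₁) / (z₁ + k) * (z₁ + k) = z₁ ^ 2 + z₁ := div_mul_cancel₀ _ hD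
        linear_combination hX + (z₁ ^ 2 + z₁) * hch
      · rw [inc_pt]
        have h2 : u2 * (u1 / u2) = u1 := by field_simp
        linear_combination ((z₁ ^ 2 + z₁) / (z₁ + k)) * hu0 + h2 + u1 * hch
  · -- P₀ = fpar k z₀
    by_cases hz₀k : z₀ = k
    · -- P₀ = (1:0:1)
      have h0 : pt 1 0 1 (vec_ne_zero 0 (by norm_num)) = P₀ := by
        rw [← hz₀, hz₀k, fpar, if_pos rfl]
      rw [← h0] at hinc ⊢
      rw [inc_pt] at hinc
      by_cases hu0 : u0 = 0
      · have hu2 : u2 = 0 := by linear_combination hinc - hu0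
        refine ⟨pt 1 0 0 (vec_ne_zero 0 (by norm_num)), ?_, ?_, pt100_ne_pt101⟩
        · rw [mem_Cq]; ring
        · rw [inc_pt]; linear_combination hu0
      · have hu2 : u2 = u0 := by linear_combination hinc - u0 * hch
        set z₁ := u1 * k / (u0 + u1 + u2 * k) with hz₁d
        have hz₁k : z₁ ≠ k := by
          intro h
          rw [hz₁d, div_eq_iff hB] at h
          have h3 : k * (u0 + u2 * k) = 0 := by linear_combination -h
          have h4 : u0 + u2 * k = 0 := by
            rcases mul_eq_zero.1 h3 with h' | h'
            · exact absurd h' hk0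
            · exact h'
          have h5 : u0 * (1 + k) = 0 := by linear_combination h4 - k * hu2
          rcases mul_eq_zero.1 h5 with h' | h'
          · exact hu0 h'
          · exact hk1 (by linear_combination h' - hch)
        have hD := add_ne_zero_of_ne hch hz₁k
        refine ⟨pt ((z₁ ^ 2 + z₁) / (z₁ + k)) 1 z₁ (vec_ne_zero 1 (by norm_num)), ?_, ?_, ptx_ne_pty.symm⟩
        · rw [mem_Cq]
          have hX : (z₁ ^ 2 + z₁) / (z₁ + k) * (z₁ + k) = z₁ ^ 2 + z₁ := div_mul_cancel₀ _ hD
          linear_combination hX + (z₁ ^ 2 + z₁) * hch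
        · rw [inc_pt]
          have hX : (z₁ ^ 2 + z₁) / (z₁ + k) * (z₁ + k) = z₁ ^ 2 + z₁ := div_mul_cancel₀ _ hD
          have hz₁B : z₁ * (u0 + u1 + u2 * k) = u1 * k := by
            rw [hz₁d, div_mul_cancel₀ _ hB]
          have hsuff : (u0 * ((z₁ ^ 2 + z₁) / (z₁ + k)) + u1 * 1 + u2 * z₁) * (z₁ + k) = 0 := by
            linear_combination u0 * hX + z₁ ^ 2 * hu2 + hz₁B + u1 * k * hch + u0 * z₁ ^ 2 * hch
          rcases mul_eq_zero.1 hsuff with h' | h'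
          · exact h'
          · exact absurd h' hD
    · -- P₀ = ((z₀²+z₀)/(z₀+k) : 1 : z₀)
      have hD0 := add_ne_zero_of_ne hch hz₀k
      have h0 : pt ((z₀ ^ 2 + z₀) / (z₀ + k)) 1 z₀ (vec_ne_zero 1 (by norm_num)) = P₀ := by
        rw [← hz₀, fpar, if_neg hz₀k]
      rw [← h0] at hinc ⊢
      rw [inc_pt] at hinc
      have hX₀ : (z₀ ^ 2 + z₀) / (z₀ + k) * (z₀ + k) = z₀ ^ 2 + z₀ := div_mul_cancel₀ _ hD0
      have hroot0 : (u0 + u2) * z₀ ^ 2 + (u0 + u1 + u2 * k) * z₀ + u1 * k = 0 := by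
        linear_combination (z₀ + k) * hinc - u0 * hX₀
      by_cases hA : u0 + u2 = 0
      · refine ⟨pt 1 0 1 (vec_ne_zero 0 (by norm_num)), ?_, ?_, ptx_ne_pty⟩
        · rw [mem_Cq]; linear_combination hch
        · rw [inc_pt]; linear_combination hA
      · set s := (u0 + u1 + u2 * k) / (u0 + u2) with hsd
        have hs : s * (u0 + u2) = u0 + u1 + u2 * k := div_mul_cancel₀ _ hA
        set z₁ := z₀ + s with hz₁d
        have hz₁z₀ : z₁ ≠ z₀ := by
          intro h
          have hs0 : s = 0 := by linear_combination h
          rw [hsd] at hs0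
          exact hB ((div_eq_zero_iff.1 hs0).resolve_right hA)
        have hroot1 : (u0 + u2) * z₁ ^ 2 + (u0 + u1 + u2 * k) * z₁ + u1 * k = 0 := by
          rw [hz₁d]
          linear_combination hroot0 + s * hs + ((u0 + u2) * z₀ * s + (u0 + u1 + u2 * k) * s) * hch
        by_cases hz₁k : z₁ = k
        · -- degenerate : u0 = 0, second point (1:0:0)
          rw [hz₁k] at hroot1
          have h1 : k * ((u0 + u2) * k + (u0 + u1 + u2 * k) + u1) = 0 := by
            linear_combination hroot1
          have h2 : (u0 + u2) * k + (u0 + u1 + u2 * k) + u1 = 0 := by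
            rcases mul_eq_zero.1 h1 with h' | h'
            · exact absurd h' hk0
            · exact h'
          have h3 : u0 * (k + 1) = 0 := by linear_combination h2 - (u2 * k + u1) * hch
          have hu0 : u0 = 0 := by
            rcases mul_eq_zero.1 h3 with h' | h'
            · exact h'
            · exact absurd (show k = 1 by linear_combination h' - hch) hk1
          refine ⟨pt 1 0 0 (vec_ne_zero 0 (by norm_num)), ?_, ?_, ptx_ne_pty⟩
          · rw [mem_Cq]; ring
          · rw [inc_pt]; linear_combination hu0
        · have hD1 := add_ne_zero_of_ne hch hz₁k
          have hX₁ : (z₁ ^ 2 + z₁) / (z₁ + k) * (z₁ + k) = z₁ ^ 2 + z₁ := div_mul_cancel₀ _ hD1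
          refine ⟨pt ((z₁ ^ 2 + z₁) / (z₁ + k)) 1 z₁ (vec_ne_zero 1 (by norm_num)), ?_, ?_, ?_⟩
          · rw [mem_Cq]
            linear_combination hX₁ + (z₁ ^ 2 + z₁) * hch
          · rw [inc_pt]
            have hsuff : (u0 * ((z₁ ^ 2 + z₁) / (z₁ + k)) + u1 * 1 + u2 * z₁) * (z₁ + k) = 0 := by
              linear_combination u0 * hX₁ + hroot1
            rcases mul_eq_zero.1 hsuff with h' | h'
            · exact h'
            · exact absurd h' hD1
          · intro e
            obtain ⟨c, hc, e1, e2, e3⟩ := pt_eq_elim e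
            rw [mul_one] at e2
            rw [e2, one_mul] at e3
            exact hz₁z₀ e3.symm
end Untch

namespace Untch
variable {F : Type} [Field F]

lemma nucA_mem (hch : (2:F) = 0) {a : F} :
    pt 1 1 a (vec_ne_zero 0 (by norm_num)) ∈ Cq (a ^ 2) := by
  rw [mem_Cq]; linear_combination (a ^ 2 + a) * hch

lemma nucA_notmem (hch : (2:F) = 0) {a : F} (haa : a ^ 2 + a + 1 = 0) :
    pt 1 1 a (vec_ne_zero 0 (by norm_num)) ∉ Cq a := by
  intro h
  rw [mem_Cq] at h
  exact one_ne_zero (show (1:F) = 0 by linear_combination haa - h + a * hch)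

lemma nucA2_mem (hch : (2:F) = 0) {a : F} (ha3 : a ^ 3 = 1) :
    pt 1 1 (a ^ 2) (vec_ne_zero 0 (by norm_num)) ∈ Cq a := by
  rw [mem_Cq]; linear_combination a * ha3 + (a ^ 2 + a) * hch

lemma nucA2_notmem (hch : (2:F) = 0) {a : F} (ha3 : a ^ 3 = 1) (haa : a ^ 2 + a + 1 = 0) :
    pt 1 1 (a ^ 2) (vec_ne_zero 0 (by norm_num)) ∉ Cq (a ^ 2) := by
  intro h
  rw [mem_Cq] at h
  exact one_ne_zero (show (1:F) = 0 by linear_combination haa + h - a * ha3 - (2 * a ^ 2 + a) * hch)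

end Untch


open Untch in
/-- In `PG(2,q)` with `q` an even power of `2`, if `a` is a primitive cube root of unity, then
`C_a ∪ C_(a²)` is an untouchable set of size `2q − 2`. -/
theorem untouchable_two_q_minus_two {F : Type} [Field F] [Fintype F] {q : ℕ}
    (hq : Fintype.card F = q) (hq4 : ∃ m : ℕ, q = 4 ^ m)
    (a : F) (ha1 : a ≠ 1) (ha3 : a ^ 3 = 1) :
    Untouchable (Cq a ∪ Cq (a ^ 2)) ∧ (Cq a ∪ Cq (a ^ 2)).ncard = 2 * q - 2 := by
  -- characteristic 2
  obtain ⟨m, hm⟩ := hq4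
  have hq2 : 1 < q := hq ▸ Fintype.one_lt_card
  haveI : CharP F (ringChar F) := ringChar.charP F
  obtain ⟨n, hp, hcard⟩ := FiniteField.card F (ringChar F)
  have h2m : ringChar F ^ (n : ℕ) = 2 ^ (2 * m) := by
    rw [← hcard, hq, hm, pow_mul]; norm_num
  have hdvd : ringChar F ∣ 2 := by
    refine hp.dvd_of_dvd_pow (n := 2 * m) ?_
    rw [← h2m]
    exact dvd_pow_self _ n.ne_zero
  have hp2 : ringChar F = 2 := (Nat.prime_dvd_prime_iff_eq hp Nat.prime_two).1 hdvd
  haveI hC2 : CharP F 2 := hp2 ▸ (inferInstance : CharP F (ringChar F))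
  have hch : (2:F) = 0 := by exact_mod_cast CharP.cast_eq_zero F 2
  -- basic facts about a
  have ha0 : a ≠ 0 := by
    intro h
    rw [h] at ha3
    simp at ha3
  have ha20 : a ^ 2 ≠ 0 := pow_ne_zero _ ha0
  have ha21 : a ^ 2 ≠ 1 := by
    intro h
    apply ha1
    have : a ^ 3 = a * a ^ 2 := by ring
    rw [this, h, mul_one] at ha3
    exact ha3
  have haa : a ^ 2 + a + 1 = 0 := by
    rcases mul_eq_zero.1 (show (a - 1) * (a ^ 2 + a + 1) = 0 by linear_combination ha3) with h' | h'
    · exact absurd (by linear_combination h' : a = 1) ha1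
    · exact h'
  haveI := finite_PG2 (F := F)
  constructor
  · -- untouchable
    intro l hl
    obtain ⟨P₀, hset⟩ := Set.ncard_eq_one.1 hl
    have hm0 : P₀ ∈ {P ∈ Cq a ∪ Cq (a ^ 2) | inc l P} := by
      rw [hset]; exact rfl
    obtain ⟨hS, hincl⟩ := hm0
    have huniq : ∀ P, P ∈ Cq a ∪ Cq (a ^ 2) → inc l P → P = P₀ := by
      intro P h1 h2
      have : P ∈ {P ∈ Cq a ∪ Cq (a ^ 2) | inc l P} := ⟨h1, h2⟩
      rw [hset] at this
      exact this
    rcases hS with hCa | hCa2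
    · rcases second_point hch ha0 ha1 l P₀ hCa hincl with hN | ⟨P₁, hm1, hi1, hne1⟩
      · have hEq := huniq _ (Or.inr (nucA_mem hch)) hN
        rw [← hEq] at hCa
        exact nucA_notmem hch haa hCa
      · exact hne1 (huniq P₁ (Or.inl hm1) hi1)
    · rcases second_point hch ha20 ha21 l P₀ hCa2 hincl with hN | ⟨P₁, hm1, hi1, hne1⟩
      · have hEq := huniq _ (Or.inl (nucA2_mem hch ha3)) hN
        rw [← hEq] at hCa2
        exact nucA2_notmem hch ha3 haa hCa2
      · exact hne1 (huniq P₁ (Or.inr hm1) hi1)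
  · -- cardinality
    have hCaN : (Cq a).ncard = q + 1 := by rw [card_Cq hch ha0 ha1, hq]
    have hCa2N : (Cq (a ^ 2)).ncard = q + 1 := by rw [card_Cq hch ha20 ha21, hq]
    have hIN := inter_ncard hch ha0 ha1
    have hkey := Set.ncard_union_add_ncard_inter (Cq a) (Cq (a ^ 2)) (Set.toFinite _) (Set.toFinite _)
    rw [hCaN, hCa2N, hIN] at hkey
    omega
end

section
/- In PG(2,q) with q even and k ≠ 0, the conic D_k = V(kxy + z² + xz) is nondegenerate with nucleus (0 : 1 : k), and for distinct nonzero a, b ∈ GF(q), the conics D_a and D_b intersect exactly in the three points (1:0:0), (0:1:0), (1:0:1). -/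
/-- The conic `D_k = V(kxy + z² + xz)`. -/
def Dk {F : Type} [Field F] (k : F) : Set (PG2 F) :=
  {P | k * P.rep 0 * P.rep 1 + P.rep 2 ^ 2 + P.rep 0 * P.rep 2 = 0}

section Helpers

variable {F : Type} [Field F]

lemma rep_eq_vec (P : PG2 F) : P.rep = ![P.rep 0, P.rep 1, P.rep 2] := by
  funext i; fin_cases i <;> rfl

lemma rep_vec_ne (P : PG2 F) : (![P.rep 0, P.rep 1, P.rep 2] : Fin 3 → F) ≠ 0 := by
  rw [← rep_eq_vec]; exact P.rep_nonzero

lemma P_eq_pt (P : PG2 F) : P = pt (P.rep 0) (P.rep 1) (P.rep 2) (rep_vec_ne P) := by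
  conv_lhs => rw [← P.mk_rep]
  unfold pt
  rw [Projectivization.mk_eq_mk_iff]
  exact ⟨1, by simp [← rep_eq_vec]⟩

lemma exists_smul_pt_rep (x y z : F) (h : ![x, y, z] ≠ 0) :
    ∃ a : Fˣ, (pt x y z h).rep 0 = a * x ∧ (pt x y z h).rep 1 = a * y ∧
      (pt x y z h).rep 2 = a * z := by
  have h1 : Projectivization.mk F (pt x y z h).rep (Projectivization.rep_nonzero _)
      = Projectivization.mk F ![x, y, z] h := by
    rw [Projectivization.mk_rep]; rfl
  rw [Projectivization.mk_eq_mk_iff] at h1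
  obtain ⟨a, ha⟩ := h1
  refine ⟨a, ?_, ?_, ?_⟩ <;> rw [← ha] <;> simp [Units.smul_def]

lemma mem_Dk_iff {k x y z : F} (h : ![x, y, z] ≠ 0) :
    pt x y z h ∈ Dk k ↔ k * x * y + z ^ 2 + x * z = 0 := by
  obtain ⟨a, h0, h1, h2⟩ := exists_smul_pt_rep x y z h
  simp only [Dk, Set.mem_setOf_eq, h0, h1, h2]
  have key : k * ((a : F) * x) * (a * y) + ((a : F) * z) ^ 2 + ((a : F) * x) * ((a : F) * z)
      = (a : F) ^ 2 * (k * x * y + z ^ 2 + x * z) := by ring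
  rw [key, mul_eq_zero]
  simp [pow_eq_zero_iff, a.ne_zero]

lemma inc_pt_iff (l : PG2 F) {x y z : F} (h : ![x, y, z] ≠ 0) :
    inc l (pt x y z h) ↔ l.rep 0 * x + l.rep 1 * y + l.rep 2 * z = 0 := by
  obtain ⟨a, h0, h1, h2⟩ := exists_smul_pt_rep x y z h
  simp only [inc, h0, h1, h2]
  have key : l.rep 0 * ((a : F) * x) + l.rep 1 * ((a : F) * y) + l.rep 2 * ((a : F) * z)
      = (a : F) * (l.rep 0 * x + l.rep 1 * y + l.rep 2 * z) := by ring
  rw [key, mul_eq_zero]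
  simp [a.ne_zero]

lemma pt_congr {x y z x' y' z' : F} (hx : x = x') (hy : y = y') (hz : z = z')
    (h : ![x, y, z] ≠ 0) (h' : ![x', y', z'] ≠ 0) : pt x y z h = pt x' y' z' h' := by
  subst hx; subst hy; subst hz; rfl

lemma pt_smul {c x y z : F} (hc : c ≠ 0) (h : ![x, y, z] ≠ 0) (h' : ![c * x, c * y, c * z] ≠ 0) :
    pt (c * x) (c * y) (c * z) h' = pt x y z h := by
  unfold pt
  rw [Projectivization.mk_eq_mk_iff]
  exact ⟨Units.mk0 c hc, by funext i; fin_cases i <;> simp [Units.smul_def]⟩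

lemma eq_pt_of_rep {x y z : F} (P : PG2 F) (h : ![x, y, z] ≠ 0) {c : F} (hc : c ≠ 0)
    (h0 : P.rep 0 = c * x) (h1 : P.rep 1 = c * y) (h2 : P.rep 2 = c * z) :
    P = pt x y z h := by
  conv_lhs => rw [← P.mk_rep]
  unfold pt
  rw [Projectivization.mk_eq_mk_iff]
  refine ⟨Units.mk0 c hc, ?_⟩
  funext i
  fin_cases i <;> simp [Units.smul_def, h0, h1, h2]

lemma pt1_eq_iff {y z y' z' : F} (h : ![(1 : F), y, z] ≠ 0) (h' : ![(1 : F), y', z'] ≠ 0) :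
    pt 1 y z h = pt 1 y' z' h' ↔ y = y' ∧ z = z' := by
  unfold pt
  rw [Projectivization.mk_eq_mk_iff]
  constructor
  · rintro ⟨a, ha⟩
    have h0 := congrFun ha 0
    have h1 := congrFun ha 1
    have h2 := congrFun ha 2
    simp [Units.smul_def] at h0 h1 h2
    rw [h0] at h1 h2
    simp at h1 h2
    exact ⟨h1.symm, h2.symm⟩
  · rintro ⟨rfl, rfl⟩
    exact ⟨1, by simp⟩

lemma pt010_ne_pt1 {y z : F} (h : ![(0 : F), 1, 0] ≠ 0) (h' : ![(1 : F), y, z] ≠ 0) :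
    pt 0 1 0 h ≠ pt 1 y z h' := by
  unfold pt
  rw [Ne, Projectivization.mk_eq_mk_iff]
  rintro ⟨a, ha⟩
  have h0 := congrFun ha 0
  simp [Units.smul_def] at h0

/-- Parametrization of the conic `Dk k`. -/
noncomputable def fparam (k : F) : Option F → PG2 F
  | none => pt 0 1 0 (vec_ne_zero 1 (by simp))
  | some z => pt 1 ((z ^ 2 + z) / k) z (vec_ne_zero 0 (by simp))

lemma fparam_inj (k : F) : Function.Injective (fparam k) := by
  intro o o' h
  match o, o' with
  | none, none => rfl
  | none, some z => exact absurd h (pt010_ne_pt1 _ _)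
  | some z, none => exact absurd h.symm (pt010_ne_pt1 _ _)
  | some z, some z' =>
      have := ((pt1_eq_iff _ _).1 h).2
      rw [this]

lemma sq_inj [Fintype F] [CharP F 2] : Function.Injective (fun z : F => z ^ 2) := by
  intro a b hab
  simp only at hab
  have h1 : (a + b) ^ 2 = 0 := by rw [CharTwo.add_sq, hab]; exact CharTwo.add_self_eq_zero _
  have h2 : a + b = 0 := by
    exact pow_eq_zero_iff (n := 2) (by norm_num) |>.1 h1
  have h3 : a = -b := eq_neg_of_add_eq_zero_left h2
  rwa [CharTwo.neg_eq] at h3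

lemma sq_surj [Fintype F] [CharP F 2] (c : F) : ∃ z : F, z ^ 2 = c :=
  Finite.injective_iff_surjective.mp sq_inj c

lemma Dk_eq_range [CharP F 2] {k : F} (hk : k ≠ 0) : Dk k = Set.range (fparam k) := by
  have h2 : (2 : F) = 0 := CharTwo.two_eq_zero
  ext P
  constructor
  · intro hP
    have hP' : k * P.rep 0 * P.rep 1 + P.rep 2 ^ 2 + P.rep 0 * P.rep 2 = 0 := hP
    by_cases h0 : P.rep 0 = 0
    · -- the point (0:1:0)
      have hz : P.rep 2 = 0 := by
        have : P.rep 2 ^ 2 = 0 := by linear_combination hP' - P.rep 1 * k * h0 - P.rep 2 * h0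
        exact pow_eq_zero_iff (n := 2) (by norm_num) |>.1 this
      have h1 : P.rep 1 ≠ 0 := by
        intro h1
        exact rep_vec_ne P (by rw [h0, h1, hz]; funext i; fin_cases i <;> rfl)
      refine ⟨none, ?_⟩
      exact (eq_pt_of_rep P _ h1 (by rw [h0, mul_zero]) (by rw [mul_one])
        (by rw [hz, mul_zero])).symm
    · refine ⟨some (P.rep 2 / P.rep 0), ?_⟩
      have hy : P.rep 1 = P.rep 0 * ((((P.rep 2 / P.rep 0) ^ 2 + P.rep 2 / P.rep 0)) / k) := by
        field_simp
        linear_combination hP' - (P.rep 2 ^ 2 + P.rep 0 * P.rep 2) * h2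
      exact (eq_pt_of_rep P _ h0 (by rw [mul_one]) hy (by field_simp)).symm
  · rintro ⟨o, rfl⟩
    match o with
    | none =>
        show pt 0 1 0 _ ∈ Dk k
        rw [mem_Dk_iff]; ring
    | some z =>
        show pt 1 ((z ^ 2 + z) / k) z _ ∈ Dk k
        rw [mem_Dk_iff]
        field_simp
        linear_combination (z ^ 2 + z) * h2

lemma line_sets_eq [CharP F 2] {k : F} (hk : k ≠ 0) (l : PG2 F) :
    {P ∈ Dk k | inc l P} = fparam k '' {o | inc l (fparam k o)} := by
  ext P
  simp only [Set.mem_setOf_eq, Set.mem_image, Dk_eq_range hk, Set.mem_range]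
  constructor
  · rintro ⟨⟨o, rfl⟩, h⟩
    exact ⟨o, h, rfl⟩
  · rintro ⟨o, h, rfl⟩
    exact ⟨⟨o, rfl⟩, h⟩

lemma line_count [Fintype F] [CharP F 2] {k : F} (hk : k ≠ 0) (l : PG2 F) :
    {P ∈ Dk k | inc l P}.ncard ≤ 2 ∧
    ({P ∈ Dk k | inc l P}.ncard = 1 ↔ l.rep 1 + k * l.rep 2 = 0) := by
  have h2 : (2 : F) = 0 := CharTwo.two_eq_zero
  set l0 := l.rep 0 with hl0def
  set l1 := l.rep 1 with hl1def
  set l2 := l.rep 2 with hl2def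
  have hlnz : l0 ≠ 0 ∨ l1 ≠ 0 ∨ l2 ≠ 0 := by
    by_contra hcon
    push_neg at hcon
    exact rep_vec_ne l (by rw [← hl0def, ← hl1def, ← hl2def, hcon.1, hcon.2.1, hcon.2.2]
                           funext i; fin_cases i <;> rfl)
  rw [line_sets_eq hk l, Set.ncard_image_of_injective _ (fparam_inj k)]
  have hnone : (none ∈ {o : Option F | inc l (fparam k o)}) ↔ l1 = 0 := by
    show inc l (pt 0 1 0 _) ↔ _
    rw [inc_pt_iff]
    constructor
    · intro h; linear_combination h
    · intro h; linear_combination h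
  have hsome : ∀ z : F, (some z ∈ {o : Option F | inc l (fparam k o)}) ↔
      l1 * z ^ 2 + (l1 + k * l2) * z + k * l0 = 0 := by
    intro z
    show inc l (pt 1 ((z ^ 2 + z) / k) z _) ↔ _
    rw [inc_pt_iff]
    have key : l0 * 1 + l1 * ((z ^ 2 + z) / k) + l2 * z
        = (l1 * z ^ 2 + (l1 + k * l2) * z + k * l0) / k := by field_simp; ring
    rw [← hl0def, ← hl1def, ← hl2def, key, div_eq_zero_iff]
    simp [hk]
  by_cases hb : l1 + k * l2 = 0
  · -- tangent case: exactly one point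
    have hcount : {o : Option F | inc l (fparam k o)}.ncard = 1 := by
      by_cases h1 : l1 = 0
      · have hl2 : l2 = 0 := by
          have : k * l2 = 0 := by linear_combination hb - h1
          exact (mul_eq_zero.1 this).resolve_left hk
        have hl0 : l0 ≠ 0 := by
          rcases hlnz with h | h | h
          · exact h
          · exact absurd h1 h
          · exact absurd hl2 h
        have hset : {o : Option F | inc l (fparam k o)} = {none} := by
          ext o
          cases o with
          | none => simp [hnone, h1]
          | some z =>
              simp only [hsome, Set.mem_singleton_iff]
              constructor
              · intro h
                exfalso
                have : k * l0 = 0 := by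
                  linear_combination h - z ^ 2 * h1 - z * hb
                exact hl0 ((mul_eq_zero.1 this).resolve_left hk)
              · intro h; exact absurd h (by simp)
        rw [hset]; simp
      · -- l1 ≠ 0 : one solution z0 with l1 z0² = k l0
        obtain ⟨z0, hz0⟩ := sq_surj (F := F) (k * l0 / l1)
        have hz0' : l1 * z0 ^ 2 = k * l0 := by rw [hz0]; field_simp
        have hset : {o : Option F | inc l (fparam k o)} = {some z0} := by
          ext o
          cases o with
          | none => simp [hnone, h1]
          | some z =>
              simp only [hsome, Set.mem_singleton_iff, Option.some.injEq]
              constructor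
              · intro h
                apply sq_inj (F := F)
                show z ^ 2 = z0 ^ 2
                refine mul_left_cancel₀ h1 ?_
                linear_combination h - z * hb - hz0' - k * l0 * h2
              · rintro rfl
                linear_combination hz0' + z * hb + k * l0 * h2
        rw [hset]; simp
    exact ⟨by rw [hcount]; norm_num, by simp [hcount, hb]⟩
  · -- non-tangent: 0 or 2 points
    by_cases h1 : l1 = 0
    · -- l2 ≠ 0, two points: none and some (l0/l2)
      have hl2 : l2 ≠ 0 := by
        intro h
        exact hb (by rw [h1, h, mul_zero, add_zero])
      set z1 := l0 / l2 with hz1def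
      have hz1 : l2 * z1 = l0 := by rw [hz1def]; field_simp
      have hset : {o : Option F | inc l (fparam k o)} = {none, some z1} := by
        ext o
        cases o with
        | none => simp [hnone, h1]
        | some z =>
            simp only [hsome, Set.mem_insert_iff, Set.mem_singleton_iff, Option.some.injEq]
            constructor
            · intro h
              right
              have hA : k * (l2 * z + l0) = 0 := by
                linear_combination h - z ^ 2 * h1 - z * h1
              have hA' : l2 * z + l0 = 0 := (mul_eq_zero.1 hA).resolve_left hk
              refine mul_left_cancel₀ hl2 ?_
              linear_combination hA' - hz1 - l0 * h2
            · rintro (h | rfl)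
              · exact absurd h (by simp)
              · linear_combination (z1 ^ 2 + z1) * h1 + k * hz1 + k * l0 * h2
      rw [hset, Set.ncard_pair (by simp)]
      exact ⟨le_refl 2, by simp [hb]⟩
    · -- l1 ≠ 0, quadratic with nonzero linear term: 0 or 2 roots
      set B := l1 + k * l2 with hBdef
      by_cases hZ : {o : Option F | inc l (fparam k o)} = ∅
      · rw [hZ]
        simp [hb]
      · obtain ⟨o, ho⟩ := Set.nonempty_iff_ne_empty.2 hZ
        obtain ⟨z0, rfl⟩ : ∃ z0, o = some z0 := by
          cases o with
          | none => exact absurd (hnone.1 ho) h1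
          | some z => exact ⟨z, rfl⟩
        have hz0 : l1 * z0 ^ 2 + B * z0 + k * l0 = 0 := (hsome z0).1 ho
        set z1 := z0 + B / l1 with hz1def
        have hz1 : l1 * z1 = l1 * z0 + B := by rw [hz1def]; field_simp
        have hne : z0 ≠ z1 := by
          intro h
          apply hb
          show B = 0
          rw [h] at hz1
          linear_combination - hz1
        have hset : {o : Option F | inc l (fparam k o)} = {some z0, some z1} := by
          ext o
          cases o with
          | none => simp [hnone, h1]
          | some z =>
              simp only [hsome, Set.mem_insert_iff, Set.mem_singleton_iff, Option.some.injEq]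
              constructor
              · intro h
                have key : (z + z0) * (l1 * (z + z0) + B) = 0 := by
                  linear_combination h + hz0 + (l1 * z * z0 - k * l0) * h2
                rcases mul_eq_zero.1 key with h' | h'
                · left
                  have : z = -z0 := eq_neg_of_add_eq_zero_left h'
                  rwa [CharTwo.neg_eq] at this
                · right
                  refine mul_left_cancel₀ h1 ?_
                  linear_combination h' - hz1 - (l1 * z0 + B) * h2
              · rintro (rfl | rfl)
                · exact hz0
                · linear_combination hz0 + (z1 + z0) * hz1 + B * z1 * h2
        rw [hset, Set.ncard_pair (by simpa using hne)]
        exact ⟨le_refl 2, by simp [hb]⟩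

end Helpers

/-- In `PG(2,q)` with `q` even and `k ≠ 0`, the conic `D_k = V(kxy + z² + xz)` is
nondegenerate with nucleus `(0 : 1 : k)`, and two distinct such conics meet exactly in the
three points `(1:0:0), (0:1:0), (1:0:1)`. -/
theorem Dk_nucleus_and_intersection {F : Type} [Field F] [Fintype F] {q : ℕ}
    (hq : Fintype.card F = q) (heven : Even q) :
    (∀ k : F, k ≠ 0 → IsOval q (Dk k) ∧
      pt (0 : F) 1 k (vec_ne_zero 1 (by simp)) ∉ Dk k ∧
      ∀ l : PG2 F, IsTangent l (Dk k) →
        inc l (pt (0 : F) 1 k (vec_ne_zero 1 (by simp)))) ∧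
    ∀ a b : F, a ≠ 0 → b ≠ 0 → a ≠ b →
      Dk a ∩ Dk b = {pt (1 : F) 0 0 (vec_ne_zero 0 (by simp)), pt (0 : F) 1 0 (vec_ne_zero 1 (by simp)), pt (1 : F) 0 1 (vec_ne_zero 0 (by simp))} := by
  haveI hchar : CharP F 2 := by
    have hr : ringChar F = 2 := by
      rw [FiniteField.even_card_iff_char_two, hq]
      exact Nat.even_iff.1 heven
    rw [← hr]
    exact ringChar.charP F
  have h2 : (2 : F) = 0 := CharTwo.two_eq_zero
  constructor
  · intro k hk
    refine ⟨⟨?_, fun l => (line_count hk l).1⟩, ?_, ?_⟩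
    · -- cardinality q + 1
      rw [Dk_eq_range hk, ← Set.image_univ,
        Set.ncard_image_of_injective _ (fparam_inj k), Set.ncard_univ,
        Nat.card_eq_fintype_card, Fintype.card_option, hq]
    · -- nucleus not on conic
      rw [mem_Dk_iff]
      intro h
      apply hk
      have : k ^ 2 = 0 := by linear_combination h
      exact pow_eq_zero_iff (n := 2) (by norm_num) |>.1 this
    · -- tangent lines pass through the nucleus
      intro l hl
      have := ((line_count hk l).2).1 hl
      rw [inc_pt_iff]
      linear_combination this
  · intro a b ha hb hab
    ext P
    simp only [Set.mem_inter_iff, Set.mem_insert_iff, Set.mem_singleton_iff]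
    constructor
    · rintro ⟨hPa, hPb⟩
      have hPa' : a * P.rep 0 * P.rep 1 + P.rep 2 ^ 2 + P.rep 0 * P.rep 2 = 0 := hPa
      have hPb' : b * P.rep 0 * P.rep 1 + P.rep 2 ^ 2 + P.rep 0 * P.rep 2 = 0 := hPb
      have hab' : a + b ≠ 0 := by
        intro h
        apply hab
        have : a = -b := eq_neg_of_add_eq_zero_left h
        rwa [CharTwo.neg_eq] at this
      have hxy : P.rep 0 * P.rep 1 = 0 := by
        have : (a + b) * (P.rep 0 * P.rep 1) = 0 := by
          linear_combination hPa' + hPb' - (P.rep 2 ^ 2 + P.rep 0 * P.rep 2) * h2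
        exact (mul_eq_zero.1 this).resolve_left hab'
      rcases mul_eq_zero.1 hxy with h0 | h1
      · -- x = 0 : point (0:1:0)
        have hz : P.rep 2 = 0 := by
          have : P.rep 2 ^ 2 = 0 := by
            linear_combination hPa' - P.rep 1 * a * h0 - P.rep 2 * h0
          exact pow_eq_zero_iff (n := 2) (by norm_num) |>.1 this
        have h1 : P.rep 1 ≠ 0 := by
          intro h1
          exact rep_vec_ne P (by rw [h0, h1, hz]; funext i; fin_cases i <;> rfl)
        right; left
        exact eq_pt_of_rep P _ h1 (by rw [h0, mul_zero]) (by rw [mul_one]) (by rw [hz, mul_zero])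
      · -- y = 0
        have hzz : P.rep 2 * (P.rep 2 + P.rep 0) = 0 := by
          linear_combination hPa' - a * P.rep 0 * h1
        rcases mul_eq_zero.1 hzz with hz | hz
        · -- z = 0: point (1:0:0)
          have h0 : P.rep 0 ≠ 0 := by
            intro h0
            exact rep_vec_ne P (by rw [h0, h1, hz]; funext i; fin_cases i <;> rfl)
          left
          exact eq_pt_of_rep P _ h0 (by rw [mul_one]) (by rw [h1, mul_zero]) (by rw [hz, mul_zero])
        · -- z = x : point (1:0:1)
          have hzx : P.rep 2 = P.rep 0 := by
            have : P.rep 2 = -P.rep 0 := eq_neg_of_add_eq_zero_left hz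
            rwa [CharTwo.neg_eq] at this
          have h0 : P.rep 0 ≠ 0 := by
            intro h0
            exact rep_vec_ne P (by rw [h0, h1, hzx, h0]; funext i; fin_cases i <;> rfl)
          right; right
          exact eq_pt_of_rep P _ h0 (by rw [mul_one]) (by rw [h1, mul_zero]) (by rw [hzx, mul_one])
    · rintro (rfl | rfl | rfl)
      · constructor <;> (rw [mem_Dk_iff]; ring)
      · constructor <;> (rw [mem_Dk_iff]; ring)
      · constructor <;> (rw [mem_Dk_iff]; linear_combination h2)
end

section
/- In PG(2,q) with q ≥ 8 even, for distinct nonzero a, b ∈ GF(q), the set S = D_a ∪ D_b ∪ {(0:1:a), (0:1:b)} is an untouchable set of size 2q + 1, where D_k = V(kxy + z² + xz). -/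
namespace Helpers

variable {F : Type} [Field F]

instance pg2Finite (F : Type) [Field F] [Fintype F] : Finite (PG2 F) :=
  Finite.of_surjective (fun v : {v : Fin 3 → F // v ≠ 0} => Projectivization.mk F v.1 v.2)
    (fun P => ⟨⟨P.rep, P.rep_nonzero⟩, P.mk_rep⟩)

lemma rep_pt_eq {x y z : F} (h : ![x,y,z] ≠ 0) :
    ∃ c : F, c ≠ 0 ∧ (pt x y z h).rep 0 = c * x ∧ (pt x y z h).rep 1 = c * y ∧
      (pt x y z h).rep 2 = c * z := by
  obtain ⟨u, hu⟩ := Projectivization.exists_smul_eq_mk_rep F ![x,y,z] h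
  refine ⟨u, u.ne_zero, ?_, ?_, ?_⟩ <;>
  · rw [pt, ← hu]; simp [Units.smul_def]

lemma inc_pt (l : PG2 F) {x y z : F} (h : ![x,y,z] ≠ 0) :
    inc l (pt x y z h) ↔ l.rep 0 * x + l.rep 1 * y + l.rep 2 * z = 0 := by
  obtain ⟨c, hc, h0, h1, h2⟩ := rep_pt_eq h
  unfold inc
  rw [h0, h1, h2]
  constructor
  · intro hh
    have hfac : c * (l.rep 0 * x + l.rep 1 * y + l.rep 2 * z) = 0 := by linear_combination hh
    rcases mul_eq_zero.mp hfac with h' | h'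
    · exact absurd h' hc
    · exact h'
  · intro hh; linear_combination c * hh

lemma mem_Dk_pt (k : F) {x y z : F} (h : ![x,y,z] ≠ 0) :
    pt x y z h ∈ Dk k ↔ k * x * y + z ^ 2 + x * z = 0 := by
  obtain ⟨c, hc, h0, h1, h2⟩ := rep_pt_eq h
  show k * _ * _ + _ ^ 2 + _ * _ = 0 ↔ _
  rw [h0, h1, h2]
  constructor
  · intro hh
    have hfac : c^2 * (k * x * y + z ^ 2 + x * z) = 0 := by linear_combination hh
    rcases mul_eq_zero.mp hfac with h' | h'
    · exact absurd (pow_eq_zero_iff (by norm_num) |>.mp h') hc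
    · exact h'
  · intro hh; linear_combination c^2 * hh

lemma pt_eq_pt_iff {x y z x' y' z' : F} (h : ![x,y,z] ≠ 0) (h' : ![x',y',z'] ≠ 0) :
    pt x y z h = pt x' y' z' h' ↔ ∃ c : F, c ≠ 0 ∧ x = c * x' ∧ y = c * y' ∧ z = c * z' := by
  rw [pt, pt, Projectivization.mk_eq_mk_iff]
  constructor
  · rintro ⟨u, hu⟩
    refine ⟨u, u.ne_zero, ?_, ?_, ?_⟩
    · have := congrFun hu 0; simpa [Units.smul_def] using this.symm
    · have := congrFun hu 1; simpa [Units.smul_def] using this.symm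
    · have := congrFun hu 2; simpa [Units.smul_def] using this.symm
  · rintro ⟨c, hc, h1, h2, h3⟩
    refine ⟨Units.mk0 c hc, ?_⟩
    funext i
    fin_cases i <;> simp [Units.smul_def, h1, h2, h3]

lemma rep_vec_ne (P : PG2 F) : ![P.rep 0, P.rep 1, P.rep 2] ≠ 0 := by
  intro hz
  apply P.rep_nonzero
  funext i
  fin_cases i
  · simpa using congrFun hz 0
  · simpa using congrFun hz 1
  · simpa using congrFun hz 2

lemma pt_eta (P : PG2 F) (h : ![P.rep 0, P.rep 1, P.rep 2] ≠ 0) :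
    pt (P.rep 0) (P.rep 1) (P.rep 2) h = P := by
  have hv : ![P.rep 0, P.rep 1, P.rep 2] = P.rep := by
    funext i; fin_cases i <;> simp
  rw [pt]
  rw [show Projectivization.mk F ![P.rep 0, P.rep 1, P.rep 2] h
      = Projectivization.mk F P.rep P.rep_nonzero from by congr 1]
  exact P.mk_rep

/-- The point `(0:1:0)`. -/
noncomputable def P0 : PG2 F := pt 0 1 0 (vec_ne_zero 1 (by simp))

/-- The point `(k : z²+z : kz)` of `D_k`, i.e. `(1 : (z²+z)/k : z)` scaled by `k`. -/
noncomputable def Pk (k : F) (hk : k ≠ 0) (z : F) : PG2 F :=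
  pt k (z^2+z) (k*z) (vec_ne_zero 0 (by simpa using hk))

/-- The nucleus `(0:1:k)`. -/
noncomputable def Nk (k : F) : PG2 F := pt 0 1 k (vec_ne_zero 1 (by simp))

lemma P0_mem (k : F) : (P0 : PG2 F) ∈ Dk k := by
  rw [P0, mem_Dk_pt]; ring

lemma Pk_mem (h2 : (2:F) = 0) {k : F} (hk : k ≠ 0) (z : F) : Pk k hk z ∈ Dk k := by
  rw [Pk, mem_Dk_pt]
  linear_combination (k^2*z^2 + k^2*z) * h2

lemma Pk_inj {k : F} (hk : k ≠ 0) {z z' : F} (h : Pk k hk z = Pk k hk z') : z = z' := by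
  rw [Pk, Pk, pt_eq_pt_iff] at h
  obtain ⟨c, hc, h1, h2, h3⟩ := h
  have hc1 : c = 1 := by
    rcases mul_eq_zero.mp (show k * (c - 1) = 0 by linear_combination -h1) with h | h
    · exact absurd h hk
    · exact sub_eq_zero.mp h
  rw [hc1, one_mul] at h3
  exact mul_left_cancel₀ hk h3

lemma Pk_ne_P0 {k : F} (hk : k ≠ 0) (z : F) : Pk k hk z ≠ P0 := by
  intro h
  rw [Pk, P0, pt_eq_pt_iff] at h
  obtain ⟨c, hc, h1, h2, h3⟩ := h
  exact hk (by simpa using h1)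

lemma Pk_ne_Nk {k : F} (hk : k ≠ 0) (z : F) (t : F) : Pk k hk z ≠ Nk t := by
  intro h
  rw [Pk, Nk, pt_eq_pt_iff] at h
  obtain ⟨c, hc, h1, h2, h3⟩ := h
  exact hk (by simpa using h1)

lemma Nk_not_mem (k : F) {t : F} (ht : t ≠ 0) : (Nk t : PG2 F) ∉ Dk k := by
  rw [Nk, mem_Dk_pt]
  intro h
  exact ht (pow_eq_zero_iff (n := 2) (by norm_num) |>.mp (by linear_combination h))

lemma Nk_inj {s t : F} (h : (Nk s : PG2 F) = Nk t) : s = t := by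
  rw [Nk, Nk, pt_eq_pt_iff] at h
  obtain ⟨c, hc, h1, h2, h3⟩ := h
  have hc1 : c = 1 := by simpa using h2.symm
  rw [h3, hc1, one_mul]

/-- Every point of `D_k` is `(0:1:0)` or `(k : z²+z : kz)` for some `z`. -/
lemma mem_Dk_cases (h2 : (2:F) = 0) {k : F} (hk : k ≠ 0) {P : PG2 F} (hP : P ∈ Dk k) :
    P = P0 ∨ ∃ z : F, P = Pk k hk z := by
  have hmem : k * P.rep 0 * P.rep 1 + P.rep 2 ^ 2 + P.rep 0 * P.rep 2 = 0 := hP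
  by_cases h0 : P.rep 0 = 0
  · left
    have h22 : P.rep 2 = 0 := by
      have : P.rep 2 ^ 2 = 0 := by rw [h0] at hmem; linear_combination hmem
      exact pow_eq_zero_iff (n := 2) (by norm_num) |>.mp this
    have h1 : P.rep 1 ≠ 0 := by
      intro h1
      exact rep_vec_ne P (by rw [h0, h1, h22]; funext i; fin_cases i <;> simp)
    have key : pt (P.rep 0) (P.rep 1) (P.rep 2) (rep_vec_ne P) = P0 := by
      rw [P0, pt_eq_pt_iff]
      exact ⟨P.rep 1, h1, by simp [h0], by ring, by simp [h22]⟩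
    exact (pt_eta P (rep_vec_ne P)).symm.trans key
  · right
    refine ⟨P.rep 2 / P.rep 0, ?_⟩
    have hkey : k * P.rep 0 * P.rep 1 = P.rep 2 ^ 2 + P.rep 0 * P.rep 2 := by
      linear_combination hmem - (P.rep 2 ^ 2 + P.rep 0 * P.rep 2) * h2
    have key : pt (P.rep 0) (P.rep 1) (P.rep 2) (rep_vec_ne P)
        = Pk k hk (P.rep 2 / P.rep 0) := by
      rw [Pk, pt_eq_pt_iff]
      refine ⟨P.rep 0 / k, div_ne_zero h0 hk, by field_simp, ?_, by field_simp⟩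
      field_simp
      linear_combination hkey
    exact (pt_eta P (rep_vec_ne P)).symm.trans key

/-- If `l` passes through the nucleus `N_k`, then `l` meets `D_k`. -/
lemma tangent_exists (h2 : (2:F) = 0) (hsq : ∀ c : F, ∃ z : F, z ^ 2 = c)
    {k : F} (hk : k ≠ 0) (l : PG2 F) (hN : inc l (Nk k)) :
    ∃ Q ∈ Dk k, inc l Q := by
  rw [Nk, inc_pt] at hN
  by_cases hL2 : l.rep 2 = 0
  · refine ⟨P0, P0_mem k, ?_⟩
    rw [P0, inc_pt]
    rw [hL2] at hN ⊢
    linear_combination hN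
  · obtain ⟨z, hz⟩ := hsq (l.rep 0 / l.rep 2)
    have hz' : l.rep 2 * z ^ 2 = l.rep 0 := by rw [hz]; field_simp
    refine ⟨Pk k hk z, Pk_mem h2 hk z, ?_⟩
    rw [Pk, inc_pt]
    linear_combination (z^2 + z) * hN - k * hz'

/-- If `l` meets `D_k` but not the nucleus, it meets `D_k` twice. -/
lemma secant_exists (h2 : (2:F) = 0) {k : F} (hk : k ≠ 0) (l P : PG2 F)
    (hP : P ∈ Dk k) (hinc : inc l P) (hN : ¬ inc l (Nk k)) :
    ∃ Q ∈ Dk k, Q ≠ P ∧ inc l Q := by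
  rw [Nk, inc_pt] at hN
  rcases mem_Dk_cases h2 hk hP with hP0 | ⟨z, hPz⟩
  · -- P = (0:1:0); incidence gives L1 = 0
    rw [hP0, P0, inc_pt] at hinc
    have hL1 : l.rep 1 = 0 := by linear_combination hinc
    have hL2 : l.rep 2 ≠ 0 := by
      intro h; apply hN; rw [hL1, h]; ring
    refine ⟨Pk k hk (l.rep 0 / l.rep 2), Pk_mem h2 hk _, ?_, ?_⟩
    · rw [hP0]; exact Pk_ne_P0 hk _
    · rw [Pk, inc_pt]
      have hdiv : l.rep 2 * (k * (l.rep 0 / l.rep 2)) = k * l.rep 0 := by field_simp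
      linear_combination hdiv + ((l.rep 0 / l.rep 2)^2 + l.rep 0 / l.rep 2) * hL1
        + k * l.rep 0 * h2
  · rw [hPz, Pk, inc_pt] at hinc
    by_cases hL1 : l.rep 1 = 0
    · refine ⟨P0, P0_mem k, ?_, ?_⟩
      · rw [hPz]; exact (Pk_ne_P0 hk z).symm
      · rw [P0, inc_pt, hL1]; ring
    · set s : F := (l.rep 1 + l.rep 2 * k) / l.rep 1 with hs_def
      have hs0 : s ≠ 0 := by
        apply div_ne_zero _ hL1
        intro h; apply hN; linear_combination h
      have hs : l.rep 1 * s = l.rep 1 + l.rep 2 * k := by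
        rw [hs_def]; field_simp
      refine ⟨Pk k hk (z + s), Pk_mem h2 hk _, ?_, ?_⟩
      · rw [hPz]
        intro h
        exact hs0 (by linear_combination Pk_inj hk h)
      · rw [Pk, inc_pt]
        linear_combination hinc + s * hs +
          ((l.rep 1 + l.rep 2 * k) * s + l.rep 1 * z * s) * h2


lemma second_point (h2 : (2:F) = 0) (hsq : ∀ c : F, ∃ z : F, z ^ 2 = c)
    {k : F} (hk : k ≠ 0) (l P : PG2 F) (hmem : P ∈ Dk k ∨ P = Nk k) (hinc : inc l P) :
    ∃ Q : PG2 F, (Q ∈ Dk k ∨ Q = Nk k) ∧ Q ≠ P ∧ inc l Q := by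
  rcases hmem with hPk | rfl
  · by_cases hN : inc l (Nk k)
    · refine ⟨Nk k, Or.inr rfl, ?_, hN⟩
      intro h
      exact Nk_not_mem k hk (h ▸ hPk)
    · obtain ⟨Q, hQ, hne, hQinc⟩ := secant_exists h2 hk l P hPk hinc hN
      exact ⟨Q, Or.inl hQ, hne, hQinc⟩
  · obtain ⟨Q, hQ, hQinc⟩ := tangent_exists h2 hsq hk l hinc
    refine ⟨Q, Or.inl hQ, ?_, hQinc⟩
    intro h
    exact Nk_not_mem k hk (h ▸ hQ)

lemma Dk_eq (h2 : (2:F) = 0) {k : F} (hk : k ≠ 0) :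
    Dk k = insert P0 (Set.range (Pk k hk)) := by
  ext P
  simp only [Set.mem_insert_iff, Set.mem_range]
  constructor
  · intro h
    rcases mem_Dk_cases h2 hk h with h | ⟨z, h⟩
    · exact Or.inl h
    · exact Or.inr ⟨z, h.symm⟩
  · rintro (rfl | ⟨z, rfl⟩)
    · exact P0_mem k
    · exact Pk_mem h2 hk z

lemma Pk_injective {k : F} (hk : k ≠ 0) : Function.Injective (Pk k hk) :=
  fun _ _ h => Pk_inj hk h

lemma ncard_Dk [Fintype F] (h2 : (2:F) = 0) {k : F} (hk : k ≠ 0) :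
    (Dk k).ncard = Fintype.card F + 1 := by
  rw [Dk_eq h2 hk]
  have hnotin : (P0 : PG2 F) ∉ Set.range (Pk k hk) := by
    rintro ⟨z, hz⟩
    exact Pk_ne_P0 hk z hz
  rw [Set.ncard_insert_of_notMem hnotin (Set.toFinite _), ← Nat.card_coe_set_eq,
    Nat.card_range_of_injective (Pk_injective hk), Nat.card_eq_fintype_card]

lemma diff_eq (h2 : (2:F) = 0) {a b : F} (ha : a ≠ 0) (hb : b ≠ 0) (hab : a ≠ b) :
    Dk b \ Dk a = (Pk b hb) '' {z : F | z ≠ 0 ∧ z ≠ 1} := by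
  have hab' : a + b ≠ 0 := by
    intro h
    exact hab (by linear_combination h - b * h2)
  ext P
  constructor
  · rintro ⟨hPb, hPa⟩
    rcases mem_Dk_cases h2 hb hPb with h | ⟨z, h⟩
    · exact absurd (h ▸ P0_mem a) hPa
    · refine ⟨z, ⟨?_, ?_⟩, h.symm⟩
      · intro hz0
        apply hPa
        rw [h, hz0, Pk, mem_Dk_pt]
        ring
      · intro hz1
        apply hPa
        rw [h, hz1, Pk, mem_Dk_pt]
        linear_combination (a*b + b^2) * h2
  · rintro ⟨z, ⟨hz0, hz1⟩, rfl⟩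
    refine ⟨Pk_mem h2 hb z, ?_⟩
    intro hmem
    rw [Pk, mem_Dk_pt] at hmem
    have hfac : b * (a + b) * (z * (z + 1)) = 0 := by linear_combination hmem
    rcases mul_eq_zero.mp hfac with h | h
    · rcases mul_eq_zero.mp h with h' | h'
      · exact hb h'
      · exact hab' h'
    · rcases mul_eq_zero.mp h with h' | h'
      · exact hz0 h'
      · exact hz1 (by linear_combination h' - h2)

end Helpers

open Helpers in
/-- In `PG(2,q)` with `q ≥ 8` even, for distinct nonzero `a, b`, the set
`S = D_a ∪ D_b ∪ {(0:1:a), (0:1:b)}` is an untouchable set of size `2q + 1`. -/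
theorem untouchable_two_q_plus_one_even {F : Type} [Field F] [Fintype F] {q : ℕ}
    (hq : Fintype.card F = q) (heven : Even q) (hq8 : 8 ≤ q)
    (a b : F) (ha : a ≠ 0) (hb : b ≠ 0) (hab : a ≠ b) :
    Untouchable (Dk a ∪ Dk b ∪ {pt (0 : F) 1 a (vec_ne_zero 1 (by simp)),
        pt (0 : F) 1 b (vec_ne_zero 1 (by simp))}) ∧
      (Dk a ∪ Dk b ∪ {pt (0 : F) 1 a (vec_ne_zero 1 (by simp)),
        pt (0 : F) 1 b (vec_ne_zero 1 (by simp))}).ncard = 2 * q + 1 := by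
  classical
  have h2 : (2:F) = 0 := by
    have hrc : ringChar F = 2 := FiniteField.even_card_iff_char_two.mpr
      (by rw [hq]; exact Nat.even_iff.mp heven)
    haveI : CharP F 2 := hrc ▸ ringChar.charP F
    exact_mod_cast CharP.cast_eq_zero F 2
  have hsq : ∀ c : F, ∃ z : F, z ^ 2 = c := by
    intro c
    have hinj : Function.Injective (fun x : F => x ^ 2) := by
      intro x y hxy
      simp only at hxy
      have h : (x - y) ^ 2 = 0 := by linear_combination hxy + (y ^ 2 - x * y) * h2
      exact sub_eq_zero.mp (pow_eq_zero_iff (n := 2) (by norm_num) |>.mp h)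
    exact Finite.injective_iff_surjective.mp hinj c
  have hSeq : (Dk a ∪ Dk b ∪ {pt (0 : F) 1 a (vec_ne_zero 1 (by simp)),
      pt (0 : F) 1 b (vec_ne_zero 1 (by simp))}) = Dk a ∪ Dk b ∪ {Nk a, Nk b} := rfl
  rw [hSeq]
  set S : Set (PG2 F) := Dk a ∪ Dk b ∪ {Nk a, Nk b} with hS
  constructor
  · -- untouchable
    intro l hcon
    rw [Set.ncard_eq_one] at hcon
    obtain ⟨P, hP⟩ := hcon
    have hPin : P ∈ {x ∈ S | inc l x} := by rw [hP]; exact rfl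
    obtain ⟨hPS, hPinc⟩ := hPin
    have hcases : (P ∈ Dk a ∨ P = Nk a) ∨ (P ∈ Dk b ∨ P = Nk b) := by
      rcases hPS with (h | h) | h
      · exact Or.inl (Or.inl h)
      · exact Or.inr (Or.inl h)
      · rcases h with h | h
        · exact Or.inl (Or.inr h)
        · exact Or.inr (Or.inr h)
    have hsub : ∀ Q : PG2 F, (Q ∈ Dk a ∨ Q = Nk a) ∨ (Q ∈ Dk b ∨ Q = Nk b) → Q ∈ S := by
      rintro Q (⟨h | h⟩ | ⟨h | h⟩)
      · exact Or.inl (Or.inl h)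
      · exact Or.inr (Or.inl h)
      · exact Or.inl (Or.inr h)
      · exact Or.inr (Or.inr (by rw [h]; exact rfl))
    obtain ⟨Q, hQmem, hQne, hQinc⟩ : ∃ Q : PG2 F,
        ((Q ∈ Dk a ∨ Q = Nk a) ∨ (Q ∈ Dk b ∨ Q = Nk b)) ∧ Q ≠ P ∧ inc l Q := by
      rcases hcases with h | h
      · obtain ⟨Q, hm, hne, hi⟩ := second_point h2 hsq ha l P h hPinc
        exact ⟨Q, Or.inl hm, hne, hi⟩
      · obtain ⟨Q, hm, hne, hi⟩ := second_point h2 hsq hb l P h hPinc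
        exact ⟨Q, Or.inr hm, hne, hi⟩
    have : Q ∈ {x ∈ S | inc l x} := ⟨hsub Q hQmem, hQinc⟩
    rw [hP] at this
    exact hQne this
  · -- cardinality
    have hstep : S = insert (Nk a) (insert (Nk b) (Dk a ∪ Dk b)) := by
      ext x
      simp only [hS, Set.mem_union, Set.mem_insert_iff, Set.mem_singleton_iff]
      tauto
    have hNaD : ∀ k : F, (Nk a : PG2 F) ∉ Dk k := fun k => Nk_not_mem k ha
    have hNbD : ∀ k : F, (Nk b : PG2 F) ∉ Dk k := fun k => Nk_not_mem k hb
    have hNab : (Nk a : PG2 F) ≠ Nk b := fun h => hab (Nk_inj h)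
    have hDab : (Dk a ∪ Dk b : Set (PG2 F)) = Dk a ∪ (Dk b \ Dk a) :=
      (Set.union_diff_self).symm
    have hDa : (Dk a).ncard = q + 1 := by rw [ncard_Dk h2 ha, hq]
    have hdiff : (Dk b \ Dk a).ncard = q - 2 := by
      rw [diff_eq h2 ha hb hab, Set.ncard_image_of_injective _ (Pk_injective hb)]
      have huniv : {z : F | z ≠ 0 ∧ z ≠ 1} = Set.univ \ {0, 1} := by
        ext x
        simp [and_comm]
      rw [huniv, Set.ncard_diff (Set.subset_univ _) (Set.toFinite _), Set.ncard_univ,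
        Nat.card_eq_fintype_card, hq, Set.ncard_pair (zero_ne_one (α := F))]
    have hUcard : (Dk a ∪ Dk b).ncard = (q + 1) + (q - 2) := by
      rw [hDab, Set.ncard_union_eq Set.disjoint_sdiff_right (Set.toFinite _) (Set.toFinite _),
        hDa, hdiff]
    have h1 : (Nk a : PG2 F) ∉ insert (Nk b) (Dk a ∪ Dk b) := by
      simp only [Set.mem_insert_iff, Set.mem_union]
      push_neg
      exact ⟨hNab, hNaD a, hNaD b⟩
    have h2' : (Nk b : PG2 F) ∉ (Dk a ∪ Dk b) := by
      simp only [Set.mem_union]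
      push_neg
      exact ⟨hNbD a, hNbD b⟩
    rw [hstep, Set.ncard_insert_of_notMem h1 (Set.toFinite _),
      Set.ncard_insert_of_notMem h2' (Set.toFinite _), hUcard]
    omega
end

section
/- In PG(2,q) with q odd, let C_a = V(xy + az²) and C_b = V(xy + bz²) with a, b nonzero and distinct. Then every point of C_b not on C_a is exterior to C_a if a(a − b) is a nonzero square in GF(q), and interior to C_a if a(a − b) is a non-square. -/
/-- The conic `C_k = V(xy + kz²)`. -/
def Ck {F : Type} [Field F] (k : F) : Set (PG2 F) :=
  {P | P.rep 0 * P.rep 1 + k * P.rep 2 ^ 2 = 0}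

/-- A point `P` not on the point set `S` is exterior to `S` if it lies on exactly two
tangent lines of `S`. -/
def ExteriorTo {F : Type} [Field F] (P : PG2 F) (S : Set (PG2 F)) : Prop :=
  P ∉ S ∧ {l : PG2 F | IsTangent l S ∧ inc l P}.ncard = 2

/-- A point `P` not on the point set `S` is interior to `S` if it lies on no tangent line
of `S`. -/
def InteriorTo {F : Type} [Field F] (P : PG2 F) (S : Set (PG2 F)) : Prop :=
  P ∉ S ∧ ∀ l : PG2 F, IsTangent l S → ¬ inc l P

section Helpers
variable {F : Type} [Field F]

lemma vec_eq_zero {x y z : F} (hx : x = 0) (hy : y = 0) (hz : z = 0) :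
    ![x, y, z] = (0 : Fin 3 → F) := by
  subst hx hy hz; funext i; fin_cases i <;> rfl

lemma rep_pt (x y z : F) (h : ![x,y,z] ≠ 0) :
    ∃ c : F, c ≠ 0 ∧ (pt x y z h).rep 0 = c * x ∧ (pt x y z h).rep 1 = c * y ∧
      (pt x y z h).rep 2 = c * z := by
  obtain ⟨u, hu⟩ := (Projectivization.mk_eq_mk_iff F _ _ (Projectivization.rep_nonzero _) h).1
    (Projectivization.mk_rep (Projectivization.mk F ![x,y,z] h))
  refine ⟨u, u.ne_zero, ?_, ?_, ?_⟩ <;>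
    · show (Projectivization.mk F ![x,y,z] h).rep _ = _
      rw [← hu]; simp [Units.smul_def]

lemma mem_Ck_pt (k x y z : F) (h : ![x,y,z] ≠ 0) :
    pt x y z h ∈ Ck k ↔ x * y + k * z ^ 2 = 0 := by
  obtain ⟨c, hc, h0, h1, h2⟩ := rep_pt x y z h
  have key : c*x*(c*y) + k*(c*z)^2 = c^2*(x*y + k*z^2) := by ring
  simp only [Ck, Set.mem_setOf_eq, h0, h1, h2, key]
  constructor
  · intro H
    rcases mul_eq_zero.mp H with h' | h'
    · exact absurd ((pow_eq_zero_iff (by norm_num)).mp h') hc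
    · exact h'
  · intro H; rw [H, mul_zero]

lemma inc_pt_pt (u v w x y z : F) (hl : ![u,v,w] ≠ 0) (hp : ![x,y,z] ≠ 0) :
    inc (pt u v w hl) (pt x y z hp) ↔ u*x + v*y + w*z = 0 := by
  obtain ⟨c, hc, h0, h1, h2⟩ := rep_pt u v w hl
  obtain ⟨d, hd, g0, g1, g2⟩ := rep_pt x y z hp
  have key : c*u*(d*x) + c*v*(d*y) + c*w*(d*z) = (c*d)*(u*x + v*y + w*z) := by ring
  simp only [inc, h0, h1, h2, g0, g1, g2, key]
  constructor
  · intro H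
    rcases mul_eq_zero.mp H with h' | h'
    · exact absurd h' (mul_ne_zero hc hd)
    · exact h'
  · intro H; rw [H, mul_zero]

lemma pt_eq_pt {x y z x' y' z' : F} {h : ![x,y,z] ≠ 0} {h' : ![x',y',z'] ≠ 0} :
    pt x y z h = pt x' y' z' h' ↔ ∃ c : F, c ≠ 0 ∧ x = c * x' ∧ y = c * y' ∧ z = c * z' := by
  rw [pt, pt, Projectivization.mk_eq_mk_iff]
  constructor
  · rintro ⟨u, hu⟩
    refine ⟨u, u.ne_zero, ?_, ?_, ?_⟩
    · simpa [Units.smul_def] using (congrFun hu 0).symm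
    · simpa [Units.smul_def] using (congrFun hu 1).symm
    · simpa [Units.smul_def] using (congrFun hu 2).symm
  · rintro ⟨c, hc, h1, h2, h3⟩
    refine ⟨Units.mk0 c hc, ?_⟩
    funext i; fin_cases i <;> simp [Units.smul_def, h1, h2, h3]

lemma exists_pt (P : PG2 F) : ∃ (x y z : F) (h : ![x,y,z] ≠ 0), P = pt x y z h := by
  have hv : ![P.rep 0, P.rep 1, P.rep 2] = P.rep := by
    funext i; fin_cases i <;> rfl
  refine ⟨P.rep 0, P.rep 1, P.rep 2, hv ▸ P.rep_nonzero, ?_⟩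
  conv_lhs => rw [← Projectivization.mk_rep P]
  rw [pt, Projectivization.mk_eq_mk_iff]
  exact ⟨1, by simp [hv]⟩

end Helpers

noncomputable def lX (F : Type) [Field F] : PG2 F := pt 1 0 0 (vec_ne_zero 0 one_ne_zero)
noncomputable def lY (F : Type) [Field F] : PG2 F := pt 0 1 0 (vec_ne_zero 1 one_ne_zero)
noncomputable def lT {F : Type} [Field F] (a t : F) (ha : a ≠ 0) : PG2 F :=
  pt (-a) (t^2) (2*a*t) (vec_ne_zero 0 (neg_ne_zero.2 ha))

section Geometry
variable {F : Type} [Field F] {a : F}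

lemma setT (ha : a ≠ 0) (t : F) :
    {P ∈ Ck a | inc (lT a t ha) P}
      = {pt (t^2) (-a) t (vec_ne_zero 1 (neg_ne_zero.2 ha))} := by
  ext P
  obtain ⟨x, y, z, h, rfl⟩ := exists_pt P
  simp only [Set.mem_setOf_eq, Set.mem_singleton_iff, mem_Ck_pt, lT, inc_pt_pt]
  constructor
  · rintro ⟨hc, hi⟩
    have key : (t*y + a*z)^2 = 0 := by linear_combination y*hi + a*hc
    have htz : t*y + a*z = 0 := (pow_eq_zero_iff (by norm_num)).mp key
    have hy : y ≠ 0 := by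
      intro hy
      have hz : z = 0 := by
        have haz : a * z = 0 := by linear_combination htz - t * hy
        exact (mul_eq_zero.mp haz).resolve_left ha
      have hx : x = 0 := by
        have hax : (-a) * x = 0 := by linear_combination hi - t^2 * hy - 2*a*t*hz
        exact (mul_eq_zero.mp hax).resolve_left (neg_ne_zero.2 ha)
      exact h (vec_eq_zero hx hy hz)
    refine pt_eq_pt.mpr ⟨-(y/a), neg_ne_zero.2 (div_ne_zero hy ha), ?_, ?_, ?_⟩
    · field_simp
      linear_combination -hi + 2*t*htz
    · field_simp
    · field_simp
      linear_combination htz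
  · intro he
    obtain ⟨c, hc, h1, h2, h3⟩ := pt_eq_pt.mp he
    subst h1; subst h2; subst h3
    constructor <;> ring

lemma tangent_lT (ha : a ≠ 0) (t : F) : IsTangent (lT a t ha) (Ck a) := by
  unfold IsTangent
  rw [setT ha t]
  exact Set.ncard_singleton _

lemma tangent_classify (ha : a ≠ 0) (h2 : (2:F) ≠ 0) (l : PG2 F) (hl : IsTangent l (Ck a)) :
    l = lX F ∨ l = lY F ∨ ∃ t : F, t ≠ 0 ∧ l = lT a t ha := by
  unfold IsTangent at hl
  obtain ⟨u, v, w, h, rfl⟩ := exists_pt l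
  by_cases hu : u = 0 <;> by_cases hv : v = 0
  · -- line z = 0 : secant, contradiction
    exfalso
    have m1 : lX F ∈ {P ∈ Ck a | inc (pt u v w h) P} := by
      refine ⟨?_, ?_⟩
      · rw [lX, mem_Ck_pt]; ring
      · rw [lX, inc_pt_pt, hu, hv]; ring
    have m2 : lY F ∈ {P ∈ Ck a | inc (pt u v w h) P} := by
      refine ⟨?_, ?_⟩
      · rw [lY, mem_Ck_pt]; ring
      · rw [lY, inc_pt_pt, hu, hv]; ring
    have hne : lX F ≠ lY F := by
      intro he
      obtain ⟨c, hc, e1, e2, e3⟩ := pt_eq_pt.mp he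
      rw [mul_zero] at e1
      exact one_ne_zero e1
    obtain ⟨x0, hx0⟩ := Set.ncard_eq_one.mp hl
    rw [hx0] at m1 m2
    exact hne (m1.trans m2.symm)
  · -- u = 0, v ≠ 0
    by_cases hw : w = 0
    · right; left
      exact pt_eq_pt.mpr ⟨v, hv, by rw [hu]; ring, by ring, by rw [hw]; ring⟩
    · exfalso
      set t : F := v*a/w with hts
      have m1 : lX F ∈ {P ∈ Ck a | inc (pt u v w h) P} := by
        refine ⟨?_, ?_⟩
        · rw [lX, mem_Ck_pt]; ring
        · rw [lX, inc_pt_pt, hu]; ring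
      have m2 : pt (t^2) (-a) t (vec_ne_zero 1 (neg_ne_zero.2 ha))
          ∈ {P ∈ Ck a | inc (pt u v w h) P} := by
        refine ⟨?_, ?_⟩
        · rw [mem_Ck_pt]; ring
        · rw [inc_pt_pt, hu, hts]; field_simp; ring
      have hne : lX F ≠ pt (t^2) (-a) t (vec_ne_zero 1 (neg_ne_zero.2 ha)) := by
        intro he
        obtain ⟨c, hc, e1, e2, e3⟩ := pt_eq_pt.mp he
        have : c = 0 := by
          rcases mul_eq_zero.mp e2.symm with h' | h'
          · exact h'
          · exact absurd h' (neg_ne_zero.2 ha)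
        rw [this, zero_mul] at e1
        exact one_ne_zero e1
      obtain ⟨x0, hx0⟩ := Set.ncard_eq_one.mp hl
      rw [hx0] at m1 m2
      exact hne (m1.trans m2.symm)
  · -- u ≠ 0, v = 0
    by_cases hw : w = 0
    · left
      exact pt_eq_pt.mpr ⟨u, hu, by ring, by rw [hv]; ring, by rw [hw]; ring⟩
    · exfalso
      set t : F := -(w/u) with hts
      have ht : t ≠ 0 := neg_ne_zero.2 (div_ne_zero hw hu)
      have m1 : lY F ∈ {P ∈ Ck a | inc (pt u v w h) P} := by
        refine ⟨?_, ?_⟩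
        · rw [lY, mem_Ck_pt]; ring
        · rw [lY, inc_pt_pt, hv]; ring
      have m2 : pt (t^2) (-a) t (vec_ne_zero 1 (neg_ne_zero.2 ha))
          ∈ {P ∈ Ck a | inc (pt u v w h) P} := by
        refine ⟨?_, ?_⟩
        · rw [mem_Ck_pt]; ring
        · rw [inc_pt_pt, hv, hts]; field_simp; ring
      have hne : lY F ≠ pt (t^2) (-a) t (vec_ne_zero 1 (neg_ne_zero.2 ha)) := by
        intro he
        obtain ⟨c, hc, e1, e2, e3⟩ := pt_eq_pt.mp he
        have hc0 : c ≠ 0 := hc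
        have : t = 0 := by
          rcases mul_eq_zero.mp e3.symm with h' | h'
          · exact absurd h' hc0
          · exact h'
        exact ht this
      obtain ⟨x0, hx0⟩ := Set.ncard_eq_one.mp hl
      rw [hx0] at m1 m2
      exact hne (m1.trans m2.symm)
  · -- u ≠ 0, v ≠ 0
    set e : F := w^2 + 4*u*v*a with hes
    have h4 : (4:F) ≠ 0 := by
      have : (4:F) = 2*2 := by norm_num
      rw [this]; exact mul_ne_zero h2 h2
    by_cases he : e = 0
    · right; right
      have hw : w ≠ 0 := by
        intro hw0
        have : (4:F) * (u*(v*a)) = 0 := by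
          rw [hes, hw0] at he; linear_combination he
        rcases mul_eq_zero.mp this with h' | h'
        · exact h4 h'
        · rcases mul_eq_zero.mp h' with h'' | h''
          · exact hu h''
          · rcases mul_eq_zero.mp h'' with h3 | h3
            · exact hv h3
            · exact ha h3
      refine ⟨-(w/(2*u)), neg_ne_zero.2 (div_ne_zero hw (mul_ne_zero h2 hu)), ?_⟩
      refine pt_eq_pt.mpr ⟨-(u/a), neg_ne_zero.2 (div_ne_zero hu ha), ?_, ?_, ?_⟩
      · field_simp
      · rw [hes] at he
        field_simp
        linear_combination he
      · field_simp
    · by_cases hsq : IsSquare e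
      · exfalso
        obtain ⟨r, hr⟩ := hsq
        have hrne : r ≠ 0 := by
          intro h0; apply he; rw [hr, h0, mul_zero]
        have hre : r * r = w^2 + 4*u*v*a := by rw [← hr, hes]
        set t1 : F := (-w+r)/(2*u) with ht1
        set t2 : F := (-w-r)/(2*u) with ht2
        have m1 : pt (t1^2) (-a) t1 (vec_ne_zero 1 (neg_ne_zero.2 ha))
            ∈ {P ∈ Ck a | inc (pt u v w h) P} := by
          refine ⟨?_, ?_⟩
          · rw [mem_Ck_pt]; ring
          · rw [inc_pt_pt, ht1]; field_simp
            linear_combination hre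
        have m2 : pt (t2^2) (-a) t2 (vec_ne_zero 1 (neg_ne_zero.2 ha))
            ∈ {P ∈ Ck a | inc (pt u v w h) P} := by
          refine ⟨?_, ?_⟩
          · rw [mem_Ck_pt]; ring
          · rw [inc_pt_pt, ht2]; field_simp
            linear_combination hre
        have hne : pt (t1^2) (-a) t1 (vec_ne_zero 1 (neg_ne_zero.2 ha))
            ≠ pt (t2^2) (-a) t2 (vec_ne_zero 1 (neg_ne_zero.2 ha)) := by
          intro heq
          obtain ⟨c, hc, e1, e2, e3⟩ := pt_eq_pt.mp heq
          have hc1 : c = 1 := by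
            have := mul_left_cancel₀ (neg_ne_zero.2 ha) (by linear_combination e2 : (-a) * 1 = (-a) * c)
            exact this.symm
          rw [hc1, one_mul, ht1, ht2] at e3
          have : r = -r := by
            have h2u : (2*u) ≠ 0 := mul_ne_zero h2 hu
            field_simp at e3
            linear_combination e3
          have : (2:F) * r = 0 := by linear_combination this
          rcases mul_eq_zero.mp this with h' | h'
          · exact h2 h'
          · exact hrne h'
        obtain ⟨x0, hx0⟩ := Set.ncard_eq_one.mp hl
        rw [hx0] at m1 m2
        exact hne (m1.trans m2.symm)
      · exfalso
        have hempty : {P ∈ Ck a | inc (pt u v w h) P} = ∅ := by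
          rw [Set.eq_empty_iff_forall_notMem]
          intro P hP
          obtain ⟨x, y, z, hxyz, rfl⟩ := exists_pt P
          rw [Set.mem_setOf_eq, mem_Ck_pt, inc_pt_pt] at hP
          obtain ⟨hcn, hin⟩ := hP
          apply hsq
          have hz : z ≠ 0 := by
            intro hz
            have hxy : x * y = 0 := by linear_combination hcn - a*z*hz
            rcases mul_eq_zero.mp hxy with hx | hy
            · have hy' : y = 0 := by
                have : v * y = 0 := by linear_combination hin - u*hx - w*hz
                exact (mul_eq_zero.mp this).resolve_left hv
              exact hxyz (vec_eq_zero hx hy' hz)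
            · have hx' : x = 0 := by
                have : u * x = 0 := by linear_combination hin - v*hy - w*hz
                exact (mul_eq_zero.mp this).resolve_left hu
              exact hxyz (vec_eq_zero hx' hy hz)
          refine ⟨(2*u*x + w*z)/z, ?_⟩
          rw [hes]
          field_simp
          linear_combination (-4)*u*x*hin + 4*u*v*hcn
        rw [hempty] at hl
        simp at hl

end Geometry


section PointForm
variable {F : Type} [Field F] {a : F}

lemma point_form {b : F} (hb : b ≠ 0) (P : PG2 F) (hPb : P ∈ Ck b) (hPa : P ∉ Ck a) :
    ∃ s : F, s ≠ 0 ∧ P = pt s (-(b/s)) 1 (vec_ne_zero 2 one_ne_zero) := by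
  obtain ⟨x, y, z, h, rfl⟩ := exists_pt P
  rw [mem_Ck_pt] at hPb hPa
  have hz : z ≠ 0 := by
    intro hz
    have hxy : x * y = 0 := by linear_combination hPb - b*z*hz
    exact hPa (by linear_combination hxy + a*z*hz)
  have hx : x ≠ 0 := by
    intro hx
    have : b * z^2 = 0 := by linear_combination hPb - y*hx
    rcases mul_eq_zero.mp this with h' | h'
    · exact hb h'
    · exact hz ((pow_eq_zero_iff (by norm_num)).mp h')
  refine ⟨x/z, div_ne_zero hx hz, ?_⟩
  refine pt_eq_pt.mpr ⟨z, hz, ?_, ?_, ?_⟩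
  · field_simp
  · field_simp
    linear_combination hPb
  · rw [mul_one]

end PointForm


/-- In `PG(2,q)` with `q` odd, every point of `C_b = V(xy + bz²)` not on `C_a = V(xy + az²)`
is exterior to `C_a` if `a(a − b)` is a nonzero square, and interior to `C_a` if `a(a − b)`
is a non-square. -/
theorem exterior_interior_criterion {F : Type} [Field F] [Fintype F]
    (hodd : Odd (Fintype.card F)) (a b : F) (ha : a ≠ 0) (hb : b ≠ 0) (hab : a ≠ b) :
    ∀ P : PG2 F, P ∈ Ck b → P ∉ Ck a →
      ((a * (a - b) ≠ 0 ∧ IsSquare (a * (a - b))) → ExteriorTo P (Ck a)) ∧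
      (¬ IsSquare (a * (a - b)) → InteriorTo P (Ck a)) := by
  have h2 : (2:F) ≠ 0 := by
    intro h
    have h2' : ((2:ℕ):F) = 0 := by exact_mod_cast h
    have hdvd : ringChar F ∣ 2 := (ringChar.spec F 2).mp h2'
    have hpos : ringChar F ≠ 0 := CharP.ringChar_ne_zero_of_finite F
    have hne1 : ringChar F ≠ 1 := CharP.ringChar_ne_one
    have hc : ringChar F = 2 := by
      rcases (Nat.dvd_prime Nat.prime_two).mp hdvd with h' | h' <;> simp_all
    have := FiniteField.even_card_iff_char_two.mp hc
    rw [Nat.odd_iff] at hodd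
    omega
  intro P hPb hPa
  obtain ⟨s, hs, rfl⟩ := point_form hb P hPb hPa
  constructor
  · rintro ⟨hne, r, hr⟩
    have hr' : r ≠ 0 := fun h0 => hne (by rw [hr, h0, mul_zero])
    set t1 : F := s*(a+r)/b with ht1
    set t2 : F := s*(a-r)/b with ht2
    have ht1n : t1 ≠ 0 := by
      rw [ht1]
      intro h0
      have hsr : s*(a+r) = 0 := by
        field_simp at h0
        linear_combination h0
      rcases mul_eq_zero.mp hsr with h' | h'
      · exact hs h'
      · have hab0 : a * b = 0 := by linear_combination (a - r)*h' - hr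
        rcases mul_eq_zero.mp hab0 with h'' | h''
        · exact ha h''
        · exact hb h''
    have ht2n : t2 ≠ 0 := by
      rw [ht2]
      intro h0
      have hsr : s*(a-r) = 0 := by
        field_simp at h0
        linear_combination h0
      rcases mul_eq_zero.mp hsr with h' | h'
      · exact hs h'
      · have hab0 : a * b = 0 := by linear_combination (a + r)*h' - hr
        rcases mul_eq_zero.mp hab0 with h'' | h''
        · exact ha h''
        · exact hb h''
    have hSet : {l : PG2 F | IsTangent l (Ck a) ∧ inc l (pt s (-(b/s)) 1 (vec_ne_zero 2 one_ne_zero))}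
        = {lT a t1 ha, lT a t2 ha} := by
      ext l
      simp only [Set.mem_setOf_eq, Set.mem_insert_iff, Set.mem_singleton_iff]
      constructor
      · rintro ⟨hT, hI⟩
        rcases tangent_classify ha h2 l hT with rfl | rfl | ⟨t, ht, rfl⟩
        · exfalso
          rw [lX, inc_pt_pt] at hI
          exact hs (by linear_combination hI)
        · exfalso
          rw [lY, inc_pt_pt] at hI
          have hd : b / s = 0 := by linear_combination -hI
          rcases div_eq_zero_iff.mp hd with h' | h'
          · exact hb h'
          · exact hs h'
        · rw [lT, inc_pt_pt] at hI
          have hQ : b*t^2 - 2*a*s*t + a*s^2 = 0 := by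
            field_simp at hI
            linear_combination -hI
          have hfac : (b*t - s*(a+r)) * (b*t - s*(a-r)) = 0 := by
            linear_combination b*hQ + s^2*hr
          rcases mul_eq_zero.mp hfac with h' | h'
          · left
            have htt : t = t1 := by
              rw [ht1]; field_simp; linear_combination h'
            rw [htt]
          · right
            have htt : t = t2 := by
              rw [ht2]; field_simp; linear_combination h'
            rw [htt]
      · rintro (rfl | rfl)
        · refine ⟨tangent_lT ha t1, ?_⟩
          rw [lT, inc_pt_pt, ht1]
          field_simp
          linear_combination s*hr
        · refine ⟨tangent_lT ha t2, ?_⟩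
          rw [lT, inc_pt_pt, ht2]
          field_simp
          linear_combination s*hr
    have hneq : lT a t1 ha ≠ lT a t2 ha := by
      intro heq
      rw [lT, lT] at heq
      obtain ⟨c, hc, e1, e2, e3⟩ := pt_eq_pt.mp heq
      have hc1 : c = 1 := by
        have := mul_left_cancel₀ (neg_ne_zero.2 ha) (by linear_combination e1 : (-a) * 1 = (-a) * c)
        exact this.symm
      rw [hc1, one_mul] at e3
      have htt : t1 = t2 := by
        have h2a : (2*a : F) ≠ 0 := mul_ne_zero h2 ha
        have : (2*a) * t1 = (2*a) * t2 := by linear_combination e3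
        exact mul_left_cancel₀ h2a this
      rw [ht1, ht2] at htt
      field_simp at htt
      rcases (show (2:F)*r = 0 ∨ s = 0 from Or.inl (by linear_combination htt)) with h' | h'
      · have h2r : (2:F) * r = 0 := by linear_combination h'
        rcases mul_eq_zero.mp h2r with h'' | h''
        · exact h2 h''
        · exact hr' h''
      · exact hs h'
    refine ⟨hPa, ?_⟩
    rw [hSet]
    exact Set.ncard_pair hneq
  · intro hns
    refine ⟨hPa, ?_⟩
    intro l hT hI
    rcases tangent_classify ha h2 l hT with rfl | rfl | ⟨t, ht, rfl⟩
    · rw [lX, inc_pt_pt] at hI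
      exact hs (by linear_combination hI)
    · rw [lY, inc_pt_pt] at hI
      have hd : b / s = 0 := by linear_combination -hI
      rcases div_eq_zero_iff.mp hd with h' | h'
      · exact hb h'
      · exact hs h'
    · rw [lT, inc_pt_pt] at hI
      have hQ : b*t^2 - 2*a*s*t + a*s^2 = 0 := by
        field_simp at hI
        linear_combination -hI
      apply hns
      refine ⟨(b*t - a*s)/s, ?_⟩
      field_simp
      linear_combination -b*hQ
end

section
/- In PG(2,q) with q ≥ 7 odd, there exist distinct nonzero a, b ∈ GF(q) such that the conics C_a = V(xy + az²) and C_b = V(xy + bz²) are mutually exterior, i.e., every point of C_a not on C_b is exterior to C_b and every point of C_b not on C_a is exterior to C_a. -/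
namespace Ext
open Projectivization

variable {F : Type} [Field F]

open Classical in
noncomputable def mkv (v : Fin 3 → F) : PG2 F :=
  if h : v ≠ 0 then Projectivization.mk F v h
  else Projectivization.mk F ![1,0,0] (vec_ne_zero 0 one_ne_zero)

lemma mkv_eq {v : Fin 3 → F} (h : v ≠ 0) : mkv v = Projectivization.mk F v h := by
  unfold mkv; rw [dif_pos h]

lemma mkv_rep (P : PG2 F) : mkv P.rep = P := by
  rw [mkv_eq P.rep_nonzero, mk_rep]

lemma rep_mkv {v : Fin 3 → F} (h : v ≠ 0) :
    ∃ c : F, c ≠ 0 ∧ ∀ i, (mkv v).rep i = c * v i := by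
  obtain ⟨a, ha⟩ := Projectivization.exists_smul_eq_mk_rep F v h
  refine ⟨a, a.ne_zero, fun i => ?_⟩
  rw [mkv_eq h, ← ha]
  rfl

lemma mkv_eq_mkv {v w : Fin 3 → F} (hv : v ≠ 0) (hw : w ≠ 0) :
    mkv v = mkv w ↔ ∃ c : F, c • w = v := by
  rw [mkv_eq hv, mkv_eq hw, mk_eq_mk_iff']

lemma mem_Ck_mkv {k : F} {v : Fin 3 → F} (hv : v ≠ 0) :
    mkv v ∈ Ck k ↔ v 0 * v 1 + k * v 2 ^ 2 = 0 := by
  obtain ⟨c, hc, h⟩ := rep_mkv (v := v) hv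
  have key : (mkv v).rep 0 * (mkv v).rep 1 + k * (mkv v).rep 2 ^ 2
      = c ^ 2 * (v 0 * v 1 + k * v 2 ^ 2) := by rw [h 0, h 1, h 2]; ring
  constructor
  · intro hm
    have h0 : c ^ 2 * (v 0 * v 1 + k * v 2 ^ 2) = 0 := by rw [← key]; exact hm
    rcases mul_eq_zero.1 h0 with h' | h'
    · exact absurd h' (pow_ne_zero 2 hc)
    · exact h'
  · intro hm
    show (mkv v).rep 0 * (mkv v).rep 1 + k * (mkv v).rep 2 ^ 2 = 0
    rw [key, hm, mul_zero]

lemma inc_right {p : Fin 3 → F} (hp : p ≠ 0) (l : PG2 F) :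
    inc l (mkv p) ↔ l.rep 0 * p 0 + l.rep 1 * p 1 + l.rep 2 * p 2 = 0 := by
  obtain ⟨c, hc, h⟩ := rep_mkv (v := p) hp
  have key : l.rep 0 * (mkv p).rep 0 + l.rep 1 * (mkv p).rep 1 + l.rep 2 * (mkv p).rep 2
      = c * (l.rep 0 * p 0 + l.rep 1 * p 1 + l.rep 2 * p 2) := by
    rw [h 0, h 1, h 2]; ring
  unfold inc
  rw [key]
  constructor
  · intro hm
    rcases mul_eq_zero.1 hm with h' | h'
    · exact absurd h' hc
    · exact h'
  · intro hm; rw [hm, mul_zero]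

lemma inc_mkv {l p : Fin 3 → F} (hl : l ≠ 0) (hp : p ≠ 0) :
    inc (mkv l) (mkv p) ↔ l 0 * p 0 + l 1 * p 1 + l 2 * p 2 = 0 := by
  obtain ⟨c, hc, h⟩ := rep_mkv (v := l) hl
  rw [inc_right hp, h 0, h 1, h 2]
  have key : c * l 0 * p 0 + c * l 1 * p 1 + c * l 2 * p 2
      = c * (l 0 * p 0 + l 1 * p 1 + l 2 * p 2) := by ring
  rw [key]
  constructor
  · intro hm
    rcases mul_eq_zero.1 hm with h' | h'
    · exact absurd h' hc
    · exact h'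
  · intro hm; rw [hm, mul_zero]


lemma vec3_eq_zero {v : Fin 3 → F} (h0 : v 0 = 0) (h1 : v 1 = 0) (h2 : v 2 = 0) : v = 0 :=
  funext fun i => by fin_cases i <;> assumption

lemma exists_mkv (P : PG2 F) : ∃ p, ∃ _ : p ≠ (0 : Fin 3 → F), P = mkv p :=
  ⟨P.rep, P.rep_nonzero, (mkv_rep P).symm⟩

noncomputable def e0 : PG2 F := mkv ![1,0,0]
noncomputable def e1 : PG2 F := mkv ![0,1,0]
noncomputable def Qp (k s : F) : PG2 F := mkv ![s^2, -k, s]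
noncomputable def Tg (k s : F) : PG2 F := mkv ![-k, s^2, 2*k*s]

lemma e0_nz : (![1,0,0] : Fin 3 → F) ≠ 0 := vec_ne_zero 0 (by norm_num)
lemma e1_nz : (![0,1,0] : Fin 3 → F) ≠ 0 := vec_ne_zero 1 (by norm_num)
lemma Qp_nz {k s : F} (hs : s ≠ 0) : (![s^2, -k, s] : Fin 3 → F) ≠ 0 :=
  vec_ne_zero 2 (by simpa using hs)
lemma Tg_nz {k s : F} (hk : k ≠ 0) : (![-k, s^2, 2*k*s] : Fin 3 → F) ≠ 0 :=
  vec_ne_zero 0 (by simpa using hk)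

lemma e0_ne_e1 : (e0 : PG2 F) ≠ e1 := by
  intro h
  rw [e0, e1, mkv_eq_mkv e0_nz e1_nz] at h
  obtain ⟨c, hc⟩ := h
  have := congrFun hc 0
  simp at this

lemma e0_ne_Qp {k s : F} (hs : s ≠ 0) : (e0 : PG2 F) ≠ Qp k s := by
  intro h
  rw [e0, Qp, mkv_eq_mkv e0_nz (Qp_nz hs)] at h
  obtain ⟨c, hc⟩ := h
  have h2 := congrFun hc 2
  have h0 := congrFun hc 0
  simp at h2 h0
  rcases h2 with h | h
  · rw [h] at h0; simp at h0
  · exact hs h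

lemma e1_ne_Qp {k s : F} (hs : s ≠ 0) : (e1 : PG2 F) ≠ Qp k s := by
  intro h
  rw [e1, Qp, mkv_eq_mkv e1_nz (Qp_nz hs)] at h
  obtain ⟨c, hc⟩ := h
  have h2 := congrFun hc 2
  have h1 := congrFun hc 1
  simp at h2 h1
  rcases h2 with h | h
  · rw [h] at h1; simp at h1
  · exact hs h

lemma Qp_inj {k s s' : F} (hk : k ≠ 0) (hs : s ≠ 0) (hs' : s' ≠ 0)
    (h : Qp k s = Qp k s') : s = s' := by
  rw [Qp, Qp, mkv_eq_mkv (Qp_nz hs) (Qp_nz hs')] at h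
  obtain ⟨c, hc⟩ := h
  have h1 := congrFun hc 1
  have h2 := congrFun hc 2
  simp at h1 h2
  have hc1 : c = 1 := mul_right_cancel₀ hk (by rw [h1, one_mul])
  rw [hc1, one_mul] at h2
  exact h2.symm

lemma Tg_ne_e0 {k s : F} (hk : k ≠ 0) (hs : s ≠ 0) : Tg k s ≠ (e0 : PG2 F) := by
  intro h
  rw [e0, Tg, mkv_eq_mkv (Tg_nz hk) e0_nz] at h
  obtain ⟨c, hc⟩ := h
  have h1 := congrFun hc 1
  simp at h1
  exact hs ((pow_eq_zero_iff (n := 2) (by norm_num)).1 h1.symm)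

lemma Tg_ne_e1 {k s : F} (hk : k ≠ 0) : Tg k s ≠ (e1 : PG2 F) := by
  intro h
  rw [e1, Tg, mkv_eq_mkv (Tg_nz hk) e1_nz] at h
  obtain ⟨c, hc⟩ := h
  have h0 := congrFun hc 0
  simp at h0
  exact hk h0

lemma Tg_inj {k s s' : F} (hk : k ≠ 0) (h2F : (2:F) ≠ 0)
    (h : Tg k s = Tg k s') : s = s' := by
  rw [Tg, Tg, mkv_eq_mkv (Tg_nz hk) (Tg_nz hk)] at h
  obtain ⟨c, hc⟩ := h
  have h0 := congrFun hc 0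
  have h2 := congrFun hc 2
  simp at h0 h2
  have hc1 : c = 1 := mul_right_cancel₀ hk (by rw [h0, one_mul])
  rw [hc1, one_mul] at h2
  have h2' : (2*k) * s' = (2*k) * s := by linear_combination h2
  exact (mul_left_cancel₀ (mul_ne_zero h2F hk) h2').symm

lemma e0_mem_Ck (k : F) : (e0 : PG2 F) ∈ Ck k := by
  rw [e0, mem_Ck_mkv e0_nz]; simp

lemma e1_mem_Ck (k : F) : (e1 : PG2 F) ∈ Ck k := by
  rw [e1, mem_Ck_mkv e1_nz]; simp

lemma Qp_mem_Ck {k s : F} (hs : s ≠ 0) : Qp k s ∈ Ck k := by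
  rw [Qp, mem_Ck_mkv (Qp_nz hs)]; simp; ring

lemma mem_Ck_iff {k : F} (hk : k ≠ 0) (P : PG2 F) :
    P ∈ Ck k ↔ P = e0 ∨ P = e1 ∨ ∃ s, s ≠ 0 ∧ P = Qp k s := by
  constructor
  · intro hm
    obtain ⟨p, hp, rfl⟩ := exists_mkv P
    have hm' : p 0 * p 1 + k * p 2 ^ 2 = 0 := (mem_Ck_mkv hp).1 hm
    by_cases h2 : p 2 = 0
    · have h01 : p 0 * p 1 = 0 := by rw [h2] at hm'; simpa using hm'
      rcases mul_eq_zero.1 h01 with h0 | h1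
      · have h1ne : p 1 ≠ 0 := fun h1 => hp (vec3_eq_zero h0 h1 h2)
        refine Or.inr (Or.inl ?_)
        rw [e1, mkv_eq_mkv hp e1_nz]
        exact ⟨p 1, funext fun i => by fin_cases i <;> simp [h0, h2]⟩
      · have h0ne : p 0 ≠ 0 := fun h0 => hp (vec3_eq_zero h0 h1 h2)
        refine Or.inl ?_
        rw [e0, mkv_eq_mkv hp e0_nz]
        exact ⟨p 0, funext fun i => by fin_cases i <;> simp [h1, h2]⟩
    · have h1ne : p 1 ≠ 0 := by
        intro h1
        rw [h1, mul_zero, zero_add] at hm'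
        rcases mul_eq_zero.1 hm' with h | h
        · exact hk h
        · exact h2 (pow_eq_zero_iff (n := 2) (by norm_num) |>.1 h)
      have hsne : -k * p 2 / p 1 ≠ 0 :=
        div_ne_zero (mul_ne_zero (neg_ne_zero.2 hk) h2) h1ne
      refine Or.inr (Or.inr ⟨-k * p 2 / p 1, hsne, ?_⟩)
      rw [Qp, mkv_eq_mkv hp (Qp_nz hsne)]
      refine ⟨-(p 1) / k, funext fun i => ?_⟩
      fin_cases i
      · show -(p 1) / k * (-k * p 2 / p 1)^2 = p 0
        field_simp
        linear_combination -hm'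
      · show -(p 1) / k * (-k) = p 1
        field_simp
      · show -(p 1) / k * (-k * p 2 / p 1) = p 2
        field_simp
  · rintro (rfl | rfl | ⟨s, hs, rfl⟩)
    · exact e0_mem_Ck k
    · exact e1_mem_Ck k
    · exact Qp_mem_Ck hs


lemma ncard_ne_one_of_pair {S : Set (PG2 F)} {P Q : PG2 F}
    (hP : P ∈ S) (hQ : Q ∈ S) (h : P ≠ Q) : S.ncard ≠ 1 := by
  by_cases hfin : S.Finite
  · have := (Set.one_lt_ncard hfin).2 ⟨P, hP, Q, hQ, h⟩
    omega
  · rw [Set.Infinite.ncard hfin]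
    omega

lemma four_ne_zero (h2F : (2:F) ≠ 0) : (4:F) ≠ 0 := by
  intro h
  apply h2F
  have : (2:F)*2 = 4 := by norm_num
  rcases mul_eq_zero.1 (this.trans h) with h' | h' <;> exact h'

lemma inter_line_e0 {k : F} (hk : k ≠ 0) : {P ∈ Ck k | inc e0 P} = {e1} := by
  ext P
  simp only [Set.mem_sep_iff, Set.mem_singleton_iff]
  constructor
  · rintro ⟨hm, hi⟩
    rcases (mem_Ck_iff hk P).1 hm with rfl | rfl | ⟨s, hs, rfl⟩
    · exfalso; rw [e0, inc_mkv e0_nz e0_nz] at hi; simp at hi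
    · rfl
    · exfalso
      rw [e0, Qp, inc_mkv e0_nz (Qp_nz hs)] at hi
      simp at hi
      exact hs hi
  · rintro rfl
    refine ⟨e1_mem_Ck k, ?_⟩
    rw [e0, e1, inc_mkv e0_nz e1_nz]; simp

lemma inter_line_e1 {k : F} (hk : k ≠ 0) : {P ∈ Ck k | inc e1 P} = {e0} := by
  ext P
  simp only [Set.mem_sep_iff, Set.mem_singleton_iff]
  constructor
  · rintro ⟨hm, hi⟩
    rcases (mem_Ck_iff hk P).1 hm with rfl | rfl | ⟨s, hs, rfl⟩
    · rfl
    · exfalso; rw [e1, inc_mkv e1_nz e1_nz] at hi; simp at hi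
    · exfalso
      rw [e1, Qp, inc_mkv e1_nz (Qp_nz hs)] at hi
      simp at hi
      exact hk hi
  · rintro rfl
    refine ⟨e0_mem_Ck k, ?_⟩
    rw [e1, e0, inc_mkv e1_nz e0_nz]; simp

lemma inter_line_Tg {k s : F} (hk : k ≠ 0) (hs : s ≠ 0) :
    {P ∈ Ck k | inc (Tg k s) P} = {Qp k s} := by
  ext P
  simp only [Set.mem_sep_iff, Set.mem_singleton_iff]
  constructor
  · rintro ⟨hm, hi⟩
    rcases (mem_Ck_iff hk P).1 hm with rfl | rfl | ⟨s', hs', rfl⟩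
    · exfalso
      rw [Tg, e0, inc_mkv (Tg_nz hk) e0_nz] at hi
      simp at hi
      exact hk hi
    · exfalso
      rw [Tg, e1, inc_mkv (Tg_nz hk) e1_nz] at hi
      simp at hi
      exact hs hi
    · rw [Tg, Qp, inc_mkv (Tg_nz hk) (Qp_nz hs')] at hi
      simp only [Matrix.cons_val_zero, Matrix.cons_val_one, Matrix.head_cons,
        Matrix.cons_val_two, Matrix.tail_cons] at hi
      have key : -k * (s' - s)^2 = 0 := by linear_combination hi
      have h2z : (s' - s)^2 = 0 := by
        rcases mul_eq_zero.1 key with h | h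
        · exact absurd h (neg_ne_zero.2 hk)
        · exact h
      have hss : s' = s := sub_eq_zero.1 ((pow_eq_zero_iff (n := 2) (by norm_num)).1 h2z)
      rw [hss]
  · rintro rfl
    refine ⟨Qp_mem_Ck hs, ?_⟩
    rw [Tg, Qp, inc_mkv (Tg_nz hk) (Qp_nz hs)]
    simp only [Matrix.cons_val_zero, Matrix.cons_val_one, Matrix.head_cons,
      Matrix.cons_val_two, Matrix.tail_cons]
    ring


lemma isTangent_iff {k : F} (hk : k ≠ 0) (h2F : (2:F) ≠ 0) (l : PG2 F) :
    IsTangent l (Ck k) ↔ l = e0 ∨ l = e1 ∨ ∃ s, s ≠ 0 ∧ l = Tg k s := by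
  constructor
  · intro ht
    by_contra hcon
    push_neg at hcon
    obtain ⟨hne0, hne1, hneT⟩ := hcon
    obtain ⟨lv, hl, rfl⟩ := exists_mkv l
    unfold IsTangent at ht
    by_cases hu : lv 0 = 0 <;> by_cases hv : lv 1 = 0
    · -- line z = 0, secant through e0 and e1
      have hw : lv 2 ≠ 0 := fun h => hl (vec3_eq_zero hu hv h)
      refine ncard_ne_one_of_pair (P := (e0 : PG2 F)) (Q := e1) ?_ ?_ e0_ne_e1 ht
      · refine Set.mem_sep (e0_mem_Ck k) ?_
        rw [e0, inc_mkv hl e0_nz]; simp [hu]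
      · refine Set.mem_sep (e1_mem_Ck k) ?_
        rw [e1, inc_mkv hl e1_nz]; simp [hv]
    · by_cases hw : lv 2 = 0
      · -- l = e1
        refine hne1 ?_
        rw [e1, mkv_eq_mkv hl e1_nz]
        exact ⟨lv 1, funext fun i => by fin_cases i <;> simp [hu, hw]⟩
      · -- secant through e0 and Qp k (lv 1 * k / lv 2)
        have hs : lv 1 * k / lv 2 ≠ 0 := div_ne_zero (mul_ne_zero hv hk) hw
        refine ncard_ne_one_of_pair (P := (e0 : PG2 F)) (Q := Qp k (lv 1 * k / lv 2)) ?_ ?_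
          (e0_ne_Qp hs) ht
        · refine Set.mem_sep (e0_mem_Ck k) ?_
          rw [e0, inc_mkv hl e0_nz]; simp [hu]
        · refine Set.mem_sep (Qp_mem_Ck hs) ?_
          rw [Qp, inc_mkv hl (Qp_nz hs)]
          simp only [Matrix.cons_val_zero, Matrix.cons_val_one, Matrix.head_cons,
            Matrix.cons_val_two, Matrix.tail_cons]
          rw [hu]
          field_simp
          ring
    · by_cases hw : lv 2 = 0
      · -- l = e0
        refine hne0 ?_
        rw [e0, mkv_eq_mkv hl e0_nz]
        exact ⟨lv 0, funext fun i => by fin_cases i <;> simp [hv, hw]⟩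
      · -- secant through e1 and Qp k (-(lv 2) / lv 0)
        have hs : -(lv 2) / lv 0 ≠ 0 := div_ne_zero (neg_ne_zero.2 hw) hu
        refine ncard_ne_one_of_pair (P := (e1 : PG2 F)) (Q := Qp k (-(lv 2) / lv 0)) ?_ ?_
          (e1_ne_Qp hs) ht
        · refine Set.mem_sep (e1_mem_Ck k) ?_
          rw [e1, inc_mkv hl e1_nz]; simp [hv]
        · refine Set.mem_sep (Qp_mem_Ck hs) ?_
          rw [Qp, inc_mkv hl (Qp_nz hs)]
          simp only [Matrix.cons_val_zero, Matrix.cons_val_one, Matrix.head_cons,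
            Matrix.cons_val_two, Matrix.tail_cons]
          rw [hv]
          field_simp
          ring
    · by_cases hd : ∃ d : F, d * d = lv 2 ^ 2 + 4 * lv 0 * lv 1 * k
      · obtain ⟨d, hd⟩ := hd
        by_cases hd0 : d = 0
        · -- l is the tangent Tg k (-(lv 2)/(2 * lv 0))
          rw [hd0, mul_zero] at hd
          have hw : lv 2 ≠ 0 := by
            intro h
            rw [h] at hd
            have h4 : 4 * lv 0 * lv 1 * k = 0 := by linear_combination -hd
            rcases mul_eq_zero.1 h4 with h' | h'
            · rcases mul_eq_zero.1 h' with h'' | h''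
              · rcases mul_eq_zero.1 h'' with h3 | h3
                · exact four_ne_zero h2F h3
                · exact hu h3
              · exact hv h''
            · exact hk h'
          have hs : -(lv 2) / (2 * lv 0) ≠ 0 :=
            div_ne_zero (neg_ne_zero.2 hw) (mul_ne_zero h2F hu)
          refine hneT (-(lv 2) / (2 * lv 0)) hs ?_
          rw [Tg, mkv_eq_mkv hl (Tg_nz hk)]
          refine ⟨-(lv 0) / k, funext fun i => ?_⟩
          fin_cases i
          · show -(lv 0) / k * (-k) = lv 0
            field_simp
          · show -(lv 0) / k * (-(lv 2) / (2 * lv 0))^2 = lv 1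
            field_simp
            linear_combination hd
          · show -(lv 0) / k * (2 * k * (-(lv 2) / (2 * lv 0))) = lv 2
            field_simp
        · -- two intersection points
          have h2u : (2 : F) * lv 0 ≠ 0 := mul_ne_zero h2F hu
          set s1 := (-(lv 2) + d) / (2 * lv 0) with hs1def
          set s2 := (-(lv 2) - d) / (2 * lv 0) with hs2def
          have hroot : ∀ s : F, lv 0 * s^2 + lv 2 * s - lv 1 * k
              = lv 0 * (s - s1) * (s - s2) := by
            intro s
            rw [hs1def, hs2def]
            field_simp
            ring_nf
            linear_combination hd
          have hs1 : s1 ≠ 0 := by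
            intro h
            rw [hs1def, div_eq_zero_iff] at h
            rcases h with h | h
            · have hdw : d = lv 2 := by linear_combination h
              rw [hdw] at hd
              have h4 : 4 * lv 0 * lv 1 * k = 0 := by linear_combination -hd
              rcases mul_eq_zero.1 h4 with h' | h'
              · rcases mul_eq_zero.1 h' with h'' | h''
                · rcases mul_eq_zero.1 h'' with h3 | h3
                  · exact four_ne_zero h2F h3
                  · exact hu h3
                · exact hv h''
              · exact hk h'
            · exact h2u h
          have hs2 : s2 ≠ 0 := by
            intro h
            rw [hs2def, div_eq_zero_iff] at h
            rcases h with h | h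
            · have hdw : d = -(lv 2) := by linear_combination -h
              rw [hdw] at hd
              have h4 : 4 * lv 0 * lv 1 * k = 0 := by linear_combination -hd
              rcases mul_eq_zero.1 h4 with h' | h'
              · rcases mul_eq_zero.1 h' with h'' | h''
                · rcases mul_eq_zero.1 h'' with h3 | h3
                  · exact four_ne_zero h2F h3
                  · exact hu h3
                · exact hv h''
              · exact hk h'
            · exact h2u h
          have hs12 : s1 ≠ s2 := by
            intro h
            rw [hs1def, hs2def, div_eq_div_iff h2u h2u] at h
            have h4d : d * (4 * lv 0) = 0 := by linear_combination h
            rcases mul_eq_zero.1 h4d with h' | h'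
            · exact hd0 h'
            · rcases mul_eq_zero.1 h' with h'' | h''
              · exact four_ne_zero h2F h''
              · exact hu h''
          refine ncard_ne_one_of_pair (P := Qp k s1) (Q := Qp k s2) ?_ ?_
            (fun h => hs12 (Qp_inj hk hs1 hs2 h)) ht
          · refine Set.mem_sep (Qp_mem_Ck hs1) ?_
            rw [Qp, inc_mkv hl (Qp_nz hs1)]
            simp only [Matrix.cons_val_zero, Matrix.cons_val_one, Matrix.head_cons,
              Matrix.cons_val_two, Matrix.tail_cons]
            have := hroot s1
            simp only [sub_self, mul_zero, zero_mul] at this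
            linear_combination this
          · refine Set.mem_sep (Qp_mem_Ck hs2) ?_
            rw [Qp, inc_mkv hl (Qp_nz hs2)]
            simp only [Matrix.cons_val_zero, Matrix.cons_val_one, Matrix.head_cons,
              Matrix.cons_val_two, Matrix.tail_cons]
            have := hroot s2
            simp only [sub_self, mul_zero] at this
            linear_combination this
      · -- empty intersection
        have hempty : {P ∈ Ck k | inc (mkv lv) P} = ∅ := by
          rw [Set.eq_empty_iff_forall_notMem]
          rintro P ⟨hm, hi⟩
          rcases (mem_Ck_iff hk P).1 hm with rfl | rfl | ⟨s, hs, rfl⟩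
          · rw [e0, inc_mkv hl e0_nz] at hi
            simp at hi
            exact hu hi
          · rw [e1, inc_mkv hl e1_nz] at hi
            simp at hi
            exact hv hi
          · rw [Qp, inc_mkv hl (Qp_nz hs)] at hi
            simp only [Matrix.cons_val_zero, Matrix.cons_val_one, Matrix.head_cons,
              Matrix.cons_val_two, Matrix.tail_cons] at hi
            exact hd ⟨2 * lv 0 * s + lv 2, by linear_combination (4 * lv 0) * hi⟩
        rw [hempty] at ht
        simp at ht
  · rintro (rfl | rfl | ⟨s, hs, rfl⟩)
    · unfold IsTangent
      rw [inter_line_e0 hk]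
      exact Set.ncard_singleton _
    · unfold IsTangent
      rw [inter_line_e1 hk]
      exact Set.ncard_singleton _
    · unfold IsTangent
      rw [inter_line_Tg hk hs]
      exact Set.ncard_singleton _


lemma exterior_of {k : F} (hk : k ≠ 0) (h2F : (2:F) ≠ 0) {P : PG2 F} (hP : P ∉ Ck k)
    {s1 s2 : F} (hs1 : s1 ≠ 0) (hs2 : s2 ≠ 0) (h12 : s1 ≠ s2)
    (h0 : ¬ inc e0 P) (h1 : ¬ inc e1 P)
    (hT : ∀ s, s ≠ 0 → (inc (Tg k s) P ↔ s = s1 ∨ s = s2)) :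
    ExteriorTo P (Ck k) := by
  refine ⟨hP, ?_⟩
  have hset : {l : PG2 F | IsTangent l (Ck k) ∧ inc l P} = {Tg k s1, Tg k s2} := by
    ext l
    simp only [Set.mem_setOf_eq, Set.mem_insert_iff, Set.mem_singleton_iff]
    constructor
    · rintro ⟨ht, hi⟩
      rcases (isTangent_iff hk h2F l).1 ht with rfl | rfl | ⟨s, hs, rfl⟩
      · exact absurd hi h0
      · exact absurd hi h1
      · rcases (hT s hs).1 hi with rfl | rfl
        · exact Or.inl rfl
        · exact Or.inr rfl
    · rintro (rfl | rfl)
      · exact ⟨(isTangent_iff hk h2F _).2 (Or.inr (Or.inr ⟨s1, hs1, rfl⟩)),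
          (hT s1 hs1).2 (Or.inl rfl)⟩
      · exact ⟨(isTangent_iff hk h2F _).2 (Or.inr (Or.inr ⟨s2, hs2, rfl⟩)),
          (hT s2 hs2).2 (Or.inr rfl)⟩
  rw [hset]
  exact Set.ncard_pair (fun h => h12 (Tg_inj hk h2F h))

lemma two_ne_zero_of_odd_card [Fintype F] (hodd : Odd (Fintype.card F)) : (2:F) ≠ 0 := by
  intro h2
  have hdvd : ringChar F ∣ 2 := by
    have := (ringChar.spec F 2)
    rw [← this]
    exact_mod_cast h2
  rcases (Nat.le_of_dvd (by norm_num) hdvd).lt_or_eq with h | h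
  · haveI := ringChar.charP F
    interval_cases h' : ringChar F
    · exact absurd (Nat.eq_zero_of_zero_dvd hdvd) (by norm_num)
    · haveI := ringChar.charP F
      exact CharP.char_ne_one F (ringChar F) h'
  · have : Fintype.card F % 2 = 0 := FiniteField.even_card_of_char_two h
    rw [Nat.odd_iff] at hodd
    omega

lemma exists_good [Fintype F] (hcard : 7 ≤ Fintype.card F) :
    ∃ u : F, u ≠ 0 ∧ u^2 ≠ 1 ∧ u^2 ≠ -1 := by
  have hne : (Polynomial.X^5 - Polynomial.X : Polynomial F) ≠ 0 := by
    intro h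
    have := congrArg (fun p => Polynomial.coeff p 5) h
    simp [Polynomial.coeff_sub, Polynomial.coeff_X_pow, Polynomial.coeff_X] at this
  have hdeg : (Polynomial.X^5 - Polynomial.X : Polynomial F).natDegree < Cardinal.mk F := by
    have h5 : (Polynomial.X^5 - Polynomial.X : Polynomial F).natDegree = 5 := by
      compute_degree!
    rw [h5, Cardinal.mk_fintype F]
    exact_mod_cast lt_of_lt_of_le (by norm_num) hcard
  obtain ⟨u, hu⟩ := (Polynomial.X^5 - Polynomial.X : Polynomial F).exists_eval_ne_zero_of_natDegree_lt_card hne hdeg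
  simp only [Polynomial.eval_sub, Polynomial.eval_pow, Polynomial.eval_X] at hu
  refine ⟨u, ?_, ?_, ?_⟩
  · rintro rfl; simp at hu
  · intro h; apply hu
    have : u^5 = u * (u^2)^2 := by ring
    rw [this, h]; ring
  · intro h; apply hu
    have : u^5 = u * (u^2)^2 := by ring
    rw [this, h]; ring

end Ext

/-- In `PG(2,q)` with `q ≥ 7` odd, there exist distinct nonzero `a, b` such that the conics
`C_a = V(xy + az²)` and `C_b = V(xy + bz²)` are mutually exterior. -/
theorem exists_mutually_exterior_conics {F : Type} [Field F] [Fintype F] {q : ℕ}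
    (hq : Fintype.card F = q) (hodd : Odd q) (h7 : 7 ≤ q) :
    ∃ a b : F, a ≠ 0 ∧ b ≠ 0 ∧ a ≠ b ∧
      (∀ P : PG2 F, P ∈ Ck a → P ∉ Ck b → ExteriorTo P (Ck b)) ∧
      (∀ P : PG2 F, P ∈ Ck b → P ∉ Ck a → ExteriorTo P (Ck a)) := by
  classical
  have hoddF : Odd (Fintype.card F) := by rw [hq]; exact hodd
  have h2F : (2:F) ≠ 0 := Ext.two_ne_zero_of_odd_card hoddF
  have hex : ∃ σ τ : F, σ^2 - τ^2 = 1 ∧ σ ≠ 0 ∧ τ ≠ 0 := by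
    obtain ⟨u, hu0, hu1, hui⟩ := Ext.exists_good (F := F) (by rw [hq]; exact h7)
    refine ⟨(u + u⁻¹)/2, (u - u⁻¹)/2, ?_, ?_, ?_⟩
    · field_simp
      ring
    · intro h
      apply hui
      have h' : u + u⁻¹ = 0 := by
        rcases div_eq_zero_iff.1 h with h' | h'
        · exact h'
        · exact absurd h' h2F
      field_simp at h'
      linear_combination h'
    · intro h
      apply hu1
      have h' : u - u⁻¹ = 0 := by
        rcases div_eq_zero_iff.1 h with h' | h'
        · exact h'
        · exact absurd h' h2F
      field_simp at h'
      linear_combination h'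
  obtain ⟨σ, τ, hστ, hσ, hτ⟩ := hex
  have hτ2 : τ^2 ≠ 0 := pow_ne_zero 2 hτ
  have hσsubτ : σ - τ ≠ 0 := by
    intro h
    exact one_ne_zero (α := F) (by linear_combination (σ + τ) * h - hστ)
  have hσaddτ : σ + τ ≠ 0 := by
    intro h
    exact one_ne_zero (α := F) (by linear_combination (σ - τ) * h - hστ)
  have hσ1 : σ - 1 ≠ 0 := by
    intro h
    apply hτ
    have hτ20 : τ^2 = 0 := by linear_combination (σ + 1) * h - hστ
    exact (pow_eq_zero_iff (n := 2) (by norm_num)).1 hτ20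
  have hσ1' : σ + 1 ≠ 0 := by
    intro h
    apply hτ
    have hτ20 : τ^2 = 0 := by linear_combination (σ - 1) * h - hστ
    exact (pow_eq_zero_iff (n := 2) (by norm_num)).1 hτ20
  have hb : -τ^2 ≠ 0 := neg_ne_zero.2 hτ2
  have hab : (1:F) ≠ -τ^2 := by
    intro h
    apply hσ
    have : σ^2 = 0 := by linear_combination hστ + h
    exact (pow_eq_zero_iff (n := 2) (by norm_num)).1 this
  refine ⟨1, -τ^2, one_ne_zero, hb, hab, ?_, ?_⟩
  · intro P hPa hPb
    rcases (Ext.mem_Ck_iff one_ne_zero P).1 hPa with rfl | rfl | ⟨t, ht, rfl⟩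
    · exact absurd (Ext.e0_mem_Ck _) hPb
    · exact absurd (Ext.e1_mem_Ck _) hPb
    · refine Ext.exterior_of hb h2F hPb
        (s1 := τ*t*(σ - τ)) (s2 := -(τ*t*(σ + τ))) ?_ ?_ ?_ ?_ ?_ ?_
      · exact mul_ne_zero (mul_ne_zero hτ ht) hσsubτ
      · exact neg_ne_zero.2 (mul_ne_zero (mul_ne_zero hτ ht) hσaddτ)
      · intro h
        have h' : 2*τ*t*σ = 0 := by linear_combination h
        rcases mul_eq_zero.1 h' with h'' | h''
        · rcases mul_eq_zero.1 h'' with h3 | h3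
          · rcases mul_eq_zero.1 h3 with h4 | h4
            · exact h2F h4
            · exact hτ h4
          · exact ht h3
        · exact hσ h''
      · intro hi
        rw [Ext.e0, Ext.Qp, Ext.inc_mkv Ext.e0_nz (Ext.Qp_nz ht)] at hi
        simp at hi
        exact ht hi
      · intro hi
        rw [Ext.e1, Ext.Qp, Ext.inc_mkv Ext.e1_nz (Ext.Qp_nz ht)] at hi
        simp at hi
      · intro s hs
        rw [Ext.Tg, Ext.Qp, Ext.inc_mkv (Ext.Tg_nz hb) (Ext.Qp_nz ht)]
        simp only [Matrix.cons_val_zero, Matrix.cons_val_one, Matrix.head_cons,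
          Matrix.cons_val_two, Matrix.tail_cons]
        constructor
        · intro hi
          have hprod : (s - τ*t*(σ - τ)) * (s - -(τ*t*(σ + τ))) = 0 := by
            linear_combination -hi - (τ^2*t^2) * hστ
          rcases mul_eq_zero.1 hprod with h' | h'
          · exact Or.inl (by linear_combination h')
          · exact Or.inr (by linear_combination h')
        · rintro (rfl | rfl)
          · linear_combination (-(τ^2*t^2)) * hστ
          · linear_combination (-(τ^2*t^2)) * hστ
  · intro P hPb hPa
    rcases (Ext.mem_Ck_iff hb P).1 hPb with rfl | rfl | ⟨t, ht, rfl⟩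
    · exact absurd (Ext.e0_mem_Ck _) hPa
    · exact absurd (Ext.e1_mem_Ck _) hPa
    · refine Ext.exterior_of one_ne_zero h2F hPa
        (s1 := t*(σ - 1)/τ^2) (s2 := -(t*(σ + 1))/τ^2) ?_ ?_ ?_ ?_ ?_ ?_
      · exact div_ne_zero (mul_ne_zero ht hσ1) hτ2
      · exact div_ne_zero (neg_ne_zero.2 (mul_ne_zero ht hσ1')) hτ2
      · intro h
        rw [div_eq_div_iff hτ2 hτ2] at h
        have h' : 2*t*σ*τ^2 = 0 := by linear_combination h
        rcases mul_eq_zero.1 h' with h'' | h''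
        · rcases mul_eq_zero.1 h'' with h3 | h3
          · rcases mul_eq_zero.1 h3 with h4 | h4
            · exact h2F h4
            · exact ht h4
          · exact hσ h3
        · exact hτ2 h''
      · intro hi
        rw [Ext.e0, Ext.Qp, Ext.inc_mkv Ext.e0_nz (Ext.Qp_nz ht)] at hi
        simp at hi
        exact ht hi
      · intro hi
        rw [Ext.e1, Ext.Qp, Ext.inc_mkv Ext.e1_nz (Ext.Qp_nz ht)] at hi
        simp at hi
        exact hτ hi
      · intro s hs
        rw [Ext.Tg, Ext.Qp, Ext.inc_mkv (Ext.Tg_nz one_ne_zero) (Ext.Qp_nz ht)]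
        simp only [Matrix.cons_val_zero, Matrix.cons_val_one, Matrix.head_cons,
          Matrix.cons_val_two, Matrix.tail_cons]
        constructor
        · intro hi
          have hprod : (s - t*(σ - 1)/τ^2) * (s - -(t*(σ + 1))/τ^2) = 0 := by
            field_simp
            linear_combination (τ^2) * hi - (t^2) * hστ
          rcases mul_eq_zero.1 hprod with h' | h'
          · exact Or.inl (by linear_combination h')
          · exact Or.inr (by linear_combination h')
        · rintro (rfl | rfl)
          · field_simp
            linear_combination t^2 * hστ
          · field_simp
            linear_combination t^2 * hστ
end

section
/- In PG(2,q) with q ≡ 3 (mod 4), q ≥ 7, let b ∈ GF(q) be a non-square such that b − 1 is also a non-square. Then every line through the point (0:0:1) meets C_1 ∪ C_b in at least one point, where C_k = V(xy + kz²). -/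
lemma rep_mk_eq {F : Type} [Field F] (v : Fin 3 → F) (h : v ≠ 0) :
    ∃ a : Fˣ, (Projectivization.mk F v h).rep = a • v := by
  have := (Projectivization.mk F v h).mk_rep
  rw [Projectivization.mk_eq_mk_iff] at this
  obtain ⟨a, ha⟩ := this
  exact ⟨a, ha.symm⟩

lemma nonsquare_div_nonsquare {F : Type} [Field F] [Fintype F] {s b : F}
    (hs : ¬ IsSquare s) (hb : ¬ IsSquare b) : ∃ z : F, b * z ^ 2 = s := by
  classical
  have hs0 : s ≠ 0 := fun h => hs (h ▸ IsSquare.zero)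
  have hb0 : b ≠ 0 := fun h => hb (h ▸ IsSquare.zero)
  have h1 : quadraticChar F s = -1 := quadraticChar_neg_one_iff_not_isSquare.mpr hs
  have h2 : quadraticChar F b = -1 := quadraticChar_neg_one_iff_not_isSquare.mpr hb
  have hsb : IsSquare (s * b) := by
    have h3 : quadraticChar F (s * b) = 1 := by rw [map_mul, h1, h2]; ring
    exact (quadraticChar_one_iff_isSquare (mul_ne_zero hs0 hb0)).mp h3
  obtain ⟨w, hw⟩ := hsb
  refine ⟨w / b, ?_⟩
  field_simp
  linear_combination -hw

/-- In `PG(2,q)` with `q ≡ 3 (mod 4)`, `q ≥ 7`, if `b` and `b − 1` are non-squares, then every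
line through the point `(0:0:1)` meets `C_1 ∪ C_b` in at least one point. -/
theorem lines_through_center_meet {F : Type} [Field F] [Fintype F] {q : ℕ}
    (hq : Fintype.card F = q) (h3 : q % 4 = 3) (h7 : 7 ≤ q)
    (b : F) (hb : ¬ IsSquare b) (hb1 : ¬ IsSquare (b - 1)) :
    ∀ l : PG2 F, inc l (pt (0 : F) 0 1 (vec_ne_zero 2 (by simp))) →
      ∃ P ∈ Ck 1 ∪ Ck b, inc l P := by
  classical
  intro l hl
  set u := l.rep with hu
  -- from incidence with (0:0:1): u 2 = 0
  obtain ⟨a, ha⟩ := rep_mk_eq (F := F) ![0,0,1] (vec_ne_zero 2 (by simp))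
  have hu2 : u 2 = 0 := by
    have h0 := hl
    unfold inc at h0
    rw [show pt (0:F) 0 1 (vec_ne_zero 2 (by simp)) = Projectivization.mk F ![0,0,1]
      (vec_ne_zero 2 (by simp)) from rfl, ha] at h0
    simp only [Pi.smul_apply, Matrix.cons_val_zero, Matrix.cons_val_one, Matrix.head_cons,
      Matrix.cons_val_two, Matrix.tail_cons, Units.smul_def, smul_eq_mul, mul_zero, mul_one] at h0
    have h2 : u 2 * (a : F) = 0 := by linear_combination h0
    rcases mul_eq_zero.mp h2 with h | h
    · exact h
    · exact absurd h a.ne_zero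
  have hune : u ≠ 0 := l.rep_nonzero
  have h01 : u 0 ≠ 0 ∨ u 1 ≠ 0 := by
    by_contra hc
    push_neg at hc
    apply hune
    funext i
    fin_cases i <;> simp [hc.1, hc.2, hu2]
  have key : ∀ (k z : F), (k = 1 ∨ k = b) → u 1 * (-(u 0)) + k * z ^ 2 = 0 →
      ∀ hne : ![u 1, -(u 0), z] ≠ 0, ∃ P ∈ Ck 1 ∪ Ck b, inc l P := by
    intro k z hk hz hne
    obtain ⟨c, hc⟩ := rep_mk_eq (F := F) ![u 1, -(u 0), z] hne
    refine ⟨pt (u 1) (-(u 0)) z hne, ?_, ?_⟩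
    · have hmem : pt (u 1) (-(u 0)) z hne ∈ Ck k := by
        simp only [Ck, Set.mem_setOf_eq, pt, hc, Pi.smul_apply, Matrix.cons_val_zero,
          Matrix.cons_val_one, Matrix.head_cons, Matrix.cons_val_two, Matrix.tail_cons,
          Units.smul_def, smul_eq_mul]
        linear_combination ((c : F)) ^ 2 * hz
      rcases hk with rfl | rfl
      · exact Or.inl hmem
      · exact Or.inr hmem
    · unfold inc
      rw [show pt (u 1) (-(u 0)) z hne = Projectivization.mk F ![u 1, -(u 0), z] hne from rfl, hc]
      simp only [Pi.smul_apply, Matrix.cons_val_zero, Matrix.cons_val_one, Matrix.head_cons,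
        Matrix.cons_val_two, Matrix.tail_cons, Units.smul_def, smul_eq_mul]
      linear_combination ((c : F) * z) * hu2
  have hne : ∀ z : F, ![u 1, -(u 0), z] ≠ 0 := by
    intro z
    rcases h01 with h | h
    · exact vec_ne_zero 1 (by simpa using h)
    · exact vec_ne_zero 0 (by simpa using h)
  by_cases hsq : IsSquare (u 0 * u 1)
  · obtain ⟨w, hw⟩ := hsq
    exact key 1 w (Or.inl rfl) (by linear_combination -hw) (hne w)
  · obtain ⟨z, hz⟩ := nonsquare_div_nonsquare hsq hb
    exact key b z (Or.inr rfl) (by linear_combination hz) (hne z)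
end
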